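/- arXiv:1711.04349 — 7 statements merged into one kernel-verified Lean document; each statement's English description precedes it below -/
import Mathlib

section
/- Assume N ≥ 4 and 2 ≤ n₁ ≤ N−2. For all real numbers a, b > 0 with a + b = 1, the variance of a·R_{1,(a)} + b·R_{2,(a)} under the permutation null distribution satisfies Var(a·R_{1,(a)} + b·R_{2,(a)}) ≥ Var(R_{w,(a)}), where R_{w,(a)} = (1−p̂)·R_{1,(a)} + p̂·R_{2,(a)} with p̂ = (n₁−1)/(N−2). (Extended weighted edge-count statistic minimizes the variance among all convex combinations of the two within-sample averaging edge-counts.) -/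
open Finset MeasureTheory
open scoped BigOperators Classical

noncomputable section

/-- indicator of membership -/
def Xi {N : ℕ} (i : Fin N) (S : Finset (Fin N)) : ℝ := if i ∈ S then 1 else 0

/-- pair weight coming from the averaging statistics -/
def gw {K N : ℕ} (m : Fin K → ℕ) (v : Fin N → Fin K) (C₀ : SimpleGraph (Fin K))
    (p : Fin N × Fin N) : ℝ :=
  (if v p.1 = v p.2 then ((m (v p.1) : ℝ))⁻¹ else 0)
    + (if C₀.Adj (v p.1) (v p.2) then ((2:ℝ) * (m (v p.1) : ℝ) * (m (v p.2) : ℝ))⁻¹ else 0)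

/-- the quadratic kernel whose covariance with every linear statistic vanishes -/
def hpair (n₁ : ℕ) {N : ℕ} (p : Fin N × Fin N) (S : Finset (Fin N)) : ℝ :=
  ((N:ℝ) - (n₁:ℝ) - 1) * (Xi p.1 S * Xi p.2 S)
    + ((n₁:ℝ) - 1) * ((1 - Xi p.1 S) * (1 - Xi p.2 S))

/-- linear kernel of the difference statistic -/
def lpair {N : ℕ} (q : Fin N × Fin N) (S : Finset (Fin N)) : ℝ :=
  Xi q.1 S + Xi q.2 S - 1

lemma choose_id (M k : ℕ) (hM : 1 ≤ M) (hk : 1 ≤ k) :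
    M * (M-1).choose (k-1) = k * M.choose k := by
  obtain ⟨M', rfl⟩ : ∃ M', M = M' + 1 := ⟨M - 1, by omega⟩
  obtain ⟨k', rfl⟩ : ∃ k', k = k' + 1 := ⟨k - 1, by omega⟩
  simpa [Nat.succ_sub_one, mul_comm] using Nat.add_one_mul_choose_eq M' k'

lemma cast_sub_one (k : ℕ) (hk : 1 ≤ k) : (((k-1:ℕ)):ℝ) = (k:ℝ) - 1 := by
  push_cast [Nat.cast_sub hk]; ring

lemma count_subsets {N : ℕ} (n₁ : ℕ) (T : Finset (Fin N)) (ht : T.card ≤ n₁) :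
    ((Finset.powersetCard n₁ (univ : Finset (Fin N))).filter (fun S => T ⊆ S)).card
      = (N - T.card).choose (n₁ - T.card) := by
  have : ((Finset.powersetCard n₁ (univ : Finset (Fin N))).filter (fun S => T ⊆ S)).card
      = (Finset.powersetCard (n₁ - T.card) Tᶜ).card := by
    apply Finset.card_bij' (fun S _ => S \ T) (fun A _ => A ∪ T)
    · intro S hS
      simp only [mem_filter, Finset.mem_powersetCard] at hS
      obtain ⟨⟨-, hcard⟩, hTS⟩ := hS
      rw [Finset.mem_powersetCard]
      constructor
      · intro x hx
        simp only [Finset.mem_sdiff] at hx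
        simp [Finset.mem_compl, hx.2]
      · rw [Finset.card_sdiff_of_subset hTS, hcard]
    · intro A hA
      rw [Finset.mem_powersetCard] at hA
      obtain ⟨hAT, hcard⟩ := hA
      have hdisj : Disjoint A T := by
        rw [Finset.disjoint_right]
        intro x hxT hxA
        have := hAT hxA
        simp [Finset.mem_compl] at this
        exact this hxT
      simp only [mem_filter, Finset.mem_powersetCard]
      refine ⟨⟨Finset.subset_univ _, ?_⟩, Finset.subset_union_right⟩
      rw [Finset.card_union_of_disjoint hdisj, hcard]
      omega
    · intro S hS
      simp only [mem_filter] at hS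
      exact Finset.sdiff_union_of_subset hS.2
    · intro A hA
      rw [Finset.mem_powersetCard] at hA
      apply Finset.union_sdiff_cancel_right
      rw [Finset.disjoint_right]
      intro x hxT hxA
      have := hA.1 hxA
      simp [Finset.mem_compl] at this
      exact this hxT
  rw [this, Finset.card_powersetCard, Finset.card_compl, Fintype.card_fin]

section
variable {N : ℕ}

lemma momX (n₁ : ℕ) (hN : 4 ≤ N) (hn₁ : 2 ≤ n₁) (i : Fin N) :
    ∑ S ∈ Finset.powersetCard n₁ (univ : Finset (Fin N)), Xi i S
      = (N.choose n₁ : ℝ) * (n₁ : ℝ) / (N : ℝ) := by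
  simp only [Xi]
  rw [Finset.sum_boole]
  have h1 : (Finset.powersetCard n₁ (univ : Finset (Fin N))).filter (fun S => i ∈ S)
      = (Finset.powersetCard n₁ (univ : Finset (Fin N))).filter (fun S => {i} ⊆ S) := by
    apply Finset.filter_congr; intro S _; simp
  rw [h1, count_subsets n₁ {i} (by simpa using by omega)]
  have hc : ((N:ℝ)) * ((N-1).choose (n₁-1) : ℝ) = (n₁:ℝ) * (N.choose n₁ : ℝ) := by
    exact_mod_cast congrArg (Nat.cast : ℕ → ℝ) (choose_id N n₁ (by omega) (by omega))
  have hNne : (N:ℝ) ≠ 0 := by positivity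
  simp only [Finset.card_singleton]
  field_simp
  linarith [hc]

lemma momXX (n₁ : ℕ) (hN : 4 ≤ N) (hn₁ : 2 ≤ n₁) (i j : Fin N) (hij : i ≠ j) :
    ∑ S ∈ Finset.powersetCard n₁ (univ : Finset (Fin N)), Xi i S * Xi j S
      = (N.choose n₁ : ℝ) * ((n₁ : ℝ) * ((n₁:ℝ)-1)) / ((N : ℝ) * ((N:ℝ)-1)) := by
  simp only [Xi]
  have h0 : ∀ S : Finset (Fin N), (if i ∈ S then (1:ℝ) else 0) * (if j ∈ S then (1:ℝ) else 0)
      = if ({i,j} : Finset (Fin N)) ⊆ S then (1:ℝ) else 0 := by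
    intro S
    by_cases hi : i ∈ S <;> by_cases hj : j ∈ S <;>
      simp [hi, hj, Finset.insert_subset_iff]
  simp only [h0]
  have hcard : ({i,j} : Finset (Fin N)).card = 2 := by
    rw [Finset.card_insert_of_notMem (by simp [hij]), Finset.card_singleton]
  rw [Finset.sum_boole, count_subsets n₁ {i,j} (by omega), hcard]
  have hc1 : ((N:ℝ)) * ((N-1).choose (n₁-1) : ℝ) = (n₁:ℝ) * (N.choose n₁ : ℝ) := by
    exact_mod_cast congrArg (Nat.cast : ℕ → ℝ) (choose_id N n₁ (by omega) (by omega))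
  have hid2 := choose_id (N-1) (n₁-1) (by omega) (by omega)
  rw [show N - 1 - 1 = N - 2 by omega, show n₁ - 1 - 1 = n₁ - 2 by omega] at hid2
  have hc2 : (((N-1:ℕ)):ℝ) * ((N-2).choose (n₁-2) : ℝ)
      = (((n₁-1:ℕ)):ℝ) * ((N-1).choose (n₁-1) : ℝ) := by
    exact_mod_cast congrArg (Nat.cast : ℕ → ℝ) hid2
  rw [cast_sub_one N (by omega), cast_sub_one n₁ (by omega)] at hc2
  have hNne : (N:ℝ) ≠ 0 := by positivity
  have hN4 : (4:ℝ) ≤ (N:ℝ) := by exact_mod_cast hN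
  have hN1ne : (N:ℝ) - 1 ≠ 0 := by linarith
  field_simp
  nlinarith [hc1, hc2]

lemma momXXX (n₁ : ℕ) (hN : 4 ≤ N) (hn₁ : 2 ≤ n₁) (hn₁' : n₁ ≤ N - 2)
    (i j k : Fin N) (hij : i ≠ j) (hik : i ≠ k) (hjk : j ≠ k) :
    ∑ S ∈ Finset.powersetCard n₁ (univ : Finset (Fin N)), Xi i S * Xi j S * Xi k S
      = (N.choose n₁ : ℝ) * ((n₁ : ℝ) * ((n₁:ℝ)-1) * ((n₁:ℝ)-2))
          / ((N : ℝ) * ((N:ℝ)-1) * ((N:ℝ)-2)) := by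
  simp only [Xi]
  have h0 : ∀ S : Finset (Fin N),
      (if i ∈ S then (1:ℝ) else 0) * (if j ∈ S then (1:ℝ) else 0) * (if k ∈ S then (1:ℝ) else 0)
      = if ({i,j,k} : Finset (Fin N)) ⊆ S then (1:ℝ) else 0 := by
    intro S
    by_cases hi : i ∈ S <;> by_cases hj : j ∈ S <;> by_cases hk : k ∈ S <;>
      simp [hi, hj, hk, Finset.insert_subset_iff]
  simp only [h0]
  have hcard : ({i,j,k} : Finset (Fin N)).card = 3 := by
    rw [Finset.card_insert_of_notMem (by simp [hij, hik]),
      Finset.card_insert_of_notMem (by simp [hjk]), Finset.card_singleton]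
  rcases Nat.lt_or_ge n₁ 3 with h3 | h3
  · have hn2 : n₁ = 2 := by omega
    have hfilter : (Finset.powersetCard n₁ (univ : Finset (Fin N))).filter
        (fun S => ({i,j,k} : Finset (Fin N)) ⊆ S) = ∅ := by
      apply Finset.filter_false_of_mem
      intro S hS hsub
      rw [Finset.mem_powersetCard] at hS
      have := Finset.card_le_card hsub
      rw [hcard, hS.2] at this
      omega
    rw [Finset.sum_boole, hfilter]
    simp [hn2]
  · rw [Finset.sum_boole, count_subsets n₁ {i,j,k} (by omega), hcard]
    have hc1 : ((N:ℝ)) * ((N-1).choose (n₁-1) : ℝ) = (n₁:ℝ) * (N.choose n₁ : ℝ) := by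
      exact_mod_cast congrArg (Nat.cast : ℕ → ℝ) (choose_id N n₁ (by omega) (by omega))
    have hid2 := choose_id (N-1) (n₁-1) (by omega) (by omega)
    rw [show N - 1 - 1 = N - 2 by omega, show n₁ - 1 - 1 = n₁ - 2 by omega] at hid2
    have hc2 : (((N-1:ℕ)):ℝ) * ((N-2).choose (n₁-2) : ℝ)
        = (((n₁-1:ℕ)):ℝ) * ((N-1).choose (n₁-1) : ℝ) := by
      exact_mod_cast congrArg (Nat.cast : ℕ → ℝ) hid2
    have hid3 := choose_id (N-2) (n₁-2) (by omega) (by omega)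
    rw [show N - 2 - 1 = N - 3 by omega, show n₁ - 2 - 1 = n₁ - 3 by omega] at hid3
    have hc3 : (((N-2:ℕ)):ℝ) * ((N-3).choose (n₁-3) : ℝ)
        = (((n₁-2:ℕ)):ℝ) * ((N-2).choose (n₁-2) : ℝ) := by
      exact_mod_cast congrArg (Nat.cast : ℕ → ℝ) hid3
    rw [cast_sub_one N (by omega), cast_sub_one n₁ (by omega)] at hc2
    have eN2 : (((N-2:ℕ)):ℝ) = (N:ℝ) - 2 := by
      push_cast [Nat.cast_sub (show 2 ≤ N by omega)]; ring
    have en2 : (((n₁-2:ℕ)):ℝ) = (n₁:ℝ) - 2 := by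
      push_cast [Nat.cast_sub (show 2 ≤ n₁ by omega)]; ring
    rw [eN2, en2] at hc3
    have hNne : (N:ℝ) ≠ 0 := by positivity
    have hN4 : (4:ℝ) ≤ (N:ℝ) := by exact_mod_cast hN
    have hN1ne : (N:ℝ) - 1 ≠ 0 := by linarith
    have hN2ne : (N:ℝ) - 2 ≠ 0 := by linarith
    have v1 : ((N-1).choose (n₁-1) : ℝ) = (n₁:ℝ) * (N.choose n₁ : ℝ) / (N:ℝ) := by
      rw [eq_div_iff hNne]; linarith [hc1]
    have v2 : ((N-2).choose (n₁-2) : ℝ)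
        = ((n₁:ℝ)-1) * ((n₁:ℝ) * (N.choose n₁ : ℝ) / (N:ℝ)) / ((N:ℝ)-1) := by
      rw [eq_div_iff hN1ne, ← v1]; linarith [hc2]
    have v3 : ((N-3).choose (n₁-3) : ℝ)
        = ((n₁:ℝ)-2) * (((n₁:ℝ)-1) * ((n₁:ℝ) * (N.choose n₁ : ℝ) / (N:ℝ)) / ((N:ℝ)-1)) / ((N:ℝ)-2) := by
      rw [eq_div_iff hN2ne, ← v2]; linarith [hc3]
    rw [v3]; field_simp

lemma sum_one_P (n₁ : ℕ) :
    ∑ _S ∈ Finset.powersetCard n₁ (univ : Finset (Fin N)), (1:ℝ) = (N.choose n₁ : ℝ) := by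
  rw [Finset.sum_const, Finset.card_powersetCard, Finset.card_univ, Fintype.card_fin,
    nsmul_eq_mul, mul_one]

lemma momYY (n₁ : ℕ) (hN : 4 ≤ N) (hn₁ : 2 ≤ n₁) (i j : Fin N) (hij : i ≠ j) :
    ∑ S ∈ Finset.powersetCard n₁ (univ : Finset (Fin N)), (1 - Xi i S) * (1 - Xi j S)
      = (N.choose n₁ : ℝ) * (((N:ℝ)-(n₁:ℝ)) * ((N:ℝ)-(n₁:ℝ)-1)) / ((N : ℝ) * ((N:ℝ)-1)) := by
  have h0 : ∀ S : Finset (Fin N), (1 - Xi i S) * (1 - Xi j S)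
      = 1 - Xi i S - Xi j S + Xi i S * Xi j S := fun S => by ring
  simp only [h0]
  rw [Finset.sum_add_distrib, Finset.sum_sub_distrib, Finset.sum_sub_distrib, sum_one_P n₁,
    momX n₁ hN hn₁ i, momX n₁ hN hn₁ j, momXX n₁ hN hn₁ i j hij]
  have hN4 : (4:ℝ) ≤ (N:ℝ) := by exact_mod_cast hN
  have hNne : (N:ℝ) ≠ 0 := by positivity
  have hN1ne : (N:ℝ) - 1 ≠ 0 := by linarith
  field_simp
  ring

lemma momYYX (n₁ : ℕ) (hN : 4 ≤ N) (hn₁ : 2 ≤ n₁) (hn₁' : n₁ ≤ N - 2)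
    (i j k : Fin N) (hij : i ≠ j) (hik : i ≠ k) (hjk : j ≠ k) :
    ∑ S ∈ Finset.powersetCard n₁ (univ : Finset (Fin N)),
        (1 - Xi i S) * (1 - Xi j S) * Xi k S
      = (N.choose n₁ : ℝ) * (((N:ℝ)-(n₁:ℝ)) * ((N:ℝ)-(n₁:ℝ)-1) * (n₁:ℝ))
          / ((N : ℝ) * ((N:ℝ)-1) * ((N:ℝ)-2)) := by
  have h0 : ∀ S : Finset (Fin N), (1 - Xi i S) * (1 - Xi j S) * Xi k S
      = Xi k S - Xi i S * Xi k S - Xi j S * Xi k S + Xi i S * Xi j S * Xi k S := fun S => by ring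
  simp only [h0]
  rw [Finset.sum_add_distrib, Finset.sum_sub_distrib, Finset.sum_sub_distrib,
    momX n₁ hN hn₁ k, momXX n₁ hN hn₁ i k hik, momXX n₁ hN hn₁ j k hjk,
    momXXX n₁ hN hn₁ hn₁' i j k hij hik hjk]
  have hN4 : (4:ℝ) ≤ (N:ℝ) := by exact_mod_cast hN
  have hNne : (N:ℝ) ≠ 0 := by positivity
  have hN1ne : (N:ℝ) - 1 ≠ 0 := by linarith
  have hN2ne : (N:ℝ) - 2 ≠ 0 := by linarith
  field_simp
  ring
end

section
variable {N : ℕ}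

lemma key_cov (n₁ : ℕ) (hN : 4 ≤ N) (hn₁ : 2 ≤ n₁) (hn₁' : n₁ ≤ N - 2)
    (p : Fin N × Fin N) (hp : p.1 ≠ p.2) (k : Fin N) :
    (∑ S ∈ Finset.powersetCard n₁ (univ : Finset (Fin N)), hpair n₁ p S * Xi k S)
        * (N.choose n₁ : ℝ)
      = (∑ S ∈ Finset.powersetCard n₁ (univ : Finset (Fin N)), hpair n₁ p S)
        * (∑ S ∈ Finset.powersetCard n₁ (univ : Finset (Fin N)), Xi k S) := by
  have hN4 : (4:ℝ) ≤ (N:ℝ) := by exact_mod_cast hN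
  have hN0 : (N:ℝ) ≠ 0 := by positivity
  have hN1 : (N:ℝ) - 1 ≠ 0 := by linarith
  have hN2 : (N:ℝ) - 2 ≠ 0 := by linarith
  have hs2 : ∑ S ∈ Finset.powersetCard n₁ (univ : Finset (Fin N)), hpair n₁ p S
      = ((N:ℝ)-(n₁:ℝ)-1) * (∑ S ∈ Finset.powersetCard n₁ (univ : Finset (Fin N)),
          Xi p.1 S * Xi p.2 S)
        + ((n₁:ℝ)-1) * (∑ S ∈ Finset.powersetCard n₁ (univ : Finset (Fin N)),
          (1 - Xi p.1 S) * (1 - Xi p.2 S)) := by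
    rw [Finset.mul_sum, Finset.mul_sum, ← Finset.sum_add_distrib]
    exact Finset.sum_congr rfl fun S _ => by simp only [hpair]
  rw [hs2, momXX n₁ hN hn₁ p.1 p.2 hp, momYY n₁ hN hn₁ p.1 p.2 hp, momX n₁ hN hn₁ k]
  by_cases hk1 : k = p.1
  · have e1 : ∀ S, hpair n₁ p S * Xi k S = ((N:ℝ)-(n₁:ℝ)-1) * (Xi p.1 S * Xi p.2 S) := by
      intro S
      rw [hk1]
      simp only [hpair, Xi]
      by_cases h1 : p.1 ∈ S <;> by_cases h2 : p.2 ∈ S <;> simp [h1, h2]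
    have hsum : ∑ S ∈ Finset.powersetCard n₁ (univ : Finset (Fin N)), hpair n₁ p S * Xi k S
        = ((N:ℝ)-(n₁:ℝ)-1) * ∑ S ∈ Finset.powersetCard n₁ (univ : Finset (Fin N)),
            Xi p.1 S * Xi p.2 S := by
      rw [Finset.mul_sum]
      exact Finset.sum_congr rfl fun S _ => e1 S
    rw [hsum, momXX n₁ hN hn₁ p.1 p.2 hp]
    field_simp
    ring
  · by_cases hk2 : k = p.2
    · have e1 : ∀ S, hpair n₁ p S * Xi k S = ((N:ℝ)-(n₁:ℝ)-1) * (Xi p.1 S * Xi p.2 S) := by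
        intro S
        rw [hk2]
        simp only [hpair, Xi]
        by_cases h1 : p.1 ∈ S <;> by_cases h2 : p.2 ∈ S <;> simp [h1, h2]
      have hsum : ∑ S ∈ Finset.powersetCard n₁ (univ : Finset (Fin N)), hpair n₁ p S * Xi k S
          = ((N:ℝ)-(n₁:ℝ)-1) * ∑ S ∈ Finset.powersetCard n₁ (univ : Finset (Fin N)),
              Xi p.1 S * Xi p.2 S := by
        rw [Finset.mul_sum]
        exact Finset.sum_congr rfl fun S _ => e1 S
      rw [hsum, momXX n₁ hN hn₁ p.1 p.2 hp]
      field_simp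
      ring
    · have hsum : ∑ S ∈ Finset.powersetCard n₁ (univ : Finset (Fin N)), hpair n₁ p S * Xi k S
          = ((N:ℝ)-(n₁:ℝ)-1) * (∑ S ∈ Finset.powersetCard n₁ (univ : Finset (Fin N)),
              Xi p.1 S * Xi p.2 S * Xi k S)
            + ((n₁:ℝ)-1) * (∑ S ∈ Finset.powersetCard n₁ (univ : Finset (Fin N)),
              (1 - Xi p.1 S) * (1 - Xi p.2 S) * Xi k S) := by
        rw [Finset.mul_sum, Finset.mul_sum, ← Finset.sum_add_distrib]
        exact Finset.sum_congr rfl fun S _ => by simp only [hpair]; ring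
      rw [hsum, momXXX n₁ hN hn₁ hn₁' p.1 p.2 k hp (fun h => hk1 h.symm) (fun h => hk2 h.symm),
        momYYX n₁ hN hn₁ hn₁' p.1 p.2 k hp (fun h => hk1 h.symm) (fun h => hk2 h.symm)]
      field_simp
      ring

lemma key_lin (n₁ : ℕ) (hN : 4 ≤ N) (hn₁ : 2 ≤ n₁) (hn₁' : n₁ ≤ N - 2)
    (p : Fin N × Fin N) (hp : p.1 ≠ p.2) (q : Fin N × Fin N) :
    (∑ S ∈ Finset.powersetCard n₁ (univ : Finset (Fin N)), hpair n₁ p S * lpair q S)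
        * (N.choose n₁ : ℝ)
      = (∑ S ∈ Finset.powersetCard n₁ (univ : Finset (Fin N)), hpair n₁ p S)
        * (∑ S ∈ Finset.powersetCard n₁ (univ : Finset (Fin N)), lpair q S) := by
  have h1 : ∑ S ∈ Finset.powersetCard n₁ (univ : Finset (Fin N)), hpair n₁ p S * lpair q S
      = (∑ S ∈ Finset.powersetCard n₁ (univ : Finset (Fin N)), hpair n₁ p S * Xi q.1 S)
        + (∑ S ∈ Finset.powersetCard n₁ (univ : Finset (Fin N)), hpair n₁ p S * Xi q.2 S)
        - ∑ S ∈ Finset.powersetCard n₁ (univ : Finset (Fin N)), hpair n₁ p S := by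
    rw [← Finset.sum_add_distrib, ← Finset.sum_sub_distrib]
    exact Finset.sum_congr rfl fun S _ => by simp only [lpair]; ring
  have h2 : ∑ S ∈ Finset.powersetCard n₁ (univ : Finset (Fin N)), lpair q S
      = (∑ S ∈ Finset.powersetCard n₁ (univ : Finset (Fin N)), Xi q.1 S)
        + (∑ S ∈ Finset.powersetCard n₁ (univ : Finset (Fin N)), Xi q.2 S)
        - (N.choose n₁ : ℝ) := by
    rw [← sum_one_P (N := N) n₁, ← Finset.sum_add_distrib, ← Finset.sum_sub_distrib]
    exact Finset.sum_congr rfl fun S _ => by simp only [lpair]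
  rw [h1, h2, sub_mul, add_mul, key_cov n₁ hN hn₁ hn₁' p hp q.1,
    key_cov n₁ hN hn₁ hn₁' p hp q.2]
  ring
end


section
variable {K N : ℕ}

lemma rep_within (m : Fin K → ℕ) (v : Fin N → Fin K)
    (z : Fin N → Finset (Fin N) → ℝ) (hz : ∀ i S, z i S = 0 ∨ z i S = 1) (S : Finset (Fin N)) :
    ∑ u, (∑ i ∈ univ.filter (fun i => v i = u), z i S)
        * ((∑ i ∈ univ.filter (fun i => v i = u), z i S) - 1) / (m u : ℝ)
      = ∑ p ∈ (univ : Finset (Fin N)).offDiag,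
          (if v p.1 = v p.2 then ((m (v p.1) : ℝ))⁻¹ else 0) * (z p.1 S * z p.2 S) := by
  have hsq : ∀ u : Fin K, (∑ i ∈ univ.filter (fun i => v i = u), z i S)
      * ((∑ i ∈ univ.filter (fun i => v i = u), z i S) - 1)
      = ∑ p ∈ (univ.filter (fun i => v i = u)).offDiag, z p.1 S * z p.2 S := by
    intro u
    set F := univ.filter (fun i => v i = u) with hF
    have h1 : (∑ i ∈ F, z i S) * (∑ i ∈ F, z i S) = ∑ p ∈ F ×ˢ F, z p.1 S * z p.2 S := by
      rw [Finset.sum_mul_sum, ← Finset.sum_product']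
    have h2 : ∑ p ∈ F.diag, z p.1 S * z p.2 S = ∑ i ∈ F, z i S := by
      rw [Finset.sum_bij (fun (p : Fin N × Fin N) _ => p.1)]
      · intro p hp; rw [Finset.mem_diag] at hp; exact hp.1
      · intro p hp q hq hpq
        rw [Finset.mem_diag] at hp hq
        exact Prod.ext hpq (by rw [← hp.2, ← hq.2, hpq])
      · intro i hi
        exact ⟨(i, i), Finset.mem_diag.2 ⟨hi, rfl⟩, rfl⟩
      · intro p hp
        rw [Finset.mem_diag] at hp
        rw [← hp.2]
        rcases hz p.1 S with h | h <;> rw [h] <;> ring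
    have h3 : F ×ˢ F = F.diag ∪ F.offDiag := (Finset.diag_union_offDiag F).symm
    rw [mul_sub, mul_one, h1, h3, Finset.sum_union (Finset.disjoint_diag_offDiag F), h2]
    ring
  have hFu : ∀ u, (univ.filter (fun i => v i = u)).offDiag
      = univ.offDiag.filter (fun p : Fin N × Fin N => v p.1 = u ∧ v p.2 = u) := by
    intro u; ext p
    simp only [Finset.mem_offDiag, Finset.mem_filter, Finset.mem_univ, true_and]
    tauto
  calc ∑ u, (∑ i ∈ univ.filter (fun i => v i = u), z i S)
        * ((∑ i ∈ univ.filter (fun i => v i = u), z i S) - 1) / (m u : ℝ)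
      = ∑ u, ∑ p ∈ univ.offDiag,
          (if v p.1 = u ∧ v p.2 = u then ((m u : ℝ))⁻¹ else 0) * (z p.1 S * z p.2 S) := by
        apply Finset.sum_congr rfl
        intro u _
        rw [hsq u, hFu u, Finset.sum_filter, Finset.sum_div]
        apply Finset.sum_congr rfl
        intro p _
        by_cases h : v p.1 = u ∧ v p.2 = u <;> simp [h, div_eq_inv_mul]
    _ = ∑ p ∈ univ.offDiag, ∑ u,
          (if v p.1 = u ∧ v p.2 = u then ((m u : ℝ))⁻¹ else 0) * (z p.1 S * z p.2 S) :=
        Finset.sum_comm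
    _ = ∑ p ∈ (univ : Finset (Fin N)).offDiag,
          (if v p.1 = v p.2 then ((m (v p.1) : ℝ))⁻¹ else 0) * (z p.1 S * z p.2 S) := by
        apply Finset.sum_congr rfl
        intro p _
        rw [← Finset.sum_mul]
        congr 1
        rw [Finset.sum_eq_single (v p.1)]
        · by_cases h : v p.1 = v p.2
          · have h' : v p.1 = v p.1 ∧ v p.2 = v p.1 := ⟨rfl, h.symm⟩
            rw [if_pos h', if_pos h]
          · have h' : ¬(v p.1 = v p.1 ∧ v p.2 = v p.1) := by tauto
            rw [if_neg h', if_neg h]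
        · intro b _ hb
          have : ¬(v p.1 = b ∧ v p.2 = b) := fun hc => hb (hc.1.symm)
          simp [this]
        · intro hb; exact absurd (Finset.mem_univ _) hb
end

section
variable {K N : ℕ}

lemma rep_edges (m : Fin K → ℕ) (hm : ∀ u, 1 ≤ m u) (v : Fin N → Fin K)
    (C₀ : SimpleGraph (Fin K)) (z : Fin N → Finset (Fin N) → ℝ) (S : Finset (Fin N))
    (F : {f : Fin K → Fin K → ℝ // ∀ a b, f a b = f b a})
    (hF : ∀ u w, F.val u w = (∑ i ∈ univ.filter (fun i => v i = u), z i S)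
        * (∑ i ∈ univ.filter (fun i => v i = w), z i S) / ((m u : ℝ) * (m w : ℝ))) :
    ∑ e ∈ C₀.edgeFinset, Sym2.lift F e
      = ∑ p ∈ (univ : Finset (Fin N)).offDiag,
          (if C₀.Adj (v p.1) (v p.2)
            then ((2:ℝ) * (m (v p.1) : ℝ) * (m (v p.2) : ℝ))⁻¹ else 0) * (z p.1 S * z p.2 S) := by
  have key : ∀ e ∈ C₀.edgeFinset,
      Sym2.lift F e
        = ∑ p ∈ (univ : Finset (Fin N)).offDiag,
            (if s(v p.1, v p.2) = e
              then ((2:ℝ) * (m (v p.1) : ℝ) * (m (v p.2) : ℝ))⁻¹ * (z p.1 S * z p.2 S) else 0) := by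
    intro e
    induction e using Sym2.ind with
    | _ u w =>
      intro he
      have hadj : C₀.Adj u w := by rwa [SimpleGraph.mem_edgeFinset, SimpleGraph.mem_edgeSet] at he
      have huw : u ≠ w := hadj.ne
      rw [Sym2.lift_mk, hF]
      have hsplit : ∀ p ∈ (univ : Finset (Fin N)).offDiag,
          (if s(v p.1, v p.2) = s(u, w)
            then ((2:ℝ) * (m (v p.1) : ℝ) * (m (v p.2) : ℝ))⁻¹ * (z p.1 S * z p.2 S) else 0)
          = (if v p.1 = u ∧ v p.2 = w
              then ((2:ℝ) * (m u : ℝ) * (m w : ℝ))⁻¹ * (z p.1 S * z p.2 S) else 0)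
            + (if v p.1 = w ∧ v p.2 = u
              then ((2:ℝ) * (m w : ℝ) * (m u : ℝ))⁻¹ * (z p.1 S * z p.2 S) else 0) := by
        intro p _
        by_cases hA : v p.1 = u ∧ v p.2 = w
        · have hB : ¬(v p.1 = w ∧ v p.2 = u) := by
            rintro ⟨h1, -⟩; exact huw (by rw [← hA.1, h1])
          have hC : s(v p.1, v p.2) = s(u, w) := by rw [Sym2.eq_iff]; left; exact hA
          rw [if_pos hC, if_pos hA, if_neg hB, hA.1, hA.2, add_zero]
        · by_cases hB : v p.1 = w ∧ v p.2 = u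
          · have hC : s(v p.1, v p.2) = s(u, w) := by rw [Sym2.eq_iff]; right; exact hB
            rw [if_pos hC, if_neg hA, if_pos hB, hB.1, hB.2, zero_add]
          · have hC : ¬(s(v p.1, v p.2) = s(u, w)) := by
              rw [Sym2.eq_iff]; tauto
            rw [if_neg hC, if_neg hA, if_neg hB, add_zero]
      rw [Finset.sum_congr rfl hsplit, Finset.sum_add_distrib]
      have hprod : ∀ (a b : Fin K), a ≠ b →
          ∑ p ∈ (univ : Finset (Fin N)).offDiag,
            (if v p.1 = a ∧ v p.2 = b
              then ((2:ℝ) * (m a : ℝ) * (m b : ℝ))⁻¹ * (z p.1 S * z p.2 S) else 0)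
          = ((2:ℝ) * (m a : ℝ) * (m b : ℝ))⁻¹
              * ((∑ i ∈ univ.filter (fun i => v i = a), z i S)
                * (∑ i ∈ univ.filter (fun i => v i = b), z i S)) := by
        intro a b hab
        rw [← Finset.sum_filter]
        have hset : (univ : Finset (Fin N)).offDiag.filter (fun p => v p.1 = a ∧ v p.2 = b)
            = (univ.filter (fun i => v i = a)) ×ˢ (univ.filter (fun i => v i = b)) := by
          ext p
          simp only [Finset.mem_filter, Finset.mem_offDiag, Finset.mem_product, Finset.mem_univ,
            true_and]
          constructor
          · tauto
          · rintro ⟨h1, h2⟩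
            have hne : p.1 ≠ p.2 := fun hpq => hab (by rw [← h1, ← h2, hpq])
            tauto
        rw [hset, Finset.sum_product]
        conv_rhs => rw [Finset.sum_mul_sum, Finset.mul_sum]
        apply Finset.sum_congr rfl
        intro i _
        rw [Finset.mul_sum]
      rw [hprod u w huw, hprod w u (Ne.symm huw)]
      have hmu : ((m u : ℝ)) ≠ 0 := by
        have := hm u; positivity
      have hmw : ((m w : ℝ)) ≠ 0 := by
        have := hm w; positivity
      field_simp
      ring
  rw [Finset.sum_congr rfl key, Finset.sum_comm]
  apply Finset.sum_congr rfl
  intro p _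
  rw [Finset.sum_ite_eq]
  by_cases h : C₀.Adj (v p.1) (v p.2)
  · have : s(v p.1, v p.2) ∈ C₀.edgeFinset := by
      rwa [SimpleGraph.mem_edgeFinset, SimpleGraph.mem_edgeSet]
    rw [if_pos this, if_pos h]
  · have : s(v p.1, v p.2) ∉ C₀.edgeFinset := by
      rw [SimpleGraph.mem_edgeFinset, SimpleGraph.mem_edgeSet]; exact h
    rw [if_neg this, if_neg h, zero_mul]
end


section
variable {K N : ℕ}

lemma rep_total (m : Fin K → ℕ) (hm : ∀ u, 1 ≤ m u) (v : Fin N → Fin K)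
    (C₀ : SimpleGraph (Fin K)) (z : Fin N → Finset (Fin N) → ℝ)
    (hz : ∀ i S, z i S = 0 ∨ z i S = 1) (S : Finset (Fin N))
    (F : {f : Fin K → Fin K → ℝ // ∀ a b, f a b = f b a})
    (hF : ∀ u w, F.val u w = (∑ i ∈ univ.filter (fun i => v i = u), z i S)
        * (∑ i ∈ univ.filter (fun i => v i = w), z i S) / ((m u : ℝ) * (m w : ℝ))) :
    (∑ u, (∑ i ∈ univ.filter (fun i => v i = u), z i S)
        * ((∑ i ∈ univ.filter (fun i => v i = u), z i S) - 1) / (m u : ℝ))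
      + ∑ e ∈ C₀.edgeFinset, Sym2.lift F e
      = ∑ p ∈ (univ : Finset (Fin N)).offDiag, gw m v C₀ p * (z p.1 S * z p.2 S) := by
  rw [rep_within m v z hz S, rep_edges m hm v C₀ z S F hF, ← Finset.sum_add_distrib]
  exact Finset.sum_congr rfl fun p _ => by simp only [gw]; ring
end


/-- **Theorem 1 of the paper.**  The extended weighted edge-count
statistic `R_{w,(a)}` (with weight `p̂ = (n₁−1)/(N−2)`) minimizes the variance among
all convex combinations `a·R_{1,(a)} + b·R_{2,(a)}` with `a, b > 0`, `a + b = 1`. -/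
theorem extended_weighted_minimizes_variance
    -- number of distinct values and multiplicities
    (K : ℕ) (hK : 1 ≤ K) (m : Fin K → ℕ) (hm : ∀ u, 1 ≤ m u)
    -- total sample size
    (N : ℕ) (hN : N = ∑ u, m u) (hNge : 4 ≤ N)
    -- value map with prescribed fiber sizes
    (v : Fin N → Fin K)
    (hv : ∀ u, (Finset.univ.filter (fun i => v i = u)).card = m u)
    -- similarity graph on the distinct values
    (C₀ : SimpleGraph (Fin K))
    -- sizes of sample 1 and sample 2
    (n₁ n₂ : ℕ) (hn₁ : 2 ≤ n₁) (hn₁' : n₁ ≤ N - 2) (hn₂ : n₂ = N - n₁)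
    -- expectation under the permutation null distribution (uniform over
    -- all `n₁`-element subsets of `Fin N`)
    (E : (Finset (Fin N) → ℝ) → ℝ)
    (hE : ∀ f, E f =
      (∑ S ∈ Finset.powersetCard n₁ (Finset.univ : Finset (Fin N)), f S) / (N.choose n₁ : ℝ))
    -- within-group counts
    (n1 : Fin K → Finset (Fin N) → ℝ)
    (hn1 : ∀ u S, n1 u S = ((S.filter (fun i => v i = u)).card : ℝ))
    (n2 : Fin K → Finset (Fin N) → ℝ)
    (hn2 : ∀ u S, n2 u S = (m u : ℝ) - n1 u S)
    -- the averaging statistics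
    (R1a : Finset (Fin N) → ℝ)
    (hR1a : ∀ S, R1a S = ∑ u, n1 u S * (n1 u S - 1) / (m u : ℝ)
        + ∑ e ∈ C₀.edgeFinset,
            Sym2.lift ⟨fun u w => n1 u S * n1 w S / ((m u : ℝ) * (m w : ℝ)),
              fun u w => by ring⟩ e)
    (R2a : Finset (Fin N) → ℝ)
    (hR2a : ∀ S, R2a S = ∑ u, n2 u S * (n2 u S - 1) / (m u : ℝ)
        + ∑ e ∈ C₀.edgeFinset,
            Sym2.lift ⟨fun u w => n2 u S * n2 w S / ((m u : ℝ) * (m w : ℝ)),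
              fun u w => by ring⟩ e)
    -- variance under the permutation null distribution
    (Var : (Finset (Fin N) → ℝ) → ℝ)
    (hVar : ∀ f, Var f = E (fun S => (f S - E f) ^ 2))
    -- the weight p̂ and the extended weighted edge-count statistic
    (phat : ℝ) (hphat : phat = ((n₁ : ℝ) - 1) / ((N : ℝ) - 2))
    (Rwa : Finset (Fin N) → ℝ)
    (hRwa : ∀ S, Rwa S = (1 - phat) * R1a S + phat * R2a S) :
    ∀ a b : ℝ, 0 < a → 0 < b → a + b = 1 →
      Var (fun S => a * R1a S + b * R2a S) ≥ Var Rwa := by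
  intro a b ha hb hab
  -- numeric facts
  have hN4 : (4:ℝ) ≤ (N:ℝ) := by exact_mod_cast hNge
  have hN0 : (N:ℝ) ≠ 0 := by positivity
  have hN2ne : (N:ℝ) - 2 ≠ 0 := by linarith
  have hcpos : (0:ℝ) < (N.choose n₁ : ℝ) := by
    have : 0 < N.choose n₁ := Nat.choose_pos (by omega)
    exact_mod_cast this
  have hcne : (N.choose n₁ : ℝ) ≠ 0 := ne_of_gt hcpos
  -- expectation lemmas
  have hEadd : ∀ f g : Finset (Fin N) → ℝ, E (fun S => f S + g S) = E f + E g := by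
    intro f g
    rw [hE, hE, hE, Finset.sum_add_distrib, add_div]
  have hEsub : ∀ f g : Finset (Fin N) → ℝ, E (fun S => f S - g S) = E f - E g := by
    intro f g
    rw [hE, hE, hE, Finset.sum_sub_distrib, sub_div]
  have hEmul : ∀ (c : ℝ) (f : Finset (Fin N) → ℝ), E (fun S => c * f S) = c * E f := by
    intro c f
    rw [hE, hE, ← Finset.mul_sum, mul_div_assoc]
  have hEconst : ∀ c : ℝ, E (fun _ => c) = c := by
    intro c
    rw [hE, Finset.sum_const, Finset.card_powersetCard, Finset.card_univ, Fintype.card_fin,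
      nsmul_eq_mul, mul_comm, mul_div_assoc, div_self hcne, mul_one]
  have hEsum : ∀ (s : Finset (Fin N × Fin N)) (F : Fin N × Fin N → Finset (Fin N) → ℝ),
      E (fun S => ∑ p ∈ s, F p S) = ∑ p ∈ s, E (F p) := by
    intro s F
    rw [hE, Finset.sum_comm, Finset.sum_div]
    exact Finset.sum_congr rfl fun p _ => (hE (F p)).symm
  have hEnonneg : ∀ f : Finset (Fin N) → ℝ, (∀ S, 0 ≤ f S) → 0 ≤ E f := by
    intro f hf
    rw [hE]
    exact div_nonneg (Finset.sum_nonneg fun S _ => hf S) hcpos.le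
  -- fiber representations of the counts
  have hfib1 : ∀ u S, n1 u S = ∑ i ∈ univ.filter (fun i => v i = u), Xi i S := by
    intro u S
    have h1 : (univ.filter (fun i => v i = u)).filter (fun i => i ∈ S)
        = S.filter (fun i => v i = u) := by
      ext x
      simp only [Finset.mem_filter, Finset.mem_univ, true_and]
      tauto
    simp only [Xi]
    rw [Finset.sum_boole, h1, hn1]
  have hfib2 : ∀ u S, n2 u S = ∑ i ∈ univ.filter (fun i => v i = u), (1 - Xi i S) := by
    intro u S
    rw [Finset.sum_sub_distrib, Finset.sum_const, nsmul_eq_mul, mul_one, hv, hn2, hfib1]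
  -- z-values are 0/1
  have hz1 : ∀ (i : Fin N) (S : Finset (Fin N)), Xi i S = 0 ∨ Xi i S = 1 := by
    intro i S
    by_cases h : i ∈ S <;> simp [Xi, h]
  have hz2 : ∀ (i : Fin N) (S : Finset (Fin N)), (1 - Xi i S) = 0 ∨ (1 - Xi i S) = 1 := by
    intro i S
    by_cases h : i ∈ S <;> simp [Xi, h]
  -- pair representations of the statistics
  have hrep1 : ∀ S, R1a S = ∑ p ∈ (univ : Finset (Fin N)).offDiag,
      gw m v C₀ p * (Xi p.1 S * Xi p.2 S) := by
    intro S
    rw [hR1a S]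
    simp only [hfib1]
    exact rep_total m hm v C₀ (fun i S' => Xi i S') hz1 S _ (fun u w => rfl)
  have hrep2 : ∀ S, R2a S = ∑ p ∈ (univ : Finset (Fin N)).offDiag,
      gw m v C₀ p * ((1 - Xi p.1 S) * (1 - Xi p.2 S)) := by
    intro S
    rw [hR2a S]
    simp only [hfib2]
    exact rep_total m hm v C₀ (fun i S' => 1 - Xi i S') hz2 S _ (fun u w => rfl)
  -- the weighted sum and the difference
  set Q : Finset (Fin N) → ℝ :=
    fun S => ((N:ℝ) - (n₁:ℝ) - 1) * R1a S + ((n₁:ℝ) - 1) * R2a S with hQdef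
  set D : Finset (Fin N) → ℝ := fun S => R1a S - R2a S with hDdef
  have hQrep : ∀ S, Q S = ∑ p ∈ (univ : Finset (Fin N)).offDiag,
      gw m v C₀ p * hpair n₁ p S := by
    intro S
    rw [hQdef]
    simp only
    rw [hrep1 S, hrep2 S, Finset.mul_sum, Finset.mul_sum, ← Finset.sum_add_distrib]
    exact Finset.sum_congr rfl fun p _ => by simp only [hpair]; ring
  have hDrep : ∀ S, D S = ∑ p ∈ (univ : Finset (Fin N)).offDiag,
      gw m v C₀ p * lpair p S := by
    intro S
    rw [hDdef]
    simp only
    rw [hrep1 S, hrep2 S, ← Finset.sum_sub_distrib]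
    apply Finset.sum_congr rfl
    intro p _
    have hXY : Xi p.1 S * Xi p.2 S - (1 - Xi p.1 S) * (1 - Xi p.2 S) = lpair p S := by
      simp only [lpair]; ring
    rw [← mul_sub, hXY]
  -- covariance factorization for the kernels
  have hkeyE : ∀ p ∈ (univ : Finset (Fin N)).offDiag, ∀ q : Fin N × Fin N,
      E (fun S => hpair n₁ p S * lpair q S)
        = E (fun S => hpair n₁ p S) * E (fun S => lpair q S) := by
    intro p hp q
    have hp12 : p.1 ≠ p.2 := (Finset.mem_offDiag.1 hp).2.2
    have hraw := key_lin n₁ hNge hn₁ hn₁' p hp12 q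
    rw [hE, hE, hE, div_mul_div_comm, div_eq_div_iff hcne (by positivity)]
    rw [← hraw]
    ring
  -- Cov(Q, D) = 0
  have hQD : E (fun S => Q S * D S) = E Q * E D := by
    have e1 : (fun S => Q S * D S) = fun S => ∑ p ∈ (univ : Finset (Fin N)).offDiag,
        ∑ q ∈ (univ : Finset (Fin N)).offDiag,
          (gw m v C₀ p * gw m v C₀ q) * (hpair n₁ p S * lpair q S) := by
      funext S
      rw [hQrep S, hDrep S, Finset.sum_mul_sum]
      exact Finset.sum_congr rfl fun p _ => Finset.sum_congr rfl fun q _ => by ring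
    have hEQ : E Q = ∑ p ∈ (univ : Finset (Fin N)).offDiag,
        gw m v C₀ p * E (fun S => hpair n₁ p S) := by
      have : Q = fun S => ∑ p ∈ (univ : Finset (Fin N)).offDiag,
          gw m v C₀ p * hpair n₁ p S := funext hQrep
      rw [this, hEsum]
      exact Finset.sum_congr rfl fun p _ => hEmul _ _
    have hED : E D = ∑ q ∈ (univ : Finset (Fin N)).offDiag,
        gw m v C₀ q * E (fun S => lpair q S) := by
      have : D = fun S => ∑ q ∈ (univ : Finset (Fin N)).offDiag,
          gw m v C₀ q * lpair q S := funext hDrep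
      rw [this, hEsum]
      exact Finset.sum_congr rfl fun q _ => hEmul _ _
    calc E (fun S => Q S * D S)
        = ∑ p ∈ (univ : Finset (Fin N)).offDiag, ∑ q ∈ (univ : Finset (Fin N)).offDiag,
            (gw m v C₀ p * gw m v C₀ q)
              * (E (fun S => hpair n₁ p S) * E (fun S => lpair q S)) := by
          rw [e1, hEsum]
          apply Finset.sum_congr rfl
          intro p hp
          rw [hEsum]
          apply Finset.sum_congr rfl
          intro q _
          rw [hEmul, hkeyE p hp q]
      _ = (∑ p ∈ (univ : Finset (Fin N)).offDiag, gw m v C₀ p * E (fun S => hpair n₁ p S))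
            * (∑ q ∈ (univ : Finset (Fin N)).offDiag, gw m v C₀ q * E (fun S => lpair q S)) := by
          rw [Finset.sum_mul_sum]
          exact Finset.sum_congr rfl fun p _ => Finset.sum_congr rfl fun q _ => by ring
      _ = E Q * E D := by rw [hEQ, hED]
  -- Rwa is a scalar multiple of Q
  have hRwQ : ∀ S, Rwa S = ((N:ℝ) - 2)⁻¹ * Q S := by
    intro S
    rw [hRwa S, hphat]
    show _ = ((N:ℝ) - 2)⁻¹ * (((N:ℝ) - (n₁:ℝ) - 1) * R1a S + ((n₁:ℝ) - 1) * R2a S)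
    have h1p : 1 - ((n₁:ℝ) - 1)/((N:ℝ) - 2) = ((N:ℝ) - (n₁:ℝ) - 1)/((N:ℝ) - 2) := by
      rw [eq_div_iff hN2ne, sub_mul, div_mul_cancel₀ _ hN2ne]
      ring
    rw [h1p]
    simp only [div_eq_inv_mul]
    ring
  -- Cov(Rwa, D) = 0
  have hRwD : E (fun S => Rwa S * D S) = E Rwa * E D := by
    have h1 : (fun S => Rwa S * D S) = fun S => ((N:ℝ) - 2)⁻¹ * (Q S * D S) := by
      funext S
      rw [hRwQ S]
      ring
    have h2 : E Rwa = ((N:ℝ) - 2)⁻¹ * E Q := by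
      have : Rwa = fun S => ((N:ℝ) - 2)⁻¹ * Q S := funext hRwQ
      rw [this, hEmul]
    rw [h1, hEmul, hQD, h2]
    ring
  -- final variance decomposition
  set t : ℝ := a - (1 - phat) with htdef
  have hfD : ∀ S, a * R1a S + b * R2a S = Rwa S + t * D S := by
    intro S
    have hb' : b = 1 - a := by linarith
    rw [hRwa S, htdef, hb']
    show _ = _ + (a - (1 - phat)) * (R1a S - R2a S)
    ring
  rw [hVar, hVar]
  simp only [hfD]
  have hEf : E (fun S => Rwa S + t * D S) = E Rwa + t * E D := by
    rw [hEadd, hEmul]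
  have hexp : (fun S => (Rwa S + t * D S - E (fun S => Rwa S + t * D S)) ^ 2)
      = fun S => (Rwa S - E Rwa) ^ 2
          + ((2 * t) * ((Rwa S - E Rwa) * (D S - E D)) + t ^ 2 * (D S - E D) ^ 2) := by
    funext S
    rw [hEf]
    ring
  rw [hexp, hEadd, hEadd, hEmul, hEmul]
  have hmid : E (fun S => (Rwa S - E Rwa) * (D S - E D)) = 0 := by
    have h1 : ∀ S, (Rwa S - E Rwa) * (D S - E D)
        = Rwa S * D S - (E D * Rwa S + (E Rwa * D S - E Rwa * E D)) := fun S => by ring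
    have m0 : E (fun S => (Rwa S - E Rwa) * (D S - E D))
        = E (fun S => Rwa S * D S - (E D * Rwa S + (E Rwa * D S - E Rwa * E D))) :=
      congrArg E (funext h1)
    have m1 := hEsub (fun S => Rwa S * D S)
      (fun S => E D * Rwa S + (E Rwa * D S - E Rwa * E D))
    have m2 := hEadd (fun S => E D * Rwa S) (fun S => E Rwa * D S - E Rwa * E D)
    have m3 := hEsub (fun S => E Rwa * D S) (fun _ => E Rwa * E D)
    have m4 := hEmul (E D) Rwa
    have m5 := hEmul (E Rwa) D
    have m6 := hEconst (E Rwa * E D)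
    rw [m0, m1, m2, m3, m4, m5, m6, hRwD]
    ring
  rw [hmid]
  have hsq : 0 ≤ E (fun S => (D S - E D) ^ 2) := hEnonneg _ fun S => sq_nonneg _
  have ht2 : 0 ≤ t ^ 2 * E (fun S => (D S - E D) ^ 2) := mul_nonneg (sq_nonneg t) hsq
  linarith
end
end

section
/- For every subset S ⊆ Fin N (of arbitrary size), the number of edges of the union graph Ḡ with both endpoints in S equals ∑_u n_{1u}(n_{1u}−1)/2 + ∑_{{u,w} edge of C₀} n_{1u}·n_{1w}, where n_{1u} = |S ∩ v⁻¹(u)|; and the number of edges of Ḡ with both endpoints in the complement of S equals ∑_u n_{2u}(n_{2u}−1)/2 + ∑_{{u,w} edge of C₀} n_{2u}·n_{2w}, where n_{2u} = m(u) − n_{1u}. (Analytic expressions for R_{1,(u)} and R_{2,(u)} from Lemma 1 of the paper.) -/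
open Finset MeasureTheory
open scoped BigOperators Classical

noncomputable section

private lemma double_sum' {K : ℕ} (G : SimpleGraph (Fin K)) (c : Fin K → ℕ) :
    (∑ p ∈ univ.filter (fun p : Fin K × Fin K => G.Adj p.1 p.2), c p.1 * c p.2)
      = 2 * ∑ e ∈ G.edgeFinset, Sym2.lift ⟨fun u w => c u * c w, fun u w => by ring⟩ e := by
  have hmap : ∀ p ∈ univ.filter (fun p : Fin K × Fin K => G.Adj p.1 p.2),
      Sym2.mk p.1 p.2 ∈ G.edgeFinset := by
    intro p hp
    simp only [mem_filter] at hp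
    simpa [SimpleGraph.mem_edgeFinset] using hp.2
  rw [← Finset.sum_fiberwise_of_maps_to hmap (fun p => c p.1 * c p.2), Finset.mul_sum]
  refine Finset.sum_congr rfl ?_
  intro e he
  induction e using Sym2.ind with
  | _ a b =>
    rw [SimpleGraph.mem_edgeFinset, SimpleGraph.mem_edgeSet] at he
    have hne : a ≠ b := he.ne
    have : (univ.filter (fun p : Fin K × Fin K => G.Adj p.1 p.2)).filter
        (fun p => Sym2.mk p.1 p.2 = s(a, b)) = {(a, b), (b, a)} := by
      ext p
      obtain ⟨x, y⟩ := p
      simp only [mem_filter, mem_univ, true_and, Sym2.mk_eq_mk_iff, Sym2.eq_iff, mem_insert, mem_singleton,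
        Prod.mk.injEq, Prod.ext_iff, Prod.swap_prod_mk]
      constructor
      · tauto
      · rintro (⟨rfl, rfl⟩ | ⟨rfl, rfl⟩) <;> simp [he, he.symm]
    rw [this, Finset.sum_pair (by simp [hne, Prod.ext_iff])]
    simp [Sym2.lift_mk]
    ring


private lemma count_within {K N : ℕ} (v : Fin N → Fin K) (C₀ : SimpleGraph (Fin K))
    (Gbar : SimpleGraph (Fin N))
    (hGbar : ∀ i j, Gbar.Adj i j ↔ i ≠ j ∧ (v i = v j ∨ C₀.Adj (v i) (v j)))
    (T : Finset (Fin N)) (c : Fin K → ℕ)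
    (hc : ∀ u, c u = (T.filter (fun i => v i = u)).card) :
    (Gbar.edgeFinset.filter (fun e => ∀ x ∈ e, x ∈ T)).card
      = (∑ u, c u * (c u - 1) / 2)
        + ∑ e ∈ C₀.edgeFinset, Sym2.lift ⟨fun u w => c u * c w, fun u w => by ring⟩ e := by
  set G' : SimpleGraph (Fin N) :=
    { Adj := fun i j => Gbar.Adj i j ∧ i ∈ T ∧ j ∈ T
      symm := ⟨fun i j h => ⟨h.1.symm, h.2.2, h.2.1⟩⟩
      loopless := ⟨fun i h => Gbar.irrefl h.1⟩ } with hG'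
  have hadj : ∀ i j, G'.Adj i j ↔ Gbar.Adj i j ∧ i ∈ T ∧ j ∈ T := fun i j => Iff.rfl
  have hE : Gbar.edgeFinset.filter (fun e => ∀ x ∈ e, x ∈ T) = G'.edgeFinset := by
    ext e
    induction e using Sym2.ind with
    | _ a b =>
      simp only [mem_filter, SimpleGraph.mem_edgeFinset, SimpleGraph.mem_edgeSet,
        Sym2.mem_iff, hadj]
      constructor
      · rintro ⟨h, hm⟩
        exact ⟨h, hm a (Or.inl rfl), hm b (Or.inr rfl)⟩
      · rintro ⟨h, ha, hb⟩
        refine ⟨h, ?_⟩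
        rintro x (rfl | rfl) <;> assumption
  rw [hE]
  -- doubling
  have h2 : 2 * G'.edgeFinset.card = #(univ.filter fun (p : Fin N × Fin N) => G'.Adj p.1 p.2) := by
    simpa using SimpleGraph.two_mul_card_edgeFinset (G := G')
  -- split the ordered pair count
  have hsplit : (univ.filter fun (p : Fin N × Fin N) => G'.Adj p.1 p.2)
      = (univ.filter fun (p : Fin N × Fin N) =>
            p.1 ∈ T ∧ p.2 ∈ T ∧ p.1 ≠ p.2 ∧ v p.1 = v p.2)
        ∪ (univ.filter fun (p : Fin N × Fin N) =>
            p.1 ∈ T ∧ p.2 ∈ T ∧ C₀.Adj (v p.1) (v p.2)) := by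
    rw [← Finset.filter_or]
    refine Finset.filter_congr ?_
    intro p _
    rw [hadj, hGbar]
    constructor
    · rintro ⟨⟨hne, hvc⟩, h1, h2⟩
      rcases hvc with h | h
      · exact Or.inl ⟨h1, h2, hne, h⟩
      · exact Or.inr ⟨h1, h2, h⟩
    · rintro (⟨h1, h2, hne, h⟩ | ⟨h1, h2, h⟩)
      · exact ⟨⟨hne, Or.inl h⟩, h1, h2⟩
      · refine ⟨⟨?_, Or.inr h⟩, h1, h2⟩
        intro hpq; exact h.ne (by rw [hpq])
  have hdisj : Disjoint
      (univ.filter fun (p : Fin N × Fin N) =>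
          p.1 ∈ T ∧ p.2 ∈ T ∧ p.1 ≠ p.2 ∧ v p.1 = v p.2)
      (univ.filter fun (p : Fin N × Fin N) =>
          p.1 ∈ T ∧ p.2 ∈ T ∧ C₀.Adj (v p.1) (v p.2)) := by
    rw [Finset.disjoint_filter]
    rintro p _ ⟨-, -, -, hv⟩ ⟨-, -, h⟩
    exact h.ne hv
  -- first part: within-group pairs
  have hA : #(univ.filter fun (p : Fin N × Fin N) =>
        p.1 ∈ T ∧ p.2 ∈ T ∧ p.1 ≠ p.2 ∧ v p.1 = v p.2)
      = ∑ u, c u * (c u - 1) := by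
    rw [Finset.card_eq_sum_card_fiberwise (f := fun p : Fin N × Fin N => v p.1)
      (t := univ) (fun p _ => mem_univ _)]
    refine Finset.sum_congr rfl ?_
    intro u _
    have : ((univ.filter fun (p : Fin N × Fin N) =>
        p.1 ∈ T ∧ p.2 ∈ T ∧ p.1 ≠ p.2 ∧ v p.1 = v p.2).filter fun p => v p.1 = u)
        = (T.filter fun i => v i = u).offDiag := by
      ext p
      simp only [mem_filter, mem_univ, true_and, Finset.mem_offDiag]
      constructor
      · rintro ⟨⟨h1, h2, hne, hvv⟩, hu⟩
        exact ⟨⟨h1, hu⟩, ⟨h2, hvv ▸ hu⟩, hne⟩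
      · rintro ⟨⟨h1, hu1⟩, ⟨h2, hu2⟩, hne⟩
        exact ⟨⟨h1, h2, hne, hu1.trans hu2.symm⟩, hu1⟩
    rw [this, Finset.offDiag_card, ← hc u]
    cases c u with
    | zero => simp
    | succ k => simp [Nat.succ_mul, Nat.mul_succ]
  -- second part: cross-group pairs
  have hB : #(univ.filter fun (p : Fin N × Fin N) =>
        p.1 ∈ T ∧ p.2 ∈ T ∧ C₀.Adj (v p.1) (v p.2))
      = ∑ q ∈ univ.filter (fun q : Fin K × Fin K => C₀.Adj q.1 q.2), c q.1 * c q.2 := by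
    rw [Finset.card_eq_sum_card_fiberwise (f := fun p : Fin N × Fin N => (v p.1, v p.2))
      (t := univ.filter (fun q : Fin K × Fin K => C₀.Adj q.1 q.2)) ?_]
    · refine Finset.sum_congr rfl ?_
      intro q hq
      simp only [mem_filter, mem_univ, true_and] at hq
      have : ((univ.filter fun (p : Fin N × Fin N) =>
          p.1 ∈ T ∧ p.2 ∈ T ∧ C₀.Adj (v p.1) (v p.2)).filter fun p => (v p.1, v p.2) = q)
          = (T.filter fun i => v i = q.1) ×ˢ (T.filter fun i => v i = q.2) := by
        ext p
        simp only [mem_filter, mem_univ, true_and, Finset.mem_product, Prod.ext_iff]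
        constructor
        · rintro ⟨⟨h1, h2, -⟩, hv1, hv2⟩
          exact ⟨⟨h1, hv1⟩, h2, hv2⟩
        · rintro ⟨⟨h1, hv1⟩, h2, hv2⟩
          exact ⟨⟨h1, h2, hv1 ▸ hv2 ▸ hq⟩, hv1, hv2⟩
      rw [this, Finset.card_product, ← hc, ← hc]
    · intro p hp
      have hp' : p.1 ∈ T ∧ p.2 ∈ T ∧ C₀.Adj (v p.1) (v p.2) := by simpa using hp
      simpa using hp'.2.2
  -- put it together
  have heven : ∀ u : Fin K, 2 * (c u * (c u - 1) / 2) = c u * (c u - 1) := by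
    intro u
    refine Nat.two_mul_div_two_of_even ?_
    cases c u with
    | zero => simp
    | succ k => simpa [mul_comm] using Nat.even_mul_succ_self k
  have key : 2 * G'.edgeFinset.card
      = 2 * ((∑ u, c u * (c u - 1) / 2)
        + ∑ e ∈ C₀.edgeFinset, Sym2.lift ⟨fun u w => c u * c w, fun u w => by ring⟩ e) := by
    rw [h2, hsplit, Finset.card_union_of_disjoint hdisj, hA, hB, double_sum',
      Nat.mul_add, Finset.mul_sum, Finset.mul_sum]
    congr 1
    exact (Finset.sum_congr rfl fun u _ => (heven u)).symm
  omega

/-- **Lemma 1 of the paper.**  Analytic expressions for the union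
within-sample edge-counts: for every subset `S` of the observations, the number of
edges of the union graph `Ḡ` with both endpoints in `S` (resp. in the complement
of `S`) is given by the stated closed-form expressions. -/
theorem union_edge_count_formula
    -- number of distinct values and multiplicities
    (K : ℕ) (hK : 1 ≤ K) (m : Fin K → ℕ) (hm : ∀ u, 1 ≤ m u)
    -- total sample size
    (N : ℕ) (hN : N = ∑ u, m u)
    -- value map with prescribed fiber sizes
    (v : Fin N → Fin K)
    (hv : ∀ u, (Finset.univ.filter (fun i => v i = u)).card = m u)
    -- similarity graph on the distinct values
    (C₀ : SimpleGraph (Fin K))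
    -- the union graph Ḡ on the observations
    (Gbar : SimpleGraph (Fin N))
    (hGbar : ∀ i j, Gbar.Adj i j ↔ i ≠ j ∧ (v i = v j ∨ C₀.Adj (v i) (v j)))
    -- an arbitrary subset of observations, and the within-group counts
    (S : Finset (Fin N))
    (n1 n2 : Fin K → ℕ)
    (hn1 : ∀ u, n1 u = (S.filter (fun i => v i = u)).card)
    (hn2 : ∀ u, n2 u = m u - n1 u) :
    (Gbar.edgeFinset.filter (fun e => ∀ x ∈ e, x ∈ S)).card
      = (∑ u, n1 u * (n1 u - 1) / 2)
        + ∑ e ∈ C₀.edgeFinset,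
            Sym2.lift ⟨fun u w => n1 u * n1 w, fun u w => by ring⟩ e ∧
    (Gbar.edgeFinset.filter (fun e => ∀ x ∈ e, x ∉ S)).card
      = (∑ u, n2 u * (n2 u - 1) / 2)
        + ∑ e ∈ C₀.edgeFinset,
            Sym2.lift ⟨fun u w => n2 u * n2 w, fun u w => by ring⟩ e := by
  have key1 := count_within v C₀ Gbar hGbar S n1 hn1
  have key2 : ∀ u, n2 u = (Sᶜ.filter (fun i => v i = u)).card := by
    intro u
    have hsplit := Finset.card_filter_add_card_filter_not
      (s := univ.filter (fun i => v i = u)) (p := fun i => i ∈ S)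
    have e1 : (univ.filter (fun i => v i = u)).filter (fun i => i ∈ S)
        = S.filter (fun i => v i = u) := by
      ext i; simp [and_comm]
    have e2 : (univ.filter (fun i => v i = u)).filter (fun i => ¬ i ∈ S)
        = Sᶜ.filter (fun i => v i = u) := by
      ext i; simp [and_comm]
    rw [e1, e2, hv u, ← hn1 u] at hsplit
    rw [hn2 u]
    omega
  have key2' := count_within v C₀ Gbar hGbar Sᶜ n2 key2
  have hpred : (Gbar.edgeFinset.filter (fun e => ∀ x ∈ e, x ∉ S))
      = (Gbar.edgeFinset.filter (fun e => ∀ x ∈ e, x ∈ Sᶜ)) := by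
    refine Finset.filter_congr ?_
    intro e _
    simp [Finset.mem_compl]
  exact ⟨key1, by rw [hpred]; exact key2'⟩
end
end

section
/- Let m ≥ 2 and let 𝒯 be the set of all spanning trees of the complete graph on Fin m, i.e., connected simple graphs on Fin m with exactly m − 1 edges. Then for every subset A ⊆ Fin m with |A| = k, m · ∑_{T ∈ 𝒯} #{edges of T with both endpoints in A} = k(k−1) · |𝒯|; equivalently, the average over all spanning trees of the complete graph on m vertices of the number of edges lying within a fixed k-element subset equals k(k−1)/m. -/
open Finset MeasureTheory
open scoped BigOperators Classical

noncomputable section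

private lemma mem_edgeFinset' {V : Type*} {G : SimpleGraph V} (i : Fintype G.edgeSet)
    {e : Sym2 V} : e ∈ @SimpleGraph.edgeFinset V G i ↔ e ∈ G.edgeSet :=
  Set.mem_toFinset

private lemma mapPerm_inv {m : ℕ} (σ : Equiv.Perm (Fin m)) (T : SimpleGraph (Fin m)) :
    (T.map σ.toEmbedding).map σ.symm.toEmbedding = T := by
  rw [SimpleGraph.map_map]
  have h : σ.toEmbedding.trans σ.symm.toEmbedding = Function.Embedding.refl (Fin m) := by
    ext x; simp
  rw [show (⇑σ.symm.toEmbedding ∘ ⇑σ.toEmbedding) = id by funext x; simp, SimpleGraph.map_id]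

private lemma edgeFinset_map_card {m : ℕ} (σ : Equiv.Perm (Fin m)) (T : SimpleGraph (Fin m))
    {inst1 : Fintype ((T.map σ.toEmbedding).edgeSet)} {inst2 : Fintype T.edgeSet} :
    (@SimpleGraph.edgeFinset (Fin m) (T.map σ.toEmbedding) inst1).card
      = (@SimpleGraph.edgeFinset (Fin m) T inst2).card := by
  rw [SimpleGraph.edgeFinset_card, SimpleGraph.edgeFinset_card]
  exact Fintype.card_congr (SimpleGraph.Iso.mapEdgeSet (SimpleGraph.Iso.map σ T)).symm

private lemma mem_T_map {m : ℕ} (𝒯 : Finset (SimpleGraph (Fin m)))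
    (h𝒯 : ∀ T : SimpleGraph (Fin m),
      T ∈ 𝒯 ↔ T.Connected ∧ T.edgeFinset.card = m - 1)
    (σ : Equiv.Perm (Fin m)) {T : SimpleGraph (Fin m)} (hT : T ∈ 𝒯) :
    T.map σ.toEmbedding ∈ 𝒯 := by
  obtain ⟨hc, he⟩ := (h𝒯 T).mp hT
  refine (h𝒯 _).mpr ⟨?_, ?_⟩
  · exact ((SimpleGraph.Iso.map σ T).connected_iff).mp hc
  · exact (edgeFinset_map_card σ T).trans he

private lemma edge_map_mem {m : ℕ} (σ : Equiv.Perm (Fin m)) (T : SimpleGraph (Fin m))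
    {a b : Fin m} (h : s(a, b) ∈ T.edgeSet) :
    s(σ a, σ b) ∈ (T.map σ.toEmbedding).edgeSet := by
  have := (SimpleGraph.Iso.map_mem_edgeSet_iff (SimpleGraph.Iso.map σ T) (e := s(a, b))).mpr h
  simpa using this

/-- symmetry: the number of trees containing a fixed edge is independent of the edge. -/
private lemma filter_card_eq {m : ℕ} (𝒯 : Finset (SimpleGraph (Fin m)))
    (h𝒯 : ∀ T : SimpleGraph (Fin m),
      T ∈ 𝒯 ↔ T.Connected ∧ T.edgeFinset.card = m - 1)
    {a b c d : Fin m} (hab : a ≠ b) (hcd : c ≠ d) :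
    (𝒯.filter fun T => s(a, b) ∈ T.edgeFinset).card
      = (𝒯.filter fun T => s(c, d) ∈ T.edgeFinset).card := by
  obtain ⟨σ, hσa, hσb⟩ : ∃ σ : Equiv.Perm (Fin m), σ a = c ∧ σ b = d := by
    refine ⟨(Equiv.swap a c).trans (Equiv.swap (Equiv.swap a c b) d), ?_, ?_⟩
    · have h1 : Equiv.swap a c b ≠ c := by
        intro h
        have h2 : Equiv.swap a c b = Equiv.swap a c a := by
          rw [Equiv.swap_apply_left]; exact h
        exact hab ((Equiv.swap a c).injective h2).symm
      simp only [Equiv.trans_apply, Equiv.swap_apply_left]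
      exact Equiv.swap_apply_of_ne_of_ne h1.symm hcd
    · simp [Equiv.trans_apply, Equiv.swap_apply_left]
  refine Finset.card_nbij' (fun T => T.map σ.toEmbedding)
    (fun T => T.map σ.symm.toEmbedding) ?_ ?_ ?_ ?_
  · intro T hT
    rw [Finset.mem_coe, Finset.mem_filter] at hT ⊢
    obtain ⟨hT1, hT2⟩ := hT
    rw [mem_edgeFinset'] at hT2 ⊢
    refine ⟨mem_T_map 𝒯 h𝒯 σ hT1, ?_⟩
    have := edge_map_mem σ T hT2
    rwa [hσa, hσb] at this
  · intro T hT
    rw [Finset.mem_coe, Finset.mem_filter] at hT ⊢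
    obtain ⟨hT1, hT2⟩ := hT
    rw [mem_edgeFinset'] at hT2 ⊢
    refine ⟨mem_T_map 𝒯 h𝒯 σ.symm hT1, ?_⟩
    have := edge_map_mem σ.symm T hT2
    rwa [show σ.symm c = a by rw [← hσa]; simp, show σ.symm d = b by rw [← hσb]; simp] at this
  · intro T _; exact mapPerm_inv σ T
  · intro T _
    have := mapPerm_inv σ.symm T
    simp only [Equiv.symm_symm] at this
    exact this

/-- double counting -/
private lemma double_count {m : ℕ} (𝒯 : Finset (SimpleGraph (Fin m)))
    (E : Finset (Sym2 (Fin m))) :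
    ∑ e ∈ E, (𝒯.filter fun T => e ∈ T.edgeFinset).card
      = ∑ T ∈ 𝒯, (E.filter fun e => e ∈ T.edgeFinset).card := by
  simp only [Finset.card_filter]
  exact Finset.sum_comm

private lemma sub_helper (k : ℕ) : k * k - k = k * (k - 1) := by
  rcases Nat.eq_zero_or_pos k with rfl | hk
  · simp
  · have h := Nat.mul_succ k (k - 1)
    rw [Nat.succ_eq_add_one, Nat.sub_add_cancel hk] at h
    omega

/-- Averaging over all spanning trees of the complete graph on
`m` vertices, the number of edges lying inside a fixed `k`-element vertex subset
averages to `k(k−1)/m`: in cross-multiplied form,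
`m * ∑_{T ∈ 𝒯} #{edges of T inside A} = k(k−1) * |𝒯|`. -/
theorem spanning_tree_average_inner_edges
    (m : ℕ) (hm : 2 ≤ m)
    -- the set of all spanning trees of the complete graph on `Fin m`:
    -- connected simple graphs with exactly `m - 1` edges
    (𝒯 : Finset (SimpleGraph (Fin m)))
    (h𝒯 : ∀ T : SimpleGraph (Fin m),
      T ∈ 𝒯 ↔ T.Connected ∧ T.edgeFinset.card = m - 1)
    (A : Finset (Fin m)) (k : ℕ) (hA : A.card = k) :
    m * ∑ T ∈ 𝒯, (T.edgeFinset.filter (fun e => ∀ x ∈ e, x ∈ A)).card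
      = k * (k - 1) * 𝒯.card := by
  classical
  set EA : Finset (Sym2 (Fin m)) := A.offDiag.image Sym2.mk.uncurry with hEAdef
  set EU : Finset (Sym2 (Fin m)) := (Finset.univ : Finset (Fin m)).offDiag.image Sym2.mk.uncurry
    with hEUdef
  -- characterize EA
  have hEA : ∀ e : Sym2 (Fin m), e ∈ EA ↔ (¬ e.IsDiag ∧ ∀ x ∈ e, x ∈ A) := by
    intro e
    induction e using Sym2.ind with
    | _ x y =>
      simp only [hEAdef, Finset.mem_image, Finset.mem_offDiag, Prod.exists,
        Sym2.mk_isDiag_iff, Sym2.mem_iff, Function.uncurry_apply_pair]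
      constructor
      · rintro ⟨a, b, ⟨ha, hb, hne⟩, h⟩
        rw [Sym2.eq_iff] at h
        rcases h with ⟨rfl, rfl⟩ | ⟨rfl, rfl⟩
        · exact ⟨hne, by rintro z (rfl | rfl) <;> assumption⟩
        · exact ⟨hne.symm, by rintro z (rfl | rfl) <;> assumption⟩
      · rintro ⟨hne, hmem⟩
        exact ⟨x, y, ⟨hmem x (Or.inl rfl), hmem y (Or.inr rfl), hne⟩, rfl⟩
  have hfilA : ∀ T : SimpleGraph (Fin m),
      T.edgeFinset.filter (fun e => ∀ x ∈ e, x ∈ A)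
        = EA.filter fun e => e ∈ T.edgeFinset := by
    intro T
    ext e
    simp only [Finset.mem_filter, hEA]
    constructor
    · rintro ⟨he, hP⟩
      exact ⟨⟨T.not_isDiag_of_mem_edgeSet (SimpleGraph.mem_edgeFinset.mp he), hP⟩, he⟩
    · tauto
  have hfilU : ∀ T : SimpleGraph (Fin m),
      (EU.filter fun e => e ∈ T.edgeFinset) = T.edgeFinset := by
    intro T
    ext e
    simp only [Finset.mem_filter, and_iff_right_iff_imp]
    intro he
    have hd := T.not_isDiag_of_mem_edgeSet (SimpleGraph.mem_edgeFinset.mp he)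
    induction e using Sym2.ind with
    | _ x y =>
      rw [Sym2.mk_isDiag_iff] at hd
      exact Finset.mem_image.mpr ⟨(x, y),
        Finset.mem_offDiag.mpr ⟨Finset.mem_univ _, Finset.mem_univ _, hd⟩, rfl⟩
  -- base edge and the constant c
  have h01 : (⟨0, by omega⟩ : Fin m) ≠ ⟨1, by omega⟩ := by
    intro h; simpa using congrArg Fin.val h
  set c : ℕ :=
    (𝒯.filter fun T => s((⟨0, by omega⟩ : Fin m), (⟨1, by omega⟩ : Fin m)) ∈ T.edgeFinset).card
    with hc
  have hconst : ∀ e ∈ EU, (𝒯.filter fun T => e ∈ T.edgeFinset).card = c := by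
    intro e he
    obtain ⟨⟨a, b⟩, hp, rfl⟩ := Finset.mem_image.mp he
    have hab : a ≠ b := (Finset.mem_offDiag.mp hp).2.2
    exact filter_card_eq 𝒯 h𝒯 hab h01
  have hAU : EA ⊆ EU := by
    intro e he
    have hd := ((hEA e).mp he).1
    induction e using Sym2.ind with
    | _ x y =>
      rw [Sym2.mk_isDiag_iff] at hd
      exact Finset.mem_image.mpr ⟨(x, y),
        Finset.mem_offDiag.mpr ⟨Finset.mem_univ _, Finset.mem_univ _, hd⟩, rfl⟩
  -- the main sum
  have h1 : ∑ T ∈ 𝒯, (T.edgeFinset.filter (fun e => ∀ x ∈ e, x ∈ A)).card = EA.card * c := by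
    calc ∑ T ∈ 𝒯, (T.edgeFinset.filter (fun e => ∀ x ∈ e, x ∈ A)).card
        = ∑ T ∈ 𝒯, (EA.filter fun e => e ∈ T.edgeFinset).card :=
          Finset.sum_congr rfl fun T _ => by rw [hfilA T]
      _ = ∑ e ∈ EA, (𝒯.filter fun T => e ∈ T.edgeFinset).card := (double_count 𝒯 EA).symm
      _ = ∑ _e ∈ EA, c := Finset.sum_congr rfl fun e he => hconst e (hAU he)
      _ = EA.card * c := by rw [Finset.sum_const, smul_eq_mul]
  -- total edge count
  have h2 : EU.card * c = (m - 1) * 𝒯.card := by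
    calc EU.card * c = ∑ _e ∈ EU, c := by rw [Finset.sum_const, smul_eq_mul]
      _ = ∑ e ∈ EU, (𝒯.filter fun T => e ∈ T.edgeFinset).card :=
          (Finset.sum_congr rfl hconst).symm
      _ = ∑ T ∈ 𝒯, (EU.filter fun e => e ∈ T.edgeFinset).card := double_count 𝒯 EU
      _ = ∑ _T ∈ 𝒯, (m - 1) :=
          Finset.sum_congr rfl fun T hT => by rw [hfilU T]; exact ((h𝒯 T).mp hT).2
      _ = 𝒯.card * (m - 1) := by rw [Finset.sum_const, smul_eq_mul]
      _ = (m - 1) * 𝒯.card := Nat.mul_comm _ _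
  -- cardinalities
  have h3 : 2 * EA.card = k * (k - 1) := by
    rw [hEAdef, Sym2.two_mul_card_image_offDiag, Finset.offDiag_card, hA, sub_helper]
  have h4 : 2 * EU.card = m * (m - 1) := by
    rw [hEUdef, Sym2.two_mul_card_image_offDiag, Finset.offDiag_card, Finset.card_univ,
      Fintype.card_fin, sub_helper]
  -- finish by cancelling 2 * (m - 1)
  refine Nat.eq_of_mul_eq_mul_left (show 0 < 2 * (m - 1) by omega) ?_
  calc 2 * (m - 1) * (m * ∑ T ∈ 𝒯, (T.edgeFinset.filter (fun e => ∀ x ∈ e, x ∈ A)).card)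
      = (m * (m - 1)) * ((2 * EA.card) * c) := by rw [h1]; ring
    _ = (2 * EU.card) * ((k * (k - 1)) * c) := by rw [h3, h4]
    _ = (k * (k - 1)) * (2 * (EU.card * c)) := by ring
    _ = 2 * (m - 1) * (k * (k - 1) * 𝒯.card) := by rw [h2]; ring
end
end

section
/- Assume N ≥ 4. Under the permutation null distribution, E(R_{w,(u)}) = |Ḡ| · (n₁−1)(n₂−1)/((N−1)(N−2)), and Var(R_{w,(u)}) = [n₁(n₁−1)n₂(n₂−1)/(N(N−1)(N−2)(N−3))] · ( |Ḡ| − (1/(N−2)) ∑_{i ∈ Fin N} deg_{Ḡ}(i)² + 2|Ḡ|²/((N−1)(N−2)) ). -/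
open Finset MeasureTheory
open scoped BigOperators Classical

noncomputable section

set_option maxHeartbeats 2000000

lemma cast_descFactorial (n : ℕ) : ∀ k : ℕ,
    ((n.descFactorial k : ℕ) : ℝ) = ∏ i ∈ Finset.range k, ((n : ℝ) - i)
  | 0 => by simp
  | (k+1) => by
    by_cases h : k < n
    · rw [Nat.descFactorial_succ, Finset.prod_range_succ, Nat.cast_mul,
        cast_descFactorial n k, Nat.cast_sub h.le, mul_comm]
    · rw [Nat.descFactorial_eq_zero_iff_lt.2 (by omega), Nat.cast_zero]
      exact (Finset.prod_eq_zero (Finset.mem_range.2 (by omega : n < k + 1))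
        (by simp)).symm

lemma count_subsets_s4 {N : ℕ} (n₁ : ℕ) (hn : n₁ ≤ N) (A B : Finset (Fin N))
    (hAB : Disjoint A B) :
    ((Finset.powersetCard n₁ (Finset.univ : Finset (Fin N))).filter
        (fun S => A ⊆ S ∧ Disjoint B S)).card * N.descFactorial (A.card + B.card)
      = N.choose n₁ * (n₁.descFactorial A.card * (N - n₁).descFactorial B.card) := by
  classical
  set a := A.card with ha
  set b := B.card with hb
  have hAuniv : A ⊆ Finset.univ := Finset.subset_univ _
  have haN : a ≤ N := by simpa [ha] using Finset.card_le_card hAuniv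
  have hbN : b ≤ N := by simpa [hb] using Finset.card_le_card (Finset.subset_univ B)
  have habN : a + b ≤ N := by
    have := Finset.card_le_card (Finset.subset_univ (A ∪ B))
    rwa [Finset.card_union_of_disjoint hAB, Finset.card_univ, Fintype.card_fin] at this
  by_cases h1 : a ≤ n₁
  · by_cases h2 : b ≤ N - n₁
    · -- main case
      have hcard : ((Finset.powersetCard n₁ (Finset.univ : Finset (Fin N))).filter
          (fun S => A ⊆ S ∧ Disjoint B S)).card
          = (N - a - b).choose (n₁ - a) := by
        have := Finset.card_nbij' (s := (Finset.powersetCard n₁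
            (Finset.univ : Finset (Fin N))).filter (fun S => A ⊆ S ∧ Disjoint B S))
          (t := Finset.powersetCard (n₁ - a) ((Finset.univ \ A) \ B))
          (fun S => S \ A) (fun T => T ∪ A)
          (by
            intro S hS
            simp only [Finset.mem_coe, Finset.mem_filter, Finset.mem_powersetCard] at hS
            obtain ⟨⟨-, hScard⟩, hAS, hBS⟩ := hS
            rw [Finset.mem_coe, Finset.mem_powersetCard]
            constructor
            · intro x hx
              simp only [Finset.mem_sdiff, Finset.mem_univ, true_and] at hx ⊢
              exact ⟨hx.2, fun hxB => (Finset.disjoint_left.1 hBS) hxB hx.1⟩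
            · rw [Finset.card_sdiff_of_subset hAS, hScard]
          )
          (by
            intro T hT
            rw [Finset.mem_coe, Finset.mem_powersetCard] at hT
            obtain ⟨hTsub, hTcard⟩ := hT
            have hTA : Disjoint T A := by
              rw [Finset.disjoint_left]
              intro x hxT hxA
              have := hTsub hxT
              simp only [Finset.mem_sdiff] at this
              exact this.1.2 hxA
            have hTB : Disjoint B T := by
              rw [Finset.disjoint_right]
              intro x hxT hxB
              have := hTsub hxT
              simp only [Finset.mem_sdiff] at this
              exact this.2 hxB
            simp only [Finset.mem_coe, Finset.mem_filter, Finset.mem_powersetCard]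
            refine ⟨⟨Finset.subset_univ _, ?_⟩, Finset.subset_union_right, ?_⟩
            · rw [Finset.card_union_of_disjoint hTA, hTcard]; omega
            · rw [Finset.disjoint_union_right]
              exact ⟨hTB, hAB.symm⟩
          )
          (by
            intro S hS
            simp only [Finset.mem_coe, Finset.mem_filter] at hS
            exact Finset.sdiff_union_of_subset hS.2.1
          )
          (by
            intro T hT
            rw [Finset.mem_coe, Finset.mem_powersetCard] at hT
            have hTA : Disjoint T A := by
              rw [Finset.disjoint_left]
              intro x hxT hxA
              have := hT.1 hxT
              simp only [Finset.mem_sdiff] at this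
              exact this.1.2 hxA
            exact Finset.union_sdiff_cancel_right hTA
          )
        rw [this, Finset.card_powersetCard]
        congr 1
        rw [Finset.card_sdiff_of_subset, Finset.card_sdiff_of_subset hAuniv, Finset.card_univ, Fintype.card_fin]
        intro x hx
        simp only [Finset.mem_sdiff, Finset.mem_univ, true_and]
        exact fun hxA => (Finset.disjoint_left.1 hAB) hxA hx
      rw [hcard]
      -- now the arithmetic identity
      have hfac : (N - a - b).choose (n₁ - a) * (n₁ - a).factorial * ((N - a - b) - (n₁ - a)).factorial
          = (N - a - b).factorial := Nat.choose_mul_factorial_mul_factorial (by omega)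
      have he1 : (N - a - b) - (n₁ - a) = (N - n₁) - b := by omega
      rw [he1] at hfac
      have he2 : (N - a - b).factorial * N.descFactorial (a + b) = N.factorial := by
        have := Nat.factorial_mul_descFactorial (n := N) (k := a + b) (by omega)
        rwa [show N - (a + b) = N - a - b by omega] at this
      have he3 : (n₁ - a).factorial * n₁.descFactorial a = n₁.factorial :=
        Nat.factorial_mul_descFactorial h1
      have he4 : ((N - n₁) - b).factorial * (N - n₁).descFactorial b = (N - n₁).factorial :=
        Nat.factorial_mul_descFactorial h2
      have he5 : N.choose n₁ * n₁.factorial * (N - n₁).factorial = N.factorial :=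
        Nat.choose_mul_factorial_mul_factorial hn
      refine Nat.eq_of_mul_eq_mul_right
        (Nat.mul_pos (Nat.factorial_pos (n₁ - a)) (Nat.factorial_pos ((N - n₁) - b))) ?_
      calc (N - a - b).choose (n₁ - a) * N.descFactorial (a + b) * ((n₁ - a).factorial * ((N - n₁) - b).factorial)
          = ((N - a - b).choose (n₁ - a) * (n₁ - a).factorial * ((N - n₁) - b).factorial) *
              N.descFactorial (a + b) := by ring
        _ = (N - a - b).factorial * N.descFactorial (a + b) := by rw [hfac]
        _ = N.factorial := he2
        _ = N.choose n₁ * n₁.factorial * (N - n₁).factorial := he5.symm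
        _ = N.choose n₁ * ((n₁ - a).factorial * n₁.descFactorial a) *
              (((N - n₁) - b).factorial * (N - n₁).descFactorial b) := by rw [he3, he4]
        _ = N.choose n₁ * (n₁.descFactorial a * (N - n₁).descFactorial b) *
              ((n₁ - a).factorial * ((N - n₁) - b).factorial) := by ring
    · -- b > N - n₁ : filter is empty and descFactorial is zero
      have hempty : ((Finset.powersetCard n₁ (Finset.univ : Finset (Fin N))).filter
          (fun S => A ⊆ S ∧ Disjoint B S)) = ∅ := by
        rw [Finset.filter_eq_empty_iff]
        rintro S hS ⟨hAS, hBS⟩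
        rw [Finset.mem_powersetCard] at hS
        have : (B ∪ S).card = b + n₁ := by
          rw [Finset.card_union_of_disjoint hBS, hS.2]
        have hle : (B ∪ S).card ≤ N := by
          have := Finset.card_le_card (Finset.subset_univ (B ∪ S))
          rwa [Finset.card_univ, Fintype.card_fin] at this
        omega
      rw [hempty, Finset.card_empty, Nat.zero_mul,
        Nat.descFactorial_eq_zero_iff_lt.2 (by omega : N - n₁ < b)]
      ring
  · -- a > n₁
    have hempty : ((Finset.powersetCard n₁ (Finset.univ : Finset (Fin N))).filter
        (fun S => A ⊆ S ∧ Disjoint B S)) = ∅ := by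
      rw [Finset.filter_eq_empty_iff]
      rintro S hS ⟨hAS, hBS⟩
      rw [Finset.mem_powersetCard] at hS
      have := Finset.card_le_card hAS
      omega
    rw [hempty, Finset.card_empty, Nat.zero_mul,
      Nat.descFactorial_eq_zero_iff_lt.2 (by omega : n₁ < a)]
    ring

/-- Mean and variance of the extended weighted edge-count
statistic `R_{w,(u)}` under the permutation null distribution. -/
theorem mean_variance_Rwu
    -- number of distinct values and multiplicities
    (K : ℕ) (hK : 1 ≤ K) (m : Fin K → ℕ) (hm : ∀ u, 1 ≤ m u)
    -- total sample size
    (N : ℕ) (hN : N = ∑ u, m u) (hNge : 4 ≤ N)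
    -- value map with prescribed fiber sizes
    (v : Fin N → Fin K)
    (hv : ∀ u, (Finset.univ.filter (fun i => v i = u)).card = m u)
    -- similarity graph on the distinct values
    (C₀ : SimpleGraph (Fin K))
    -- sizes of sample 1 and sample 2
    (n₁ n₂ : ℕ) (hn₁ : 1 ≤ n₁) (hn₁' : n₁ ≤ N - 1) (hn₂ : n₂ = N - n₁)
    -- expectation under the permutation null distribution (uniform over
    -- all `n₁`-element subsets of `Fin N`)
    (E : (Finset (Fin N) → ℝ) → ℝ)
    (hE : ∀ f, E f =
      (∑ S ∈ Finset.powersetCard n₁ (Finset.univ : Finset (Fin N)), f S) / (N.choose n₁ : ℝ))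
    -- the union graph Ḡ on the observations
    (Gbar : SimpleGraph (Fin N))
    (hGbar : ∀ i j, Gbar.Adj i j ↔ i ≠ j ∧ (v i = v j ∨ C₀.Adj (v i) (v j)))
    -- the union statistics: edge-counts within sample 1 and within sample 2
    (R1u : Finset (Fin N) → ℝ)
    (hR1u : ∀ S, R1u S =
      ((Gbar.edgeFinset.filter (fun e => ∀ x ∈ e, x ∈ S)).card : ℝ))
    (R2u : Finset (Fin N) → ℝ)
    (hR2u : ∀ S, R2u S =
      ((Gbar.edgeFinset.filter (fun e => ∀ x ∈ e, x ∉ S)).card : ℝ))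
    -- variance under the permutation null distribution
    (Var : (Finset (Fin N) → ℝ) → ℝ)
    (hVar : ∀ f, Var f = E (fun S => (f S - E f) ^ 2))
    -- the weighted edge-count statistic
    (Rwu : Finset (Fin N) → ℝ)
    (hRwu : ∀ S, Rwu S =
      (((n₂ : ℝ) - 1) * R1u S + ((n₁ : ℝ) - 1) * R2u S) / ((N : ℝ) - 2))
    :
    E Rwu = (Gbar.edgeFinset.card : ℝ) *
        (((n₁ : ℝ) - 1) * ((n₂ : ℝ) - 1)) / (((N : ℝ) - 1) * ((N : ℝ) - 2)) ∧
    Var Rwu = ((n₁ : ℝ) * ((n₁ : ℝ) - 1) * (n₂ : ℝ) * ((n₂ : ℝ) - 1)) /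
        ((N : ℝ) * ((N : ℝ) - 1) * ((N : ℝ) - 2) * ((N : ℝ) - 3)) *
      ( (Gbar.edgeFinset.card : ℝ)
        - (1 / ((N : ℝ) - 2)) * (∑ i, (Gbar.degree i : ℝ) ^ 2)
        + 2 * (Gbar.edgeFinset.card : ℝ) ^ 2 / (((N : ℝ) - 1) * ((N : ℝ) - 2)) ) := by
  classical
  have hn1N : n₁ ≤ N := by omega
  have hn21 : 1 ≤ n₂ := by omega
  have hn12 : n₁ + n₂ = N := by omega
  set T := Finset.powersetCard n₁ (Finset.univ : Finset (Fin N)) with hTdef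
  set M := Gbar.edgeFinset with hMdef
  set c : ℝ := (N.choose n₁ : ℝ) with hcdef
  have hc0 : c ≠ 0 := Nat.cast_ne_zero.2 (Nat.choose_pos hn1N).ne'
  have hNR : (4:ℝ) ≤ (N:ℝ) := by exact_mod_cast hNge
  have hN0 : (N:ℝ) ≠ 0 := by linarith
  have hN1 : (N:ℝ) - 1 ≠ 0 := by linarith
  have hN2 : (N:ℝ) - 2 ≠ 0 := by linarith
  have hN3 : (N:ℝ) - 3 ≠ 0 := by linarith
  have hn2R : (n₂:ℝ) = (N:ℝ) - (n₁:ℝ) := by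
    have h : ((n₂ + n₁ : ℕ) : ℝ) = (N : ℝ) := by exact_mod_cast congrArg Nat.cast (by omega : n₂ + n₁ = N)
    push_cast at h
    linarith
  -- endpoints of an edge as a finset
  set te : Sym2 (Fin N) → Finset (Fin N) := fun e => Finset.univ.filter (· ∈ e) with hte
  have mem_te : ∀ (i : Fin N) (e : Sym2 (Fin N)), i ∈ te e ↔ i ∈ e := by
    intro i e; simp [hte]
  have te_inj : ∀ e f : Sym2 (Fin N), te e = te f → e = f := by
    intro e f h
    apply Sym2.ext
    intro x
    rw [← mem_te x e, ← mem_te x f, h]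
  have card_te : ∀ e ∈ M, (te e).card = 2 := by
    intro e he
    induction e using Sym2.ind with
    | _ i j =>
      rw [hMdef, SimpleGraph.mem_edgeFinset, SimpleGraph.mem_edgeSet] at he
      have hij : i ≠ j := Gbar.ne_of_adj he
      have h2 : te s(i,j) = {i, j} := by
        ext x; simp [hte, Sym2.mem_iff]
      rw [h2, Finset.card_pair hij]
  -- the master counting identity, in real form
  have key : ∀ A B : Finset (Fin N), Disjoint A B → A.card + B.card ≤ 4 →
      (∑ S ∈ T, (if A ⊆ S ∧ Disjoint B S then (1:ℝ) else 0))
      = c * ((n₁.descFactorial A.card : ℕ) : ℝ) * ((n₂.descFactorial B.card : ℕ) : ℝ)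
        / ((N.descFactorial (A.card + B.card) : ℕ) : ℝ) := by
    intro A B hAB hab4
    have hnat := count_subsets_s4 n₁ hn1N A B hAB
    rw [← hn₂] at hnat
    have hd0 : ((N.descFactorial (A.card + B.card) : ℕ) : ℝ) ≠ 0 := by
      rw [Nat.cast_ne_zero]
      intro h0
      rw [Nat.descFactorial_eq_zero_iff_lt] at h0
      omega
    rw [Finset.sum_boole, eq_div_iff hd0]
    have hcast : ((((Finset.powersetCard n₁ (Finset.univ : Finset (Fin N))).filter
          (fun S => A ⊆ S ∧ Disjoint B S)).card : ℝ))
          * ((N.descFactorial (A.card + B.card) : ℕ) : ℝ)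
        = (N.choose n₁ : ℝ) * (((n₁.descFactorial A.card : ℕ) : ℝ)
            * ((n₂.descFactorial B.card : ℕ) : ℝ)) := by
      exact_mod_cast congrArg (Nat.cast : ℕ → ℝ) hnat
    rw [hcdef]
    linear_combination hcast
  -- descending-factorial casts at small values
  have desc2 : ∀ n : ℕ, ((n.descFactorial 2 : ℕ) : ℝ) = (n:ℝ) * ((n:ℝ)-1) := by
    intro n; rw [cast_descFactorial]
    simp [Finset.prod_range_succ]
  have desc3 : ∀ n : ℕ, ((n.descFactorial 3 : ℕ) : ℝ) = (n:ℝ) * ((n:ℝ)-1) * ((n:ℝ)-2) := by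
    intro n; rw [cast_descFactorial]
    simp [Finset.prod_range_succ]
  have desc4 : ∀ n : ℕ, ((n.descFactorial 4 : ℕ) : ℝ)
      = (n:ℝ) * ((n:ℝ)-1) * ((n:ℝ)-2) * ((n:ℝ)-3) := by
    intro n; rw [cast_descFactorial]
    simp [Finset.prod_range_succ]
  -- specialized counting results
  have keyP : ∀ A : Finset (Fin N), A.card ≤ 4 →
      (∑ S ∈ T, (if A ⊆ S then (1:ℝ) else 0))
      = c * ((n₁.descFactorial A.card : ℕ) : ℝ) / ((N.descFactorial A.card : ℕ) : ℝ) := by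
    intro A hA
    have h := key A ∅ (Finset.disjoint_empty_right _) (by simpa using hA)
    simpa using h
  have keyQ : ∀ B : Finset (Fin N), B.card ≤ 4 →
      (∑ S ∈ T, (if Disjoint B S then (1:ℝ) else 0))
      = c * ((n₂.descFactorial B.card : ℕ) : ℝ) / ((N.descFactorial B.card : ℕ) : ℝ) := by
    intro B hB
    have h := key ∅ B (Finset.disjoint_empty_left _) (by simpa using hB)
    simpa using h
  set b1 : ℝ := (n₁:ℝ) - 1 with hb1
  set b2 : ℝ := (n₂:ℝ) - 1 with hb2
  set P2 : ℝ := c * ((n₁:ℝ) * ((n₁:ℝ)-1)) / ((N:ℝ) * ((N:ℝ)-1)) with hP2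
  set Q2 : ℝ := c * ((n₂:ℝ) * ((n₂:ℝ)-1)) / ((N:ℝ) * ((N:ℝ)-1)) with hQ2
  set P3 : ℝ := c * ((n₁:ℝ) * ((n₁:ℝ)-1) * ((n₁:ℝ)-2)) / ((N:ℝ) * ((N:ℝ)-1) * ((N:ℝ)-2)) with hP3
  set Q3 : ℝ := c * ((n₂:ℝ) * ((n₂:ℝ)-1) * ((n₂:ℝ)-2)) / ((N:ℝ) * ((N:ℝ)-1) * ((N:ℝ)-2)) with hQ3
  set P4 : ℝ := c * ((n₁:ℝ) * ((n₁:ℝ)-1) * ((n₁:ℝ)-2) * ((n₁:ℝ)-3)) /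
      ((N:ℝ) * ((N:ℝ)-1) * ((N:ℝ)-2) * ((N:ℝ)-3)) with hP4
  set Q4 : ℝ := c * ((n₂:ℝ) * ((n₂:ℝ)-1) * ((n₂:ℝ)-2) * ((n₂:ℝ)-3)) /
      ((N:ℝ) * ((N:ℝ)-1) * ((N:ℝ)-2) * ((N:ℝ)-3)) with hQ4
  set PQ : ℝ := c * ((n₁:ℝ) * ((n₁:ℝ)-1) * ((n₂:ℝ) * ((n₂:ℝ)-1))) /
      ((N:ℝ) * ((N:ℝ)-1) * ((N:ℝ)-2) * ((N:ℝ)-3)) with hPQ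
  set X : Sym2 (Fin N) → Finset (Fin N) → ℝ := fun e S =>
    b2 * (if te e ⊆ S then (1:ℝ) else 0) + b1 * (if Disjoint (te e) S then (1:ℝ) else 0) with hX
  -- rewrite Rwu in terms of per-edge indicators
  have hRwuX : ∀ S, Rwu S = (∑ e ∈ M, X e S) / ((N:ℝ) - 2) := by
    intro S
    rw [hRwu, hR1u, hR2u]
    have h1 : ((Gbar.edgeFinset.filter (fun e => ∀ x ∈ e, x ∈ S)).card : ℝ)
        = ∑ e ∈ M, (if te e ⊆ S then (1:ℝ) else 0) := by
      rw [Finset.sum_boole]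
      norm_cast
      apply Finset.card_nbij' id id
      · intro e he
        simp only [Finset.mem_coe, Finset.mem_filter] at he ⊢
        exact ⟨he.1, fun x hx => he.2 x ((mem_te x e).1 hx)⟩
      · intro e he
        simp only [Finset.mem_coe, Finset.mem_filter, Finset.subset_iff] at he ⊢
        exact ⟨he.1, fun x hx => he.2 ((mem_te x e).2 hx)⟩
      · intro a _; rfl
      · intro a _; rfl
    have h2 : ((Gbar.edgeFinset.filter (fun e => ∀ x ∈ e, x ∉ S)).card : ℝ)
        = ∑ e ∈ M, (if Disjoint (te e) S then (1:ℝ) else 0) := by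
      rw [Finset.sum_boole]
      norm_cast
      apply Finset.card_nbij' id id
      · intro e he
        simp only [Finset.mem_coe, Finset.mem_filter] at he ⊢
        refine ⟨he.1, Finset.disjoint_left.2 fun x hx => he.2 x ((mem_te x e).1 hx)⟩
      · intro e he
        simp only [Finset.mem_coe, Finset.mem_filter] at he ⊢
        exact ⟨he.1, fun x hx => (Finset.disjoint_left.1 he.2) ((mem_te x e).2 hx)⟩
      · intro a _; rfl
      · intro a _; rfl
    rw [h1, h2, hX]
    simp only []
    rw [Finset.sum_add_distrib, Finset.mul_sum, Finset.mul_sum]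
  -- expectation of Rwu
  have edgeSum : ∀ e ∈ M, (∑ S ∈ T, X e S) = b2 * P2 + b1 * Q2 := by
    intro e he
    rw [hX]
    simp only []
    rw [Finset.sum_add_distrib, ← Finset.mul_sum, ← Finset.mul_sum,
      keyP (te e) (by rw [card_te e he]; omega), keyQ (te e) (by rw [card_te e he]; omega),
      card_te e he, desc2, desc2, desc2, hP2, hQ2]
  have sum_Rwu : ∑ S ∈ T, Rwu S = (M.card : ℝ) * (b2 * P2 + b1 * Q2) / ((N:ℝ) - 2) := by
    calc ∑ S ∈ T, Rwu S = ∑ S ∈ T, (∑ e ∈ M, X e S) / ((N:ℝ) - 2) :=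
          Finset.sum_congr rfl fun S _ => hRwuX S
      _ = (∑ S ∈ T, ∑ e ∈ M, X e S) / ((N:ℝ) - 2) := by rw [Finset.sum_div]
      _ = (∑ e ∈ M, ∑ S ∈ T, X e S) / ((N:ℝ) - 2) := by rw [Finset.sum_comm]
      _ = (∑ e ∈ M, (b2 * P2 + b1 * Q2)) / ((N:ℝ) - 2) := by
          rw [Finset.sum_congr rfl edgeSum]
      _ = (M.card : ℝ) * (b2 * P2 + b1 * Q2) / ((N:ℝ) - 2) := by
          rw [Finset.sum_const, nsmul_eq_mul]
  have hERwu : E Rwu = (M.card : ℝ) * (((n₁:ℝ) - 1) * ((n₂:ℝ) - 1)) /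
      (((N:ℝ) - 1) * ((N:ℝ) - 2)) := by
    rw [hE, sum_Rwu, hP2, hQ2, hb1, hb2, hn2R]
    field_simp
    ring
  set g2 : ℝ := b2^2*P2 + b1^2*Q2 with hg2
  set g3 : ℝ := b2^2*P3 + b1^2*Q3 with hg3
  set g4 : ℝ := b2^2*P4 + b1^2*Q4 + 2*b1*b2*PQ with hg4
  have keyPQ : ∀ A B : Finset (Fin N), Disjoint A B → A.card = 2 → B.card = 2 →
      (∑ S ∈ T, (if A ⊆ S ∧ Disjoint B S then (1:ℝ) else 0)) = PQ := by
    intro A B h hA hB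
    rw [key A B h (by omega), hA, hB, (by norm_num : (2:ℕ) + 2 = 4), desc2, desc2, desc4, hPQ]
    ring
  have zcross : ∀ A B : Finset (Fin N), ¬ Disjoint A B →
      (∑ S ∈ T, (if A ⊆ S ∧ Disjoint B S then (1:ℝ) else 0)) = 0 := by
    intro A B hAB
    obtain ⟨x, hxA, hxB⟩ := Finset.not_disjoint_iff.1 hAB
    apply Finset.sum_eq_zero
    intro S _
    rw [if_neg]
    rintro ⟨hs, hd⟩
    exact (Finset.disjoint_left.1 hd) hxB (hs hxA)
  have pair : ∀ e ∈ M, ∀ f ∈ M,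
      (∑ S ∈ T, X e S * X f S)
      = g4 + (g3 - g4) * ((te e ∩ te f).card : ℝ)
        + (if e = f then g2 - 2*g3 + g4 else 0) := by
    intro e he f hf
    have hce := card_te e he
    have hcf := card_te f hf
    have hsplit : (∑ S ∈ T, X e S * X f S)
        = b2^2 * (∑ S ∈ T, if te e ∪ te f ⊆ S then (1:ℝ) else 0)
        + b1^2 * (∑ S ∈ T, if Disjoint (te e ∪ te f) S then (1:ℝ) else 0)
        + b1*b2 * (∑ S ∈ T, if te e ⊆ S ∧ Disjoint (te f) S then (1:ℝ) else 0)
        + b1*b2 * (∑ S ∈ T, if te f ⊆ S ∧ Disjoint (te e) S then (1:ℝ) else 0) := by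
      rw [Finset.mul_sum, Finset.mul_sum, Finset.mul_sum, Finset.mul_sum,
        ← Finset.sum_add_distrib, ← Finset.sum_add_distrib, ← Finset.sum_add_distrib]
      apply Finset.sum_congr rfl
      intro S _
      rw [hX]
      simp only []
      by_cases h1 : te e ⊆ S <;> by_cases h2 : te f ⊆ S <;>
        by_cases h3 : Disjoint (te e) S <;> by_cases h4 : Disjoint (te f) S <;>
        simp [h1, h2, h3, h4, Finset.union_subset_iff, Finset.disjoint_union_left] <;> ring
    by_cases hef : e = f
    · subst hef
      rw [if_pos rfl]
      have hnd : ¬ Disjoint (te e) (te e) := by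
        intro h
        have hpos : 0 < (te e).card := by omega
        obtain ⟨x, hx⟩ := Finset.card_pos.1 hpos
        exact (Finset.disjoint_left.1 h) hx hx
      rw [hsplit, Finset.union_self, keyP (te e) (by omega), keyQ (te e) (by omega),
        zcross _ _ hnd, Finset.inter_self, hce]
      simp only [desc2]
      simp only [hg2, hg3, hg4, hP2, hQ2, hP3, hQ3, hP4, hQ4, hPQ]
      push_cast
      ring
    · rw [if_neg hef]
      have hne : te e ≠ te f := fun h => hef (te_inj _ _ h)
      by_cases hd : Disjoint (te e) (te f)
      · have hu : (te e ∪ te f).card = 4 := by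
          rw [Finset.card_union_of_disjoint hd, hce, hcf]
        have hi : (te e ∩ te f).card = 0 := by
          rw [Finset.card_eq_zero]
          exact Finset.disjoint_iff_inter_eq_empty.1 hd
        rw [hsplit, keyP _ (by omega), keyQ _ (by omega), hu,
          keyPQ _ _ hd hce hcf, keyPQ _ _ hd.symm hcf hce, hi]
        simp only [desc4]
        simp only [hg2, hg3, hg4, hP2, hQ2, hP3, hQ3, hP4, hQ4, hPQ]
        push_cast
        ring
      · have h1 : (te e ∩ te f).card = 1 := by
          have hpos : 0 < (te e ∩ te f).card :=
            Finset.card_pos.2 (Finset.not_disjoint_iff_nonempty_inter.1 hd)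
          have hle : (te e ∩ te f).card ≤ 2 := by
            have := Finset.card_le_card (Finset.inter_subset_left : te e ∩ te f ⊆ te e)
            omega
          by_contra hne1
          have h2 : (te e ∩ te f).card = 2 := by omega
          have he1 : te e ∩ te f = te e :=
            Finset.eq_of_subset_of_card_le Finset.inter_subset_left (by omega)
          have he2 : te e ∩ te f = te f :=
            Finset.eq_of_subset_of_card_le Finset.inter_subset_right (by omega)
          exact hne (he1.symm.trans he2)
        have hu : (te e ∪ te f).card = 3 := by
          have := Finset.card_union_add_card_inter (te e) (te f)
          omega
        rw [hsplit, keyP _ (by omega), keyQ _ (by omega), hu, zcross _ _ hd,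
          zcross _ _ (fun h => hd h.symm), h1]
        simp only [desc3]
        simp only [hg2, hg3, hg4, hP2, hQ2, hP3, hQ3, hP4, hQ4, hPQ]
        push_cast
        ring
  -- degree identity
  have degSum : ∀ i : Fin N, (∑ e ∈ M, (if i ∈ te e then (1:ℝ) else 0)) = (Gbar.degree i : ℝ) := by
    intro i
    rw [Finset.sum_boole]
    have h : Gbar.degree i = (M.filter (fun e => i ∈ te e)).card := by
      rw [← SimpleGraph.card_neighborFinset_eq_degree]
      apply Finset.card_bij (fun j _ => s(i,j))
      · intro j hj
        rw [SimpleGraph.mem_neighborFinset] at hj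
        rw [Finset.mem_filter, mem_te]
        constructor
        · rw [hMdef, SimpleGraph.mem_edgeFinset, SimpleGraph.mem_edgeSet]
          exact hj
        · exact Sym2.mem_mk_left i j
      · intro j1 h1 j2 h2 heq
        exact Sym2.congr_right.1 heq
      · intro e he
        induction e using Sym2.ind with
        | _ x y =>
          rw [Finset.mem_filter, mem_te] at he
          obtain ⟨heM, hie⟩ := he
          rw [hMdef, SimpleGraph.mem_edgeFinset, SimpleGraph.mem_edgeSet] at heM
          rcases Sym2.mem_iff.1 hie with rfl | rfl
          · exact ⟨y, (SimpleGraph.mem_neighborFinset _ _ _).2 heM, rfl⟩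
          · exact ⟨x, (SimpleGraph.mem_neighborFinset _ _ _).2 heM.symm, Sym2.eq_swap⟩
    rw [h]
  have hdeg : ∑ e ∈ M, ∑ f ∈ M, ((te e ∩ te f).card : ℝ)
      = ∑ i : Fin N, (Gbar.degree i : ℝ)^2 := by
    have hcard : ∀ e f : Sym2 (Fin N), ((te e ∩ te f).card : ℝ)
        = ∑ i : Fin N, (if i ∈ te e then (1:ℝ) else 0) * (if i ∈ te f then (1:ℝ) else 0) := by
      intro e f
      have h : ∀ i : Fin N, (if i ∈ te e then (1:ℝ) else 0) * (if i ∈ te f then (1:ℝ) else 0)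
          = if i ∈ te e ∩ te f then (1:ℝ) else 0 := by
        intro i
        by_cases h1 : i ∈ te e <;> by_cases h2 : i ∈ te f <;> simp [h1, h2]
      rw [Finset.sum_congr rfl fun i _ => h i, Finset.sum_ite_mem, Finset.univ_inter,
        Finset.sum_const, nsmul_eq_mul, mul_one]
    calc ∑ e ∈ M, ∑ f ∈ M, ((te e ∩ te f).card : ℝ)
        = ∑ e ∈ M, ∑ f ∈ M, ∑ i : Fin N,
            (if i ∈ te e then (1:ℝ) else 0) * (if i ∈ te f then (1:ℝ) else 0) :=
          Finset.sum_congr rfl fun e _ => Finset.sum_congr rfl fun f _ => hcard e f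
      _ = ∑ e ∈ M, ∑ i : Fin N,
            (if i ∈ te e then (1:ℝ) else 0) * (∑ f ∈ M, (if i ∈ te f then (1:ℝ) else 0)) := by
          refine Finset.sum_congr rfl fun e _ => ?_
          rw [Finset.sum_comm]
          exact Finset.sum_congr rfl fun i _ => (Finset.mul_sum _ _ _).symm
      _ = ∑ i : Fin N,
            (∑ e ∈ M, (if i ∈ te e then (1:ℝ) else 0)) *
              (∑ f ∈ M, (if i ∈ te f then (1:ℝ) else 0)) := by
          rw [Finset.sum_comm]
          exact Finset.sum_congr rfl fun i _ => (Finset.sum_mul _ _ _).symm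
      _ = ∑ i : Fin N, (Gbar.degree i : ℝ)^2 := by
          refine Finset.sum_congr rfl fun i _ => ?_
          rw [degSum i, sq]
  -- the full double sum
  have sumXX : ∑ e ∈ M, ∑ f ∈ M, (∑ S ∈ T, X e S * X f S)
      = (M.card:ℝ)^2 * g4 + (g3 - g4) * (∑ i : Fin N, (Gbar.degree i : ℝ)^2)
        + (M.card:ℝ) * (g2 - 2*g3 + g4) := by
    rw [Finset.sum_congr rfl fun e he => Finset.sum_congr rfl fun f hf => pair e he f hf]
    have hsplit2 : ∑ e ∈ M, ∑ f ∈ M, (g4 + (g3-g4) * ((te e ∩ te f).card : ℝ)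
        + (if e = f then g2 - 2*g3 + g4 else 0))
        = (∑ e ∈ M, ∑ f ∈ M, (g4:ℝ))
          + (g3-g4) * (∑ e ∈ M, ∑ f ∈ M, ((te e ∩ te f).card : ℝ))
          + (∑ e ∈ M, ∑ f ∈ M, (if e = f then g2 - 2*g3 + g4 else 0)) := by
      rw [Finset.mul_sum]
      simp_rw [Finset.mul_sum]
      rw [← Finset.sum_add_distrib, ← Finset.sum_add_distrib]
      refine Finset.sum_congr rfl fun e _ => ?_
      rw [← Finset.sum_add_distrib, ← Finset.sum_add_distrib]
    have c1 : (∑ e ∈ M, ∑ f ∈ M, (g4:ℝ)) = (M.card:ℝ)^2 * g4 := by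
      simp [Finset.sum_const, nsmul_eq_mul]
      ring
    have c3 : (∑ e ∈ M, ∑ f ∈ M, (if e = f then g2 - 2*g3 + g4 else 0))
        = (M.card:ℝ) * (g2-2*g3+g4) := by
      have h1 : ∀ e ∈ M, (∑ f ∈ M, (if e = f then g2-2*g3+g4 else 0)) = g2-2*g3+g4 := by
        intro e he
        rw [Finset.sum_ite_eq, if_pos he]
      rw [Finset.sum_congr rfl h1, Finset.sum_const, nsmul_eq_mul]
    rw [hsplit2, hdeg, c1, c3]
  -- sum of squares of Rwu
  have sum_sq : ∑ S ∈ T, Rwu S^2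
      = ((M.card:ℝ)^2*g4 + (g3-g4)*(∑ i : Fin N, (Gbar.degree i:ℝ)^2)
          + (M.card:ℝ)*(g2-2*g3+g4)) / ((N:ℝ)-2)^2 := by
    have h1 : ∀ S ∈ T, Rwu S^2 = (∑ e ∈ M, ∑ f ∈ M, X e S * X f S) / ((N:ℝ)-2)^2 := by
      intro S _
      rw [hRwuX, div_pow, sq, Finset.sum_mul_sum]
    rw [Finset.sum_congr rfl h1, ← Finset.sum_div]
    rw [Finset.sum_comm, Finset.sum_congr rfl fun e _ => Finset.sum_comm, sumXX]
  -- variance decomposition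
  have hVar2 : Var Rwu = (∑ S ∈ T, Rwu S^2) / c - (E Rwu)^2 := by
    rw [hVar, hE]
    have hsum : ∑ S ∈ T, Rwu S = c * E Rwu := by
      rw [hE]
      field_simp
    have hcardT : ((T.card : ℕ) : ℝ) = c := by
      rw [hTdef, Finset.card_powersetCard, Finset.card_univ, Fintype.card_fin, hcdef]
    have expand : ∑ S ∈ T, (Rwu S - E Rwu)^2
        = (∑ S ∈ T, Rwu S^2) - 2 * E Rwu * (∑ S ∈ T, Rwu S) + (T.card:ℝ) * (E Rwu)^2 := by
      have h : ∀ S ∈ T, (Rwu S - E Rwu)^2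
          = Rwu S^2 - 2 * E Rwu * Rwu S + (E Rwu)^2 := fun S _ => by ring
      rw [Finset.sum_congr rfl h, Finset.sum_add_distrib, Finset.sum_sub_distrib,
        ← Finset.mul_sum, Finset.sum_const, nsmul_eq_mul]
    rw [expand, hsum, hcardT]
    have hfin : (∑ S ∈ T, Rwu S ^ 2) - 2 * E Rwu * (c * E Rwu) + c * E Rwu ^ 2
        = (∑ S ∈ T, Rwu S ^ 2) - c * E Rwu ^ 2 := by ring
    rw [hfin, sub_div, mul_div_cancel_left₀ _ hc0]
  refine ⟨hERwu, ?_⟩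
  rw [hVar2, sum_sq, hERwu]
  simp only [hg2, hg3, hg4, hP2, hQ2, hP3, hQ3, hP4, hQ4, hPQ, hb1, hb2]
  rw [hn2R]
  field_simp
  ring
end
end

section
/- Assume N ≥ 2. Under the permutation null distribution, E(R_{d,(a)}) = (N − K + |C₀|)(n₁ − n₂)/N, and Var(R_{d,(a)}) = (4n₁n₂/(N(N−1))) · ( ∑_u (deg_{C₀}(u) − 2)²/(4m(u)) − (|C₀| − K)²/N ). -/
open Finset MeasureTheory
open scoped BigOperators Classical

noncomputable section

section Helpers

variable {α : Type*} [DecidableEq α]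

private lemma card_filter_subset_pc (s t : Finset α) (ht : t ⊆ s) (k : ℕ) :
    ((s.powersetCard (k + t.card)).filter (fun S => t ⊆ S)).card
      = ((s \ t).powersetCard k).card := by
  apply Finset.card_nbij' (fun S => S \ t) (fun T => T ∪ t)
  · intro S hS
    simp only [Finset.mem_coe, mem_filter, mem_powersetCard] at hS
    rcases hS with ⟨⟨hsub, hcard⟩, htS⟩
    simp only [Finset.mem_coe, mem_powersetCard]
    refine ⟨Finset.sdiff_subset_sdiff hsub le_rfl, ?_⟩
    rw [Finset.card_sdiff_of_subset htS, hcard, Nat.add_sub_cancel]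
  · intro T hT
    simp only [Finset.mem_coe, mem_powersetCard] at hT
    have hdisj : Disjoint T t := Finset.disjoint_of_subset_left hT.1 (Finset.sdiff_disjoint)
    simp only [Finset.mem_coe, mem_filter, mem_powersetCard]
    refine ⟨⟨Finset.union_subset (hT.1.trans (Finset.sdiff_subset)) ht, ?_⟩,
      Finset.subset_union_right⟩
    rw [Finset.card_union_of_disjoint hdisj, hT.2]
  · intro S hS
    simp only [Finset.mem_coe, mem_filter] at hS
    exact Finset.sdiff_union_of_subset hS.2
  · intro T hT
    simp only [Finset.mem_coe, mem_powersetCard] at hT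
    have hdisj : Disjoint T t := Finset.disjoint_of_subset_left hT.1 (Finset.sdiff_disjoint)
    dsimp only
    rw [Finset.union_sdiff_right, Finset.sdiff_eq_self_of_disjoint hdisj]

private lemma count_mem_mul (s : Finset α) (k : ℕ) (i : α) (hi : i ∈ s) :
    ((s.powersetCard k).filter (fun S => i ∈ S)).card * s.card
      = s.card.choose k * k := by
  obtain ⟨c, hc⟩ : ∃ c, s.card = c + 1 :=
    ⟨s.card - 1, (Nat.succ_pred_eq_of_pos (Finset.card_pos.mpr ⟨i, hi⟩)).symm⟩
  cases k with
  | zero =>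
      have h0 : ((s.powersetCard 0).filter (fun S => i ∈ S)) = ∅ := by
        ext S
        simp only [Finset.powersetCard_zero, mem_filter, Finset.mem_singleton,
          Finset.notMem_empty, iff_false, not_and]
        rintro rfl h
        exact (Finset.notMem_empty i h)
      rw [h0]
      simp
  | succ n =>
      have ht : ({i} : Finset α) ⊆ s := Finset.singleton_subset_iff.mpr hi
      have hgen := card_filter_subset_pc s {i} ht n
      simp only [Finset.card_singleton] at hgen
      have hfe : ((s.powersetCard (n+1)).filter (fun S => i ∈ S))
          = ((s.powersetCard (n+1)).filter (fun S => ({i} : Finset α) ⊆ S)) := by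
        simp [Finset.singleton_subset_iff]
      rw [hfe, hgen, Finset.card_powersetCard, Finset.card_sdiff_of_subset ht,
        Finset.card_singleton, hc]
      simp only [Nat.add_sub_cancel]
      rw [mul_comm, Nat.add_one_mul_choose_eq, mul_comm]

private lemma count_pair_mul (s : Finset α) (k : ℕ) (i j : α) (hi : i ∈ s) (hj : j ∈ s)
    (hij : i ≠ j) :
    ((s.powersetCard k).filter (fun S => i ∈ S ∧ j ∈ S)).card * (s.card * (s.card - 1))
      = s.card.choose k * (k * (k - 1)) := by
  have ht : ({i, j} : Finset α) ⊆ s := by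
    intro x hx
    rcases Finset.mem_insert.mp hx with rfl | hx
    · exact hi
    · exact Finset.mem_singleton.mp hx ▸ hj
  have htc : ({i, j} : Finset α).card = 2 := by
    rw [Finset.card_insert_of_notMem (by simpa using hij), Finset.card_singleton]
  obtain ⟨c, hc⟩ : ∃ c, s.card = c + 2 := by
    refine ⟨s.card - 2, ?_⟩
    have h2 : 2 ≤ s.card := htc ▸ Finset.card_le_card ht
    omega
  match k with
  | 0 =>
      have h0 : ((s.powersetCard 0).filter (fun S => i ∈ S ∧ j ∈ S)) = ∅ := by
        ext S
        simp only [Finset.powersetCard_zero, mem_filter, Finset.mem_singleton,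
          Finset.notMem_empty, iff_false, not_and]
        rintro rfl h
        exact absurd h (Finset.notMem_empty i)
      rw [h0]; simp
  | 1 =>
      have h0 : ((s.powersetCard 1).filter (fun S => i ∈ S ∧ j ∈ S)) = ∅ := by
        ext S
        simp only [mem_filter, Finset.mem_powersetCard, Finset.notMem_empty, iff_false,
          not_and]
        rintro ⟨_, hcard⟩ hiS hjS
        rw [Finset.card_eq_one] at hcard
        obtain ⟨a, rfl⟩ := hcard
        simp only [Finset.mem_singleton] at hiS hjS
        exact hij (hiS.trans hjS.symm)
      rw [h0]; simp
  | (n+2) =>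
      have hfe : ((s.powersetCard (n+2)).filter (fun S => i ∈ S ∧ j ∈ S))
          = ((s.powersetCard (n + ({i,j} : Finset α).card)).filter
              (fun S => ({i, j} : Finset α) ⊆ S)) := by
        rw [htc]
        apply Finset.filter_congr
        intro S _
        simp [Finset.insert_subset_iff, Finset.singleton_subset_iff]
      rw [hfe, card_filter_subset_pc s _ ht, Finset.card_powersetCard,
        Finset.card_sdiff_of_subset ht, htc, hc]
      simp only [Nat.add_sub_cancel, Nat.add_sub_cancel_left]
      have h1 : (c + 1) * Nat.choose c n = Nat.choose (c + 1) (n + 1) * (n + 1) :=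
        Nat.add_one_mul_choose_eq c n
      have h2 : (c + 2) * Nat.choose (c + 1) (n + 1) = Nat.choose (c + 2) (n + 2) * (n + 2) :=
        Nat.add_one_mul_choose_eq (c+1) (n+1)
      have e1 : c + 2 - 1 = c + 1 := rfl
      have e2 : n + 2 - 1 = n + 1 := rfl
      rw [e1, e2]
      calc Nat.choose c n * ((c + 2) * (c + 1))
          = (c + 2) * ((c + 1) * Nat.choose c n) := by ring
        _ = (c + 2) * (Nat.choose (c + 1) (n + 1) * (n + 1)) := by rw [h1]
        _ = ((c + 2) * Nat.choose (c + 1) (n + 1)) * (n + 1) := by ring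
        _ = (Nat.choose (c + 2) (n + 2) * (n + 2)) * (n + 1) := by rw [h2]
        _ = Nat.choose (c + 2) (n + 2) * ((n + 2) * (n + 1)) := by ring

private lemma sum_pc_linear (s : Finset α) (k : ℕ) (b : α → ℝ) :
    ∑ S ∈ s.powersetCard k, ∑ i ∈ S, b i
      = ∑ i ∈ s, (((s.powersetCard k).filter (fun S => i ∈ S)).card : ℝ) * b i := by
  have h1 : ∀ S ∈ s.powersetCard k, ∑ i ∈ S, b i = ∑ i ∈ s, if i ∈ S then b i else 0 := by
    intro S hS
    have hsub : S ⊆ s := (Finset.mem_powersetCard.mp hS).1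
    rw [Finset.sum_ite_mem, Finset.inter_eq_right.mpr hsub]
  rw [Finset.sum_congr rfl h1, Finset.sum_comm]
  refine Finset.sum_congr rfl fun i _ => ?_
  rw [← Finset.sum_filter, Finset.sum_const, nsmul_eq_mul]

private lemma sum_pc_square (s : Finset α) (k : ℕ) (b : α → ℝ) :
    ∑ S ∈ s.powersetCard k, (∑ i ∈ S, b i) ^ 2
      = ∑ i ∈ s, (((s.powersetCard k).filter (fun S => i ∈ S)).card : ℝ) * (b i) ^ 2
        + ∑ i ∈ s, ∑ j ∈ s.erase i,
            (((s.powersetCard k).filter (fun S => i ∈ S ∧ j ∈ S)).card : ℝ) * (b i * b j) := by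
  have expand : ∀ S ∈ s.powersetCard k, (∑ i ∈ S, b i) ^ 2
      = ∑ i ∈ S, (b i)^2 + ∑ i ∈ S, ∑ j ∈ S.erase i, b i * b j := by
    intro S hS
    rw [sq, Finset.sum_mul_sum]
    rw [← Finset.sum_add_distrib]
    refine Finset.sum_congr rfl fun i hi => ?_
    rw [← Finset.add_sum_erase _ _ hi, sq]
  rw [Finset.sum_congr rfl expand, Finset.sum_add_distrib, sum_pc_linear]
  congr 1
  have h2 : ∀ S ∈ s.powersetCard k,
      ∑ i ∈ S, ∑ j ∈ S.erase i, b i * b j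
        = ∑ i ∈ s, ∑ j ∈ s.erase i, if i ∈ S ∧ j ∈ S then b i * b j else 0 := by
    intro S hS
    have hsub : S ⊆ s := (Finset.mem_powersetCard.mp hS).1
    have step1 : ∀ i, ∑ j ∈ S.erase i, b i * b j
        = ∑ j ∈ s.erase i, if j ∈ S then b i * b j else 0 := by
      intro i
      rw [Finset.sum_ite_mem, Finset.erase_inter, Finset.inter_eq_right.mpr hsub]
    have step2 : ∑ i ∈ S, ∑ j ∈ S.erase i, b i * b j
        = ∑ i ∈ s, if i ∈ S then ∑ j ∈ s.erase i, if j ∈ S then b i * b j else 0 else 0 := by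
      rw [Finset.sum_ite_mem, Finset.inter_eq_right.mpr hsub]
      exact Finset.sum_congr rfl fun i _ => step1 i
    rw [step2]
    refine Finset.sum_congr rfl fun i _ => ?_
    split_ifs with hiS
    · refine Finset.sum_congr rfl fun j _ => ?_
      simp [hiS]
    · symm
      refine Finset.sum_eq_zero fun j _ => ?_
      simp [hiS]
  rw [Finset.sum_congr rfl h2, Finset.sum_comm]
  refine Finset.sum_congr rfl fun i _ => ?_
  rw [Finset.sum_comm]
  refine Finset.sum_congr rfl fun j _ => ?_
  rw [← Finset.sum_filter, Finset.sum_const, nsmul_eq_mul]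

private lemma sum_edge_lift {V : Type*} [Fintype V] [DecidableEq V] (G : SimpleGraph V)
    [Fintype G.edgeSet] (g : V → ℝ) :
    ∑ e ∈ G.edgeFinset, Sym2.lift ⟨fun u w => g u + g w, fun u w => by ring⟩ e
      = ∑ u, (G.degree u : ℝ) * g u := by
  have h1 : ∀ e ∈ G.edgeFinset,
      Sym2.lift ⟨fun u w => g u + g w, fun u w => by ring⟩ e
        = ∑ u, if u ∈ e then g u else 0 := by
    intro e he
    induction e with
    | _ x y =>
      have hadj : G.Adj x y := (SimpleGraph.mem_edgeFinset.mp he)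
      have hxy : x ≠ y := hadj.ne
      rw [Sym2.lift_mk]
      have hfil : (Finset.univ.filter (fun u => u ∈ (s(x, y) : Sym2 V))) = {x, y} := by
        ext u; simp [Sym2.mem_iff]
      rw [← Finset.sum_filter, hfil, Finset.sum_insert (by simp [hxy]),
        Finset.sum_singleton]
  rw [Finset.sum_congr rfl h1, Finset.sum_comm]
  refine Finset.sum_congr rfl fun u _ => ?_
  rw [← Finset.sum_filter, Finset.sum_const, nsmul_eq_mul]
  congr 2
  rw [← SimpleGraph.card_incidenceFinset_eq_degree]
  congr 1
  rw [SimpleGraph.incidenceFinset_eq_filter]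

end Helpers

/-- Mean and variance of the extended difference edge-count
statistic `R_{d,(a)}` under the permutation null distribution. -/
theorem mean_variance_Rda
    -- number of distinct values and multiplicities
    (K : ℕ) (hK : 1 ≤ K) (m : Fin K → ℕ) (hm : ∀ u, 1 ≤ m u)
    -- total sample size
    (N : ℕ) (hN : N = ∑ u, m u) (hNge : 2 ≤ N)
    -- value map with prescribed fiber sizes
    (v : Fin N → Fin K)
    (hv : ∀ u, (Finset.univ.filter (fun i => v i = u)).card = m u)
    -- similarity graph on the distinct values
    (C₀ : SimpleGraph (Fin K))
    -- sizes of sample 1 and sample 2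
    (n₁ n₂ : ℕ) (hn₁ : 1 ≤ n₁) (hn₁' : n₁ ≤ N - 1) (hn₂ : n₂ = N - n₁)
    -- expectation under the permutation null distribution (uniform over
    -- all `n₁`-element subsets of `Fin N`)
    (E : (Finset (Fin N) → ℝ) → ℝ)
    (hE : ∀ f, E f =
      (∑ S ∈ Finset.powersetCard n₁ (Finset.univ : Finset (Fin N)), f S) / (N.choose n₁ : ℝ))
    -- within-group counts
    (n1 : Fin K → Finset (Fin N) → ℝ)
    (hn1 : ∀ u S, n1 u S = ((S.filter (fun i => v i = u)).card : ℝ))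
    (n2 : Fin K → Finset (Fin N) → ℝ)
    (hn2 : ∀ u S, n2 u S = (m u : ℝ) - n1 u S)
    -- the averaging statistics
    (R1a : Finset (Fin N) → ℝ)
    (hR1a : ∀ S, R1a S = ∑ u, n1 u S * (n1 u S - 1) / (m u : ℝ)
        + ∑ e ∈ C₀.edgeFinset,
            Sym2.lift ⟨fun u w => n1 u S * n1 w S / ((m u : ℝ) * (m w : ℝ)),
              fun u w => by ring⟩ e)
    (R2a : Finset (Fin N) → ℝ)
    (hR2a : ∀ S, R2a S = ∑ u, n2 u S * (n2 u S - 1) / (m u : ℝ)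
        + ∑ e ∈ C₀.edgeFinset,
            Sym2.lift ⟨fun u w => n2 u S * n2 w S / ((m u : ℝ) * (m w : ℝ)),
              fun u w => by ring⟩ e)
    -- variance under the permutation null distribution
    (Var : (Finset (Fin N) → ℝ) → ℝ)
    (hVar : ∀ f, Var f = E (fun S => (f S - E f) ^ 2))
    -- the difference edge-count statistic
    (Rda : Finset (Fin N) → ℝ)
    (hRda : ∀ S, Rda S = R1a S - R2a S)
    :
    E Rda = ((N : ℝ) - (K : ℝ) + (C₀.edgeFinset.card : ℝ)) * ((n₁ : ℝ) - (n₂ : ℝ)) / (N : ℝ) ∧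
    Var Rda = (4 * (n₁ : ℝ) * (n₂ : ℝ) / ((N : ℝ) * ((N : ℝ) - 1))) *
      ((∑ u, ((C₀.degree u : ℝ) - 2) ^ 2 / (4 * (m u : ℝ)))
        - ((C₀.edgeFinset.card : ℝ) - (K : ℝ)) ^ 2 / (N : ℝ)) := by
  -- basic numeric facts
  have hNR : (2:ℝ) ≤ (N:ℝ) := by exact_mod_cast hNge
  have hN0 : (N:ℝ) ≠ 0 := by linarith
  have hN1 : (N:ℝ) - 1 ≠ 0 := by intro h; linarith [sub_eq_zero.mp h]
  have hmuR : ∀ u, (m u : ℝ) ≠ 0 := fun u => Nat.cast_ne_zero.mpr (by have := hm u; omega)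
  have hn₁N : n₁ ≤ N := le_trans hn₁' (Nat.sub_le N 1)
  have hn₂R : (n₂:ℝ) = (N:ℝ) - (n₁:ℝ) := by
    rw [hn₂, Nat.cast_sub hn₁N]
  have hc0 : (N.choose n₁ : ℝ) ≠ 0 := by
    exact_mod_cast (Nat.choose_pos hn₁N).ne'
  have hcardP : (Finset.powersetCard n₁ (Finset.univ : Finset (Fin N))).card = N.choose n₁ := by
    rw [Finset.card_powersetCard, Finset.card_univ, Fintype.card_fin]
  -- abbreviations
  set Ecard : ℝ := (C₀.edgeFinset.card : ℝ) with hEcard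
  set a : Fin K → ℝ := fun u => ((C₀.degree u : ℝ) - 2) / (m u : ℝ) with ha
  set b : Fin N → ℝ := fun i => 2 + a (v i) with hb
  set B1 : ℝ := ∑ i, b i with hB1def
  set B2 : ℝ := ∑ i, (b i)^2 with hB2def
  set p : ℝ := (n₁:ℝ) / (N:ℝ) with hp
  set q : ℝ := (n₁:ℝ) * ((n₁:ℝ) - 1) / ((N:ℝ) * ((N:ℝ) - 1)) with hq
  set T : ℝ := ∑ u, (m u : ℝ) * (a u)^2 with hT
  -- fiberwise sums
  have hfiberS : ∀ (S : Finset (Fin N)) (F : Fin K → ℝ),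
      ∑ i ∈ S, F (v i) = ∑ u, n1 u S * F u := by
    intro S F
    rw [← Finset.sum_fiberwise_of_maps_to (fun i _ => Finset.mem_univ (v i)) (fun i => F (v i))]
    refine Finset.sum_congr rfl fun u _ => ?_
    have hcongr : ∀ i ∈ S.filter (fun i => v i = u), F (v i) = F u := by
      intro i hi
      rw [(Finset.mem_filter.mp hi).2]
    rw [Finset.sum_congr rfl hcongr, Finset.sum_const, nsmul_eq_mul, hn1]
  have hn1univ : ∀ u, n1 u Finset.univ = (m u : ℝ) := by
    intro u; rw [hn1, hv]
  have hfiberU : ∀ (F : Fin K → ℝ), ∑ i, F (v i) = ∑ u, (m u : ℝ) * F u := by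
    intro F
    rw [hfiberS Finset.univ F]
    exact Finset.sum_congr rfl fun u _ => by rw [hn1univ]
  -- basic constant sums
  have hKsum : ∑ _u : Fin K, (1:ℝ) = (K:ℝ) := by simp
  have hNsum : ∑ u, (m u : ℝ) = (N:ℝ) := by rw [hN]; push_cast; ring
  have hdeg : ∑ u, (C₀.degree u : ℝ) = 2 * Ecard := by
    rw [hEcard]
    exact_mod_cast congrArg (Nat.cast : ℕ → ℝ) C₀.sum_degrees_eq_twice_card_edges
  have hma : ∀ u, (m u : ℝ) * a u = (C₀.degree u : ℝ) - 2 := by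
    intro u
    simp only [ha]
    rw [mul_comm]
    exact div_mul_cancel₀ _ (hmuR u)
  have hmasum : ∑ u, (m u : ℝ) * a u = 2 * Ecard - 2 * (K:ℝ) := by
    rw [Finset.sum_congr rfl fun u _ => hma u, Finset.sum_sub_distrib, hdeg]
    simp only [Finset.sum_const, Finset.card_univ, Fintype.card_fin, nsmul_eq_mul]
    ring
  -- values of B1 and B2
  have hB1 : B1 = 2 * (N:ℝ) + 2 * Ecard - 2 * (K:ℝ) := by
    rw [hB1def, hb]
    rw [hfiberU (fun u => 2 + a u)]
    have : ∀ u : Fin K, (m u : ℝ) * (2 + a u) = 2 * (m u : ℝ) + (m u : ℝ) * a u := by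
      intro u; ring
    rw [Finset.sum_congr rfl fun u _ => this u, Finset.sum_add_distrib, ← Finset.mul_sum,
      hNsum, hmasum]
    ring
  have hB2 : B2 = 4 * (N:ℝ) + 4 * (2 * Ecard - 2 * (K:ℝ)) + T := by
    rw [hB2def, hb]
    have h1 : ∀ i : Fin N, (2 + a (v i))^2 = (fun u => (2 + a u)^2) (v i) := fun i => rfl
    rw [Finset.sum_congr rfl fun i _ => h1 i, hfiberU (fun u => (2 + a u)^2)]
    have h2 : ∀ u : Fin K, (m u : ℝ) * (2 + a u)^2
        = 4 * (m u : ℝ) + 4 * ((m u : ℝ) * a u) + (m u : ℝ) * (a u)^2 := by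
      intro u; ring
    rw [Finset.sum_congr rfl fun u _ => h2 u, Finset.sum_add_distrib, Finset.sum_add_distrib,
      ← Finset.mul_sum, ← Finset.mul_sum, hNsum, hmasum, hT]
  have htargetT : ∑ u, ((C₀.degree u : ℝ) - 2) ^ 2 / (4 * (m u : ℝ)) = T / 4 := by
    rw [hT, Finset.sum_div]
    refine Finset.sum_congr rfl fun u _ => ?_
    simp only [ha]
    field_simp [hmuR u]
  -- counting facts (real versions)
  have hcnt1 : ∀ i : Fin N,
      ((((Finset.powersetCard n₁ (Finset.univ : Finset (Fin N))).filter
          (fun S => i ∈ S)).card : ℝ))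
        = (N.choose n₁ : ℝ) * (n₁:ℝ) / (N:ℝ) := by
    intro i
    have h := count_mem_mul (Finset.univ : Finset (Fin N)) n₁ i (Finset.mem_univ i)
    rw [Finset.card_univ, Fintype.card_fin] at h
    have h' : ((((Finset.powersetCard n₁ (Finset.univ : Finset (Fin N))).filter
        (fun S => i ∈ S)).card : ℝ)) * (N:ℝ) = (N.choose n₁ : ℝ) * (n₁:ℝ) := by
      exact_mod_cast congrArg (Nat.cast : ℕ → ℝ) h
    rw [eq_div_iff hN0]
    exact h'
  have hcnt2 : ∀ i j : Fin N, i ≠ j →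
      ((((Finset.powersetCard n₁ (Finset.univ : Finset (Fin N))).filter
          (fun S => i ∈ S ∧ j ∈ S)).card : ℝ))
        = (N.choose n₁ : ℝ) * ((n₁:ℝ) * ((n₁:ℝ) - 1)) / ((N:ℝ) * ((N:ℝ) - 1)) := by
    intro i j hij
    have h := count_pair_mul (Finset.univ : Finset (Fin N)) n₁ i j (Finset.mem_univ i)
      (Finset.mem_univ j) hij
    rw [Finset.card_univ, Fintype.card_fin] at h
    have hNm1 : ((N - 1 : ℕ) : ℝ) = (N:ℝ) - 1 := by
      rw [Nat.cast_sub (by omega)]; norm_num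
    have hnm1 : ((n₁ - 1 : ℕ) : ℝ) = (n₁:ℝ) - 1 := by
      rw [Nat.cast_sub hn₁]; norm_num
    have h' := congrArg (Nat.cast : ℕ → ℝ) h
    push_cast [hNm1, hnm1] at h'
    rw [eq_div_iff (mul_ne_zero hN0 hN1)]
    exact_mod_cast h'
  -- sums of the linear statistic over all samples
  have hsumLin : ∑ S ∈ Finset.powersetCard n₁ (Finset.univ : Finset (Fin N)),
      (∑ i ∈ S, b i) = (N.choose n₁ : ℝ) * (p * B1) := by
    rw [sum_pc_linear]
    simp only [hcnt1]
    rw [← Finset.mul_sum, hp, ← hB1def]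
    ring
  have hsumSq : ∑ S ∈ Finset.powersetCard n₁ (Finset.univ : Finset (Fin N)),
      (∑ i ∈ S, b i) ^ 2
        = (N.choose n₁ : ℝ) * (p * B2) + (N.choose n₁ : ℝ) * (q * (B1^2 - B2)) := by
    rw [sum_pc_square]
    have hfirst : ∑ i : Fin N,
        ((((Finset.powersetCard n₁ (Finset.univ : Finset (Fin N))).filter
            (fun S => i ∈ S)).card : ℝ)) * (b i)^2 = (N.choose n₁ : ℝ) * (p * B2) := by
      simp only [hcnt1]
      rw [← Finset.mul_sum, hp, ← hB2def]
      ring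
    have hsecond : ∑ i : Fin N, ∑ j ∈ Finset.univ.erase i,
        ((((Finset.powersetCard n₁ (Finset.univ : Finset (Fin N))).filter
            (fun S => i ∈ S ∧ j ∈ S)).card : ℝ)) * (b i * b j)
          = (N.choose n₁ : ℝ) * (q * (B1^2 - B2)) := by
      have hrow : ∀ i : Fin N, ∑ j ∈ Finset.univ.erase i,
          ((((Finset.powersetCard n₁ (Finset.univ : Finset (Fin N))).filter
              (fun S => i ∈ S ∧ j ∈ S)).card : ℝ)) * (b i * b j)
            = (N.choose n₁ : ℝ) * q * (b i * B1 - (b i)^2) := by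
        intro i
        have hstep : ∀ j ∈ Finset.univ.erase i,
            ((((Finset.powersetCard n₁ (Finset.univ : Finset (Fin N))).filter
                (fun S => i ∈ S ∧ j ∈ S)).card : ℝ)) * (b i * b j)
              = (N.choose n₁ : ℝ) * q * (b i * b j) := by
          intro j hj
          have hij : i ≠ j := fun h => (Finset.mem_erase.mp hj).1 h.symm
          rw [hcnt2 i j hij, hq]
          ring
        rw [Finset.sum_congr rfl hstep, ← Finset.mul_sum, ← Finset.mul_sum,
          Finset.sum_erase_eq_sub (Finset.mem_univ i), ← hB1def]
        ring
      rw [Finset.sum_congr rfl fun i _ => hrow i, ← Finset.mul_sum]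
      have : ∑ i : Fin N, (b i * B1 - (b i)^2) = B1^2 - B2 := by
        rw [Finset.sum_sub_distrib, ← Finset.sum_mul, ← hB1def, ← hB2def]
        ring
      rw [this]
      ring
    rw [hfirst, hsecond]
  -- the key linear representation of Rda
  have hlin : ∀ S : Finset (Fin N),
      Rda S = ((K:ℝ) - Ecard - (N:ℝ)) + ∑ i ∈ S, b i := by
    intro S
    rw [hRda, hR1a, hR2a]
    -- diagonal part
    have hdiag : ∑ u, n1 u S * (n1 u S - 1) / (m u : ℝ)
        - ∑ u, n2 u S * (n2 u S - 1) / (m u : ℝ)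
          = ∑ u, (2 * n1 u S - 2 * (n1 u S / (m u : ℝ)) - (m u : ℝ) + 1) := by
      rw [← Finset.sum_sub_distrib]
      refine Finset.sum_congr rfl fun u _ => ?_
      rw [hn2]
      field_simp [hmuR u]
      ring
    -- edge part
    have hedge : (∑ e ∈ C₀.edgeFinset,
          Sym2.lift ⟨fun u w => n1 u S * n1 w S / ((m u : ℝ) * (m w : ℝ)),
            fun u w => by ring⟩ e)
        - (∑ e ∈ C₀.edgeFinset,
          Sym2.lift ⟨fun u w => n2 u S * n2 w S / ((m u : ℝ) * (m w : ℝ)),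
            fun u w => by ring⟩ e)
          = ∑ u, (C₀.degree u : ℝ) * (n1 u S / (m u : ℝ)) - Ecard := by
      rw [← Finset.sum_sub_distrib]
      have hper : ∀ e ∈ C₀.edgeFinset,
          (Sym2.lift ⟨fun u w => n1 u S * n1 w S / ((m u : ℝ) * (m w : ℝ)),
            fun u w => by ring⟩ e)
          - (Sym2.lift ⟨fun u w => n2 u S * n2 w S / ((m u : ℝ) * (m w : ℝ)),
            fun u w => by ring⟩ e)
          = (Sym2.lift ⟨fun u w => (n1 u S / (m u : ℝ)) + (n1 w S / (m w : ℝ)),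
              fun u w => by ring⟩ e) - 1 := by
        intro e he
        induction e with
        | _ x y =>
          simp only [Sym2.lift_mk]
          rw [hn2, hn2]
          field_simp [hmuR x, hmuR y]
          ring
      rw [Finset.sum_congr rfl hper, Finset.sum_sub_distrib,
        sum_edge_lift C₀ (fun u => n1 u S / (m u : ℝ))]
      simp only [Finset.sum_const, nsmul_eq_mul, mul_one]
      rfl
    have hrearr : ∀ d1 e1 d2 e2 : ℝ, (d1 + e1) - (d2 + e2) = (d1 - d2) + (e1 - e2) := by
      intros; ring
    rw [hrearr, hdiag, hedge]
    -- combine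
    have hS : ∑ i ∈ S, b i = ∑ u, n1 u S * (2 + a u) := by
      rw [hb]
      exact hfiberS S (fun u => 2 + a u)
    rw [hS]
    have hcomb : ∀ u : Fin K,
        (2 * n1 u S - 2 * (n1 u S / (m u : ℝ)) - (m u : ℝ) + 1)
          + (C₀.degree u : ℝ) * (n1 u S / (m u : ℝ))
        = n1 u S * (2 + a u) + (1 - (m u : ℝ)) := by
      intro u
      simp only [ha]
      field_simp [hmuR u]
      ring
    have : ∑ u, (2 * n1 u S - 2 * (n1 u S / (m u : ℝ)) - (m u : ℝ) + 1)
        + ∑ u, (C₀.degree u : ℝ) * (n1 u S / (m u : ℝ))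
          = ∑ u, n1 u S * (2 + a u) + ((K:ℝ) - (N:ℝ)) := by
      rw [← Finset.sum_add_distrib, Finset.sum_congr rfl fun u _ => hcomb u,
        Finset.sum_add_distrib, Finset.sum_sub_distrib, hKsum, hNsum]
    linarith [this]
  -- expectation of Rda
  have hsumRda : ∑ S ∈ Finset.powersetCard n₁ (Finset.univ : Finset (Fin N)), Rda S
      = (N.choose n₁ : ℝ) * (((K:ℝ) - Ecard - (N:ℝ)) + p * B1) := by
    rw [Finset.sum_congr rfl fun S _ => hlin S, Finset.sum_add_distrib, Finset.sum_const,
      hcardP, nsmul_eq_mul, hsumLin]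
    ring
  have hERda : E Rda = ((K:ℝ) - Ecard - (N:ℝ)) + p * B1 := by
    rw [hE, hsumRda, mul_comm, mul_div_assoc, div_self hc0, mul_one]
  constructor
  · rw [hERda, hB1, hp, hn₂R]
    field_simp
    ring
  · -- variance
    have hVarform : Var Rda = (p - q) * B2 + (q - p^2) * B1^2 := by
      rw [hVar, hE]
      have hdev : ∀ S ∈ Finset.powersetCard n₁ (Finset.univ : Finset (Fin N)),
          (Rda S - E Rda)^2
            = (∑ i ∈ S, b i)^2 - 2*(p*B1)*(∑ i ∈ S, b i) + (p*B1)^2 := by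
        intro S _
        rw [hlin S, hERda]
        ring
      rw [Finset.sum_congr rfl hdev, Finset.sum_add_distrib, Finset.sum_sub_distrib,
        hsumSq, ← Finset.mul_sum, hsumLin, Finset.sum_const, hcardP, nsmul_eq_mul]
      rw [div_eq_iff hc0]
      ring
    rw [hVarform, hB2, hB1, htargetT, hn₂R, hp, hq]
    field_simp
    ring
end
end

section
/- Assume N ≥ 2. Under the permutation null distribution, E(R_{d,(u)}) = |Ḡ|(n₁ − n₂)/N, and Var(R_{d,(u)}) = (n₁n₂/(N(N−1))) · ( ∑_{i ∈ Fin N} deg_{Ḡ}(i)² − 4|Ḡ|²/N ). -/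
open Finset MeasureTheory
open scoped BigOperators Classical

set_option maxHeartbeats 1000000

noncomputable section

lemma count_supersets {α : Type*} [DecidableEq α] (s A : Finset α) (hA : A ⊆ s) (k : ℕ)
    (hk : A.card ≤ k) :
    ((Finset.powersetCard k s).filter (fun S => A ⊆ S)).card
      = (s.card - A.card).choose (k - A.card) := by
  rw [← Finset.card_sdiff_of_subset hA, ← Finset.card_powersetCard]
  apply Finset.card_nbij' (fun S => S \ A) (fun T => T ∪ A)
  · intro S hS
    simp only [Finset.mem_coe, Finset.mem_filter, Finset.mem_powersetCard] at hS ⊢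
    obtain ⟨⟨hSs, hcard⟩, hAS⟩ := hS
    exact ⟨Finset.sdiff_subset_sdiff hSs (le_refl _), by rw [Finset.card_sdiff_of_subset hAS, hcard]⟩
  · intro T hT
    simp only [Finset.mem_coe, Finset.mem_powersetCard, Finset.subset_sdiff] at hT
    obtain ⟨⟨hTs, hdisj⟩, hcard⟩ := hT
    simp only [Finset.mem_coe, Finset.mem_filter, Finset.mem_powersetCard]
    refine ⟨⟨Finset.union_subset hTs hA, ?_⟩, Finset.subset_union_right⟩
    rw [Finset.card_union_of_disjoint hdisj, hcard, Nat.sub_add_cancel hk]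
  · intro S hS
    simp only [Finset.mem_coe, Finset.mem_filter] at hS
    exact Finset.sdiff_union_of_subset hS.2
  · intro T hT
    simp only [Finset.mem_coe, Finset.mem_powersetCard, Finset.subset_sdiff] at hT
    exact Finset.union_sdiff_cancel_right hT.1.2

lemma nat_id1 (N n₁ : ℕ) (hN : 1 ≤ N) (hn : 1 ≤ n₁) :
    N * (N - 1).choose (n₁ - 1) = N.choose n₁ * n₁ := by
  have := Nat.add_one_mul_choose_eq (N - 1) (n₁ - 1)
  rwa [Nat.sub_add_cancel hn, Nat.sub_add_cancel hN] at this

lemma sym2_forall_mem {V : Type*} (a b : V) (P : V → Prop) :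
    (∀ x ∈ s(a,b), P x) ↔ P a ∧ P b := by
  constructor
  · intro h; exact ⟨h a (by simp), h b (by simp)⟩
  · rintro ⟨h1, h2⟩ x hx
    rw [Sym2.mem_iff] at hx
    rcases hx with rfl | rfl <;> assumption

lemma edge_term {V : Type*} [Fintype V] [DecidableEq V] (S : Finset V) (a b : V) (hab : a ≠ b) :
    ((if (∀ x ∈ s(a,b), x ∈ S) then (1:ℝ) else 0) - (if (∀ x ∈ s(a,b), x ∉ S) then 1 else 0))
      = (∑ i, if i ∈ s(a,b) ∧ i ∈ S then (1:ℝ) else 0) - 1 := by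
  have h2 : (∑ i, if i ∈ s(a,b) ∧ i ∈ S then (1:ℝ) else 0)
      = (if a ∈ S then (1:ℝ) else 0) + (if b ∈ S then 1 else 0) := by
    have hfun : ∀ i : V, (if i ∈ s(a,b) ∧ i ∈ S then (1:ℝ) else 0)
        = (if i = a then (if i ∈ S then (1:ℝ) else 0) else 0)
          + (if i = b then (if i ∈ S then (1:ℝ) else 0) else 0) := by
      intro i
      by_cases hia : i = a
      · subst hia; simp [Sym2.mem_iff, hab]
      · by_cases hib : i = b
        · subst hib; simp [Sym2.mem_iff, hia]
        · simp [Sym2.mem_iff, hia, hib]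
    rw [Finset.sum_congr rfl fun i _ => hfun i, Finset.sum_add_distrib,
      Finset.sum_ite_eq' Finset.univ a, Finset.sum_ite_eq' Finset.univ b]
    simp
  rw [h2]
  simp only [sym2_forall_mem]
  by_cases ha : a ∈ S <;> by_cases hb : b ∈ S <;> simp [ha, hb] <;> norm_num

/-- Mean and variance of the extended difference edge-count
statistic `R_{d,(u)}` under the permutation null distribution. -/
theorem mean_variance_Rdu
    -- number of distinct values and multiplicities
    (K : ℕ) (hK : 1 ≤ K) (m : Fin K → ℕ) (hm : ∀ u, 1 ≤ m u)
    -- total sample size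
    (N : ℕ) (hN : N = ∑ u, m u) (hNge : 2 ≤ N)
    -- value map with prescribed fiber sizes
    (v : Fin N → Fin K)
    (hv : ∀ u, (Finset.univ.filter (fun i => v i = u)).card = m u)
    -- similarity graph on the distinct values
    (C₀ : SimpleGraph (Fin K))
    -- sizes of sample 1 and sample 2
    (n₁ n₂ : ℕ) (hn₁ : 1 ≤ n₁) (hn₁' : n₁ ≤ N - 1) (hn₂ : n₂ = N - n₁)
    -- expectation under the permutation null distribution (uniform over
    -- all `n₁`-element subsets of `Fin N`)
    (E : (Finset (Fin N) → ℝ) → ℝ)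
    (hE : ∀ f, E f =
      (∑ S ∈ Finset.powersetCard n₁ (Finset.univ : Finset (Fin N)), f S) / (N.choose n₁ : ℝ))
    -- the union graph Ḡ on the observations
    (Gbar : SimpleGraph (Fin N))
    (hGbar : ∀ i j, Gbar.Adj i j ↔ i ≠ j ∧ (v i = v j ∨ C₀.Adj (v i) (v j)))
    -- the union statistics: edge-counts within sample 1 and within sample 2
    (R1u : Finset (Fin N) → ℝ)
    (hR1u : ∀ S, R1u S =
      ((Gbar.edgeFinset.filter (fun e => ∀ x ∈ e, x ∈ S)).card : ℝ))
    (R2u : Finset (Fin N) → ℝ)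
    (hR2u : ∀ S, R2u S =
      ((Gbar.edgeFinset.filter (fun e => ∀ x ∈ e, x ∉ S)).card : ℝ))
    -- variance under the permutation null distribution
    (Var : (Finset (Fin N) → ℝ) → ℝ)
    (hVar : ∀ f, Var f = E (fun S => (f S - E f) ^ 2))
    -- the difference edge-count statistic
    (Rdu : Finset (Fin N) → ℝ)
    (hRdu : ∀ S, Rdu S = R1u S - R2u S)
    :
    E Rdu = (Gbar.edgeFinset.card : ℝ) * ((n₁ : ℝ) - (n₂ : ℝ)) / (N : ℝ) ∧
    Var Rdu = ((n₁ : ℝ) * (n₂ : ℝ) / ((N : ℝ) * ((N : ℝ) - 1))) *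
      ((∑ i, (Gbar.degree i : ℝ) ^ 2) - 4 * (Gbar.edgeFinset.card : ℝ) ^ 2 / (N : ℝ)) := by
  classical
  have hn₁N : n₁ < N := by omega
  have hn₁leN : n₁ ≤ N := le_of_lt hn₁N
  have hCpos : 0 < N.choose n₁ := Nat.choose_pos hn₁leN
  set P : Finset (Finset (Fin N)) := Finset.powersetCard n₁ (Finset.univ : Finset (Fin N))
    with hPdef
  set C : ℝ := (N.choose n₁ : ℝ) with hCdef
  have hC0 : C ≠ 0 := by
    simp only [hCdef]
    exact_mod_cast Nat.pos_iff_ne_zero.mp hCpos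
  have hN0 : (N:ℝ) ≠ 0 := by positivity
  have hN2 : (2:ℝ) ≤ (N:ℝ) := by exact_mod_cast hNge
  have hN1 : (N:ℝ) - 1 ≠ 0 := by linarith
  set a : Fin N → ℝ := fun i => (Gbar.degree i : ℝ) with hadef
  set c' : ℝ := (Gbar.edgeFinset.card : ℝ) with hc'def
  have hA1 : ∑ i, a i = 2 * c' := by
    have h := Gbar.sum_degrees_eq_twice_card_edges
    simp only [hadef, hc'def]
    exact_mod_cast congrArg (Nat.cast : ℕ → ℝ) h
  have hn₂cast : (n₂:ℝ) = (N:ℝ) - (n₁:ℝ) := by rw [hn₂, Nat.cast_sub hn₁leN]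
  -- Step A: Rdu is a linear statistic
  have hstepA : ∀ S : Finset (Fin N),
      Rdu S = (∑ i, a i * (if i ∈ S then (1:ℝ) else 0)) - c' := by
    intro S
    rw [hRdu S, hR1u S, hR2u S, ← Finset.sum_boole, ← Finset.sum_boole,
      ← Finset.sum_sub_distrib]
    have hterm : ∀ e ∈ Gbar.edgeFinset,
        ((if (∀ x ∈ e, x ∈ S) then (1:ℝ) else 0) - (if (∀ x ∈ e, x ∉ S) then 1 else 0))
          = (∑ i, if i ∈ e ∧ i ∈ S then (1:ℝ) else 0) - 1 := by
      intro e he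
      induction e using Sym2.ind with
      | _ x y =>
        rw [SimpleGraph.mem_edgeFinset, SimpleGraph.mem_edgeSet] at he
        convert edge_term S x y (Gbar.ne_of_adj he) using 2 <;>
          congr 1
    rw [Finset.sum_congr rfl hterm, Finset.sum_sub_distrib, Finset.sum_const, Finset.sum_comm]
    congr 1
    · apply Finset.sum_congr rfl
      intro i _
      by_cases hiS : i ∈ S
      · have hfil : (Gbar.edgeFinset.filter (fun e => i ∈ e)) = Gbar.incidenceFinset i :=
          (Gbar.incidenceFinset_eq_filter i).symm
        simp only [hiS, and_true, mul_ite, mul_one, mul_zero, if_true]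
        rw [Finset.sum_boole, hfil]
        simp [hadef]
      · simp [hiS]
    · simp [hc'def]
  -- counting lemma for single elements
  have hsumχ : ∀ i : Fin N,
      ∑ S ∈ P, (if i ∈ S then (1:ℝ) else 0) = (((N-1).choose (n₁-1) : ℕ) : ℝ) := by
    intro i
    rw [Finset.sum_boole]
    congr 1
    have heq : P.filter (fun S => i ∈ S) = P.filter (fun S => ({i} : Finset (Fin N)) ⊆ S) := by
      apply Finset.filter_congr; intro S _; simp
    rw [heq, hPdef, count_supersets Finset.univ {i} (Finset.subset_univ _) n₁ (by simpa using hn₁)]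
    simp
  set c1 : ℝ := (((N-1).choose (n₁-1) : ℕ) : ℝ) with hc1def
  have hc1 : (N:ℝ) * c1 = C * (n₁:ℝ) := by
    simp only [hc1def, hCdef]
    exact_mod_cast nat_id1 N n₁ (by omega) hn₁
  -- counting lemma for pairs
  have hpair : ∀ i j : Fin N, i ≠ j →
      ((P.filter fun S => i ∈ S ∧ j ∈ S).card : ℝ) * ((N:ℝ) * ((N:ℝ)-1))
        = C * ((n₁:ℝ) * ((n₁:ℝ)-1)) := by
    intro i j hij
    rcases Nat.lt_or_ge n₁ 2 with h2 | h2
    · have hn1 : n₁ = 1 := by omega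
      have hempty : P.filter (fun S => i ∈ S ∧ j ∈ S) = ∅ := by
        rw [Finset.filter_eq_empty_iff]
        intro S hS
        rw [hPdef, Finset.mem_powersetCard] at hS
        rintro ⟨hi, hj⟩
        have hsub : ({i, j} : Finset (Fin N)) ⊆ S := by
          intro x hx; simp at hx; rcases hx with rfl | rfl <;> assumption
        have hcard2 : ({i, j} : Finset (Fin N)).card = 2 := by
          rw [Finset.card_insert_of_notMem (by simp [hij]), Finset.card_singleton]
        have := Finset.card_le_card hsub
        rw [hcard2, hS.2, hn1] at this
        omega
      rw [hempty]
      simp [hn1]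
    · have hcard2 : ({i, j} : Finset (Fin N)).card = 2 := by
        rw [Finset.card_insert_of_notMem (by simp [hij]), Finset.card_singleton]
      have hcount : (P.filter fun S => i ∈ S ∧ j ∈ S).card = (N-2).choose (n₁-2) := by
        have heq : P.filter (fun S => i ∈ S ∧ j ∈ S)
            = P.filter (fun S => ({i, j} : Finset (Fin N)) ⊆ S) := by
          apply Finset.filter_congr; intro S _; simp [Finset.insert_subset_iff]
        rw [heq, hPdef,
          count_supersets Finset.univ {i, j} (Finset.subset_univ _) n₁ (by rw [hcard2]; omega)]
        simp [hcard2]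
      have e1 := nat_id1 N n₁ (by omega) hn₁
      have e2 := nat_id1 (N-1) (n₁-1) (by omega) (by omega)
      rw [show N-1-1 = N-2 by omega, show n₁-1-1 = n₁-2 by omega] at e2
      have hid : (N-2).choose (n₁-2) * (N * (N-1)) = N.choose n₁ * (n₁ * (n₁-1)) := by
        calc (N-2).choose (n₁-2) * (N * (N-1)) = N * ((N-1) * (N-2).choose (n₁-2)) := by ring
          _ = N * ((N-1).choose (n₁-1) * (n₁-1)) := by rw [e2]
          _ = (N * (N-1).choose (n₁-1)) * (n₁-1) := by ring
          _ = (N.choose n₁ * n₁) * (n₁-1) := by rw [e1]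
          _ = N.choose n₁ * (n₁ * (n₁-1)) := by ring
      have hidR := congrArg (Nat.cast : ℕ → ℝ) hid
      push_cast [Nat.cast_sub (show 1 ≤ N by omega), Nat.cast_sub hn₁] at hidR
      rw [hcount]
      push_cast [Nat.cast_sub (show 1 ≤ N by omega), Nat.cast_sub hn₁]
      rw [hCdef]
      linarith [hidR]
  set Q : ℝ := C * ((n₁:ℝ) * ((n₁:ℝ)-1)) / ((N:ℝ) * ((N:ℝ)-1)) with hQdef
  have hQ : ∀ i j : Fin N, i ≠ j →
      ((P.filter fun S => i ∈ S ∧ j ∈ S).card : ℝ) = Q := by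
    intro i j hij
    rw [hQdef, eq_div_iff (mul_ne_zero hN0 hN1)]
    exact hpair i j hij
  have hsumχχ : ∀ i j : Fin N,
      ∑ S ∈ P, ((if i ∈ S then (1:ℝ) else 0) * (if j ∈ S then 1 else 0))
        = if i = j then c1 else Q := by
    intro i j
    have hprod : ∀ S : Finset (Fin N),
        (if i ∈ S then (1:ℝ) else 0) * (if j ∈ S then 1 else 0)
          = if i ∈ S ∧ j ∈ S then 1 else 0 := by
      intro S; by_cases h1 : i ∈ S <;> by_cases h2 : j ∈ S <;> simp [h1, h2]
    rw [Finset.sum_congr rfl fun S _ => hprod S]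
    by_cases hij : i = j
    · subst hij
      rw [if_pos rfl]
      simpa [and_self] using hsumχ i
    · rw [if_neg hij, Finset.sum_boole]
      exact hQ i j hij
  have hcardP : (P.card : ℝ) = C := by
    simp [hPdef, hCdef, Finset.card_powersetCard]
  -- first moment of the linear part
  have hT1 : ∑ S ∈ P, (∑ i, a i * (if i ∈ S then (1:ℝ) else 0)) = c1 * (2 * c') := by
    calc ∑ S ∈ P, ∑ i, a i * (if i ∈ S then (1:ℝ) else 0)
        = ∑ i, ∑ S ∈ P, a i * (if i ∈ S then (1:ℝ) else 0) := Finset.sum_comm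
      _ = ∑ i, a i * c1 := by
          refine Finset.sum_congr rfl fun i _ => ?_
          rw [← Finset.mul_sum, hsumχ i]
      _ = c1 * (2 * c') := by rw [← Finset.sum_mul, hA1]; ring
  -- second moment of the linear part
  have hT2 : ∑ S ∈ P, (∑ i, a i * (if i ∈ S then (1:ℝ) else 0))^2
      = Q * (2*c')^2 + (c1 - Q) * (∑ i, (a i)^2) := by
    have hsq : ∀ S : Finset (Fin N), (∑ i, a i * (if i ∈ S then (1:ℝ) else 0))^2
        = ∑ i, ∑ j, (a i * a j) *
            ((if i ∈ S then (1:ℝ) else 0) * (if j ∈ S then 1 else 0)) := by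
      intro S
      rw [sq, Finset.sum_mul_sum]
      exact Finset.sum_congr rfl fun i _ => Finset.sum_congr rfl fun j _ => by ring
    rw [Finset.sum_congr rfl fun S _ => hsq S, Finset.sum_comm]
    have hswap : ∀ i : Fin N,
        ∑ S ∈ P, ∑ j, (a i * a j) *
            ((if i ∈ S then (1:ℝ) else 0) * (if j ∈ S then 1 else 0))
          = ∑ j, (a i * a j) * (if i = j then c1 else Q) := by
      intro i
      rw [Finset.sum_comm]
      refine Finset.sum_congr rfl fun j _ => ?_
      rw [← Finset.mul_sum, hsumχχ i j]
    rw [Finset.sum_congr rfl fun i _ => hswap i]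
    have hsplit : ∀ i j : Fin N, (a i * a j) * (if i = j then c1 else Q)
        = (a i * a j) * Q + (if i = j then (a i * a j) * (c1 - Q) else 0) := by
      intro i j; by_cases h : i = j <;> simp [h] <;> ring
    rw [Finset.sum_congr rfl fun i _ => Finset.sum_congr rfl fun j _ => hsplit i j]
    have hsum_add : ∀ i : Fin N,
        ∑ j, ((a i * a j) * Q + (if i = j then (a i * a j) * (c1 - Q) else 0))
          = (∑ j, (a i * a j) * Q) + (a i * a i) * (c1 - Q) := by
      intro i
      rw [Finset.sum_add_distrib]
      congr 1
      rw [Finset.sum_ite_eq Finset.univ i (fun j => (a i * a j) * (c1 - Q))]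
      simp
    rw [Finset.sum_congr rfl fun i _ => hsum_add i, Finset.sum_add_distrib]
    have h1 : ∑ i, ∑ j, (a i * a j) * Q = Q * (2*c')^2 := by
      calc ∑ i, ∑ j, (a i * a j) * Q
          = ∑ i, ((a i * (∑ j, a j)) * Q) := by
            refine Finset.sum_congr rfl fun i _ => ?_
            rw [← Finset.sum_mul, ← Finset.mul_sum]
        _ = ((∑ i, a i) * (∑ j, a j)) * Q := by rw [← Finset.sum_mul, ← Finset.sum_mul]
        _ = Q * (2*c')^2 := by rw [hA1]; ring
    have h2 : ∑ i, (a i * a i) * (c1 - Q) = (c1 - Q) * (∑ i, (a i)^2) := by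
      rw [Finset.mul_sum]
      exact Finset.sum_congr rfl fun i _ => by ring
    rw [h1, h2]
  -- Part 1 : the mean
  have part1 : E Rdu = c' * ((n₁:ℝ) - (n₂:ℝ)) / (N:ℝ) := by
    rw [hE Rdu]
    rw [Finset.sum_congr rfl fun S _ => hstepA S, Finset.sum_sub_distrib, hT1,
      Finset.sum_const, nsmul_eq_mul, hcardP, hn₂cast]
    field_simp
    linear_combination (2*c') * hc1
  refine ⟨by rw [part1, hn₂cast], ?_⟩
  -- Part 2 : the variance
  have hd : c' + E Rdu = 2 * c' * (n₁:ℝ) / (N:ℝ) := by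
    rw [part1, hn₂cast]
    field_simp
    ring
  have hVR : Var Rdu = (∑ S ∈ P, (Rdu S - E Rdu)^2) / C := by
    rw [hVar Rdu, hE]
  have hdecomp : ∀ S ∈ P, (Rdu S - E Rdu)^2
      = (∑ i, a i * (if i ∈ S then (1:ℝ) else 0))^2
        - 2*(c' + E Rdu)*(∑ i, a i * (if i ∈ S then (1:ℝ) else 0)) + (c' + E Rdu)^2 := by
    intro S _
    rw [hstepA S]
    ring
  have hc1' : c1 = C * (n₁:ℝ) / (N:ℝ) := by
    rw [eq_div_iff hN0]
    linarith [hc1]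
  have hSq : (∑ i, ((Gbar.degree i : ℕ) : ℝ)^2) = ∑ i, (a i)^2 := by
    simp [hadef]
  rw [hVR, Finset.sum_congr rfl hdecomp, Finset.sum_add_distrib, Finset.sum_sub_distrib,
    hT2, ← Finset.mul_sum, hT1, Finset.sum_const, nsmul_eq_mul, hcardP, hd, hSq, hc1',
    hQdef, hn₂cast]
  field_simp
  ring
end
end

section
/- Assume N ≥ 4. Under the permutation null distribution, Cov(R_{w,(u)}, R_{d,(u)}) = 0, where R_{w,(u)} = ((n₂−1)R_{1,(u)} + (n₁−1)R_{2,(u)})/(N−2) and R_{d,(u)} = R_{1,(u)} − R_{2,(u)}. (This orthogonality is the key fact behind the decomposition S_{(u)} = Z_{w,(u)}² + Z_{d,(u)}² in Lemma 3 of the paper.) -/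
open Finset MeasureTheory
open scoped BigOperators Classical


lemma aux_count (N n : ℕ) (T₁ T₂ : Finset (Fin N)) (hd : Disjoint T₁ T₂) (h1 : T₁.card ≤ n) :
    ((Finset.powersetCard n (Finset.univ : Finset (Fin N))).filter
      (fun S => T₁ ⊆ S ∧ Disjoint T₂ S)).card
      = (N - T₁.card - T₂.card).choose (n - T₁.card) := by
  have hkey : ((Finset.powersetCard n (Finset.univ : Finset (Fin N))).filter
      (fun S => T₁ ⊆ S ∧ Disjoint T₂ S)).card
      = (Finset.powersetCard (n - T₁.card) ((Finset.univ \ T₁) \ T₂)).card := by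
    apply Finset.card_bij' (fun S _ => S \ T₁) (fun A _ => A ∪ T₁)
    · intro S hS
      simp only [Finset.mem_filter, Finset.mem_powersetCard] at hS
      obtain ⟨⟨-, hcard⟩, hT1, hT2⟩ := hS
      rw [Finset.mem_powersetCard]
      constructor
      · intro x hx
        simp only [Finset.mem_sdiff, Finset.mem_univ, true_and] at hx ⊢
        exact ⟨fun h => hx.2 h, fun h => Finset.disjoint_left.mp hT2 h hx.1⟩
      · rw [Finset.card_sdiff_of_subset hT1, hcard]
    · intro A hA
      rw [Finset.mem_powersetCard] at hA
      obtain ⟨hsub, hcard⟩ := hA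
      have hdisj : Disjoint A T₁ := by
        refine Finset.disjoint_left.mpr fun x hx hx1 => ?_
        have := hsub hx
        simp [Finset.mem_sdiff] at this
        exact this.1 hx1
      simp only [Finset.mem_filter, Finset.mem_powersetCard]
      refine ⟨⟨Finset.subset_univ _, ?_⟩, Finset.subset_union_right, ?_⟩
      · rw [Finset.card_union_of_disjoint hdisj, hcard]
        omega
      · refine Finset.disjoint_right.mpr fun x hx => ?_
        simp only [Finset.mem_union] at hx
        rcases hx with hx | hx
        · have := hsub hx
          simp only [Finset.mem_sdiff] at this
          exact this.2
        · exact fun h2 => Finset.disjoint_left.mp hd hx h2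
    · intro S hS
      simp only [Finset.mem_filter, Finset.mem_powersetCard] at hS
      exact Finset.sdiff_union_of_subset hS.2.1
    · intro A hA
      rw [Finset.mem_powersetCard] at hA
      have hdisj : Disjoint A T₁ := by
        refine Finset.disjoint_left.mpr fun x hx hx1 => ?_
        have := hA.1 hx
        simp [Finset.mem_sdiff] at this
        exact this.1 hx1
      rw [Finset.union_sdiff_right, Finset.sdiff_eq_self_of_disjoint hdisj]
  rw [hkey, Finset.card_powersetCard]
  congr 1
  rw [Finset.card_sdiff_of_subset, Finset.card_sdiff_of_subset (Finset.subset_univ _), Finset.card_univ,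
    Fintype.card_fin]
  intro x hx
  simp only [Finset.mem_sdiff, Finset.mem_univ, true_and]
  exact fun h1x => Finset.disjoint_left.mp hd h1x hx

lemma aux_count_zero (N n : ℕ) (T₁ T₂ : Finset (Fin N)) (h : n < T₁.card) :
    ((Finset.powersetCard n (Finset.univ : Finset (Fin N))).filter
      (fun S => T₁ ⊆ S ∧ Disjoint T₂ S)).card = 0 := by
  rw [Finset.card_eq_zero, Finset.filter_eq_empty_iff]
  rintro S hS ⟨h1, -⟩
  rw [Finset.mem_powersetCard] at hS
  have := Finset.card_le_card h1
  omega

lemma cast_add_choose (x y : ℕ) :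
    (((x + y).choose x : ℕ) : ℝ) = (Nat.factorial (x + y) : ℝ) / ((Nat.factorial x : ℝ) * (Nat.factorial y : ℝ)) := by
  rw [eq_div_iff (by positivity)]
  rw [show (x+y).choose x = (x+y).choose y by rw [Nat.choose_symm_add]]
  push_cast [← Nat.add_choose_mul_factorial_mul_factorial x y]
  ring

private def F (t : ℕ) : ℝ := (Nat.factorial t : ℝ)

private lemma Fpos (t : ℕ) : 0 < F t := by
  have := Nat.factorial_pos t
  simp only [F]
  positivity

private lemma hfact (t : ℕ) : F (t + 1) = ((t : ℝ) + 1) * F t := by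
  simp only [F, Nat.factorial_succ]
  push_cast
  ring

private lemma cast_add_choose' (x y : ℕ) :
    (((x + y).choose x : ℕ) : ℝ) = F (x + y) / (F x * F y) := cast_add_choose x y

set_option maxHeartbeats 2000000 in
lemma main_identity (n₁ n₂ N : ℕ) (h1 : 1 ≤ n₁) (h2 : 1 ≤ n₂) (hN : N = n₁ + n₂)
    (C cX cA cB cAX cBX : ℝ)
    (hC : C = (N.choose n₁ : ℕ))
    (hX : cX = ((N-1).choose (n₁-1) : ℕ))
    (hA : cA = if 2 ≤ n₁ then (((N-2).choose (n₁-2) : ℕ) : ℝ) else 0)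
    (hB : cB = ((N-2).choose n₁ : ℕ))
    (hAX : cAX = if 3 ≤ n₁ then (((N-3).choose (n₁-3) : ℕ) : ℝ) else 0)
    (hBX : cBX = ((N-3).choose (n₁-1) : ℕ)) :
    ((n₂:ℝ)-1) * (C * cA - cA * cX) + ((n₁:ℝ)-1) * (0 - cB * cX) = 0 ∧
    ((n₂:ℝ)-1) * (C * cAX - cA * cX) + ((n₁:ℝ)-1) * (C * cBX - cB * cX) = 0 := by
  rcases Nat.lt_or_ge n₁ 2 with hn1 | hn1
  · have : n₁ = 1 := by omega
    subst this
    rw [if_neg (by omega)] at hA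
    rw [if_neg (by omega)] at hAX
    subst hA hAX
    norm_num
  rcases Nat.lt_or_ge n₂ 2 with hn2 | hn2
  · have hn2' : n₂ = 1 := by omega
    subst hn2'
    have hBz : cB = 0 := by
      rw [hB, Nat.choose_eq_zero_of_lt (by omega)]; norm_num
    have hBXz : cBX = 0 := by
      rw [hBX, Nat.choose_eq_zero_of_lt (by omega)]; norm_num
    subst hBz hBXz
    norm_num
  obtain ⟨b, rfl⟩ : ∃ b, n₂ = b + 2 := ⟨n₂ - 2, by omega⟩
  rw [if_pos (by omega)] at hA
  rcases Nat.lt_or_ge n₁ 3 with hn13 | hn13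
  · have hn1' : n₁ = 2 := by omega
    subst hn1'
    have hNv : N = b + 4 := by omega
    subst hNv
    rw [if_neg (by omega)] at hAX
    have eC : C = F ((2) + (b+2)) / (F (2) * F (b+2)) := by
      rw [hC, show (b+4).choose (2) = ((2)+(b+2)).choose (2) by
        rw [show (b+4) = (2)+(b+2) by omega, show ((2):ℕ) = (2) by omega]]
      exact cast_add_choose' (2) (b+2)
    have ecX : cX = F ((1) + (b+2)) / (F (1) * F (b+2)) := by
      rw [hX, show (b+4-1).choose (2-1) = ((1)+(b+2)).choose (1) by
        rw [show (b+4-1) = (1)+(b+2) by omega, show ((2-1):ℕ) = (1) by omega]]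
      exact cast_add_choose' (1) (b+2)
    have ecA : cA = F ((0) + (b+2)) / (F (0) * F (b+2)) := by
      rw [hA, show (b+4-2).choose (2-2) = ((0)+(b+2)).choose (0) by
        rw [show (b+4-2) = (0)+(b+2) by omega, show ((2-2):ℕ) = (0) by omega]]
      exact cast_add_choose' (0) (b+2)
    have ecB : cB = F ((2) + (b)) / (F (2) * F (b)) := by
      rw [hB, show (b+4-2).choose (2) = ((2)+(b)).choose (2) by
        rw [show (b+4-2) = (2)+(b) by omega, show ((2):ℕ) = (2) by omega]]
      exact cast_add_choose' (2) (b)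
    have ecBX : cBX = F ((1) + (b)) / (F (1) * F (b)) := by
      rw [hBX, show (b+4-3).choose (2-1) = ((1)+(b)).choose (1) by
        rw [show (b+4-3) = (1)+(b) by omega, show ((2-1):ℕ) = (1) by omega]]
      exact cast_add_choose' (1) (b)
    subst eC ecX ecA ecB ecBX hAX
    have f1 : F ((2) + (b+2)) = ((b:ℝ)+4) * (((b:ℝ)+3) * F (b+2)) := by
      rw [show (2)+(b+2) = (b+3)+1 by omega, hfact, show b+3 = (b+2)+1 by omega, hfact]
      push_cast; ring
    have f2 : F ((1) + (b+2)) = ((b:ℝ)+3) * F (b+2) := by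
      rw [show (1)+(b+2) = (b+2)+1 by omega, hfact]; push_cast; ring
    have f3 : F ((0) + (b+2)) = F (b+2) := by rw [show (0)+(b+2) = b+2 by omega]
    have f4 : F ((2) + (b)) = ((b:ℝ)+2) * (((b:ℝ)+1) * F b) := by
      rw [show (2)+(b) = (b+1)+1 by omega, hfact, hfact]; push_cast; ring
    have f5 : F ((1) + (b)) = ((b:ℝ)+1) * F b := by
      rw [show (1)+(b) = b+1 by omega, hfact]
    have f6 : F (b+2) = ((b:ℝ)+2) * (((b:ℝ)+1) * F b) := by
      rw [show b+2 = (b+1)+1 by omega, hfact, hfact]; push_cast; ring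
    have f7 : F (2) = 2 := by norm_num [F]
    have f8 : F (1) = 1 := by norm_num [F]
    have f9 : F (0) = 1 := by norm_num [F]
    rw [f1, f2, f3, f4, f5, f6, f7, f8, f9]
    have hFb : F b ≠ 0 := ne_of_gt (Fpos b)
    constructor <;> (field_simp; push_cast; ring)
  · obtain ⟨a, rfl⟩ : ∃ a, n₁ = a + 3 := ⟨n₁ - 3, by omega⟩
    have hNv : N = a + b + 5 := by omega
    subst hNv
    rw [if_pos (by omega)] at hAX
    have eC : C = F ((a+3) + (b+2)) / (F (a+3) * F (b+2)) := by
      rw [hC, show (a+b+5).choose (a+3) = ((a+3)+(b+2)).choose (a+3) by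
        rw [show (a+b+5) = (a+3)+(b+2) by omega, show ((a+3):ℕ) = (a+3) by omega]]
      exact cast_add_choose' (a+3) (b+2)
    have ecX : cX = F ((a+2) + (b+2)) / (F (a+2) * F (b+2)) := by
      rw [hX, show (a+b+5-1).choose (a+3-1) = ((a+2)+(b+2)).choose (a+2) by
        rw [show (a+b+5-1) = (a+2)+(b+2) by omega, show ((a+3-1):ℕ) = (a+2) by omega]]
      exact cast_add_choose' (a+2) (b+2)
    have ecA : cA = F ((a+1) + (b+2)) / (F (a+1) * F (b+2)) := by
      rw [hA, show (a+b+5-2).choose (a+3-2) = ((a+1)+(b+2)).choose (a+1) by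
        rw [show (a+b+5-2) = (a+1)+(b+2) by omega, show ((a+3-2):ℕ) = (a+1) by omega]]
      exact cast_add_choose' (a+1) (b+2)
    have ecB : cB = F ((a+3) + (b)) / (F (a+3) * F (b)) := by
      rw [hB, show (a+b+5-2).choose (a+3) = ((a+3)+(b)).choose (a+3) by
        rw [show (a+b+5-2) = (a+3)+(b) by omega, show ((a+3):ℕ) = (a+3) by omega]]
      exact cast_add_choose' (a+3) (b)
    have ecAX : cAX = F ((a) + (b+2)) / (F (a) * F (b+2)) := by
      rw [hAX, show (a+b+5-3).choose (a+3-3) = ((a)+(b+2)).choose (a) by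
        rw [show (a+b+5-3) = (a)+(b+2) by omega, show ((a+3-3):ℕ) = (a) by omega]]
      exact cast_add_choose' (a) (b+2)
    have ecBX : cBX = F ((a+2) + (b)) / (F (a+2) * F (b)) := by
      rw [hBX, show (a+b+5-3).choose (a+3-1) = ((a+2)+(b)).choose (a+2) by
        rw [show (a+b+5-3) = (a+2)+(b) by omega, show ((a+3-1):ℕ) = (a+2) by omega]]
      exact cast_add_choose' (a+2) (b)
    subst eC ecX ecA ecB ecAX ecBX
    clear hC hX hA hB hAX hBX hN
    have g1 : F ((a+3)+(b+2)) = ((a:ℝ)+(b:ℝ)+5)*(((a:ℝ)+(b:ℝ)+4)*(((a:ℝ)+(b:ℝ)+3)* F (a+b+2))) := by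
      rw [show (a+3)+(b+2) = (a+b+4)+1 by omega, hfact,
          show a+b+4 = (a+b+3)+1 by omega, hfact,
          show a+b+3 = (a+b+2)+1 by omega, hfact]
      push_cast; ring
    have g2 : F ((a+2)+(b+2)) = ((a:ℝ)+(b:ℝ)+4)*(((a:ℝ)+(b:ℝ)+3)* F (a+b+2)) := by
      rw [show (a+2)+(b+2) = (a+b+3)+1 by omega, hfact,
          show a+b+3 = (a+b+2)+1 by omega, hfact]
      push_cast; ring
    have g3 : F ((a+1)+(b+2)) = ((a:ℝ)+(b:ℝ)+3)* F (a+b+2) := by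
      rw [show (a+1)+(b+2) = (a+b+2)+1 by omega, hfact]
      push_cast; ring
    have g4 : F ((a+3)+b) = ((a:ℝ)+(b:ℝ)+3)* F (a+b+2) := by
      rw [show (a+3)+b = (a+b+2)+1 by omega, hfact]; push_cast; ring
    have g5 : F (a+(b+2)) = F (a+b+2) := by rw [show a+(b+2) = a+b+2 by omega]
    have g6 : F ((a+2)+b) = F (a+b+2) := by rw [show (a+2)+b = a+b+2 by omega]
    have g7 : F (a+3) = ((a:ℝ)+3)*(((a:ℝ)+2)*(((a:ℝ)+1)* F a)) := by
      rw [show a+3 = (a+2)+1 by omega, hfact, show a+2 = (a+1)+1 by omega, hfact, hfact]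
      push_cast; ring
    have g8 : F (a+2) = ((a:ℝ)+2)*(((a:ℝ)+1)* F a) := by
      rw [show a+2 = (a+1)+1 by omega, hfact, hfact]; push_cast; ring
    have g9 : F (a+1) = ((a:ℝ)+1)* F a := by rw [hfact]
    have g10 : F (b+2) = ((b:ℝ)+2)*(((b:ℝ)+1)* F b) := by
      rw [show b+2 = (b+1)+1 by omega, hfact, hfact]; push_cast; ring
    rw [g1, g2, g3, g4, g5, g6, g7, g8, g9, g10]
    have hFa : F a ≠ 0 := ne_of_gt (Fpos a)
    have hFb : F b ≠ 0 := ne_of_gt (Fpos b)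
    have hFab : F (a+b+2) ≠ 0 := ne_of_gt (Fpos (a+b+2))
    constructor <;> (field_simp; push_cast; ring)

private lemma mul_ind (p q : Prop) [Decidable p] [Decidable q] : (if p then (1:ℝ) else 0) * (if q then (1:ℝ) else 0)
    = if p ∧ q then (1:ℝ) else 0 := by
  by_cases hp : p <;> by_cases hq : q <;> simp [hp, hq]

set_option maxHeartbeats 1000000 in
lemma cov_indicator (N n₁ n₂ : ℕ) (h1 : 1 ≤ n₁) (h2 : 1 ≤ n₂) (hN : N = n₁ + n₂)
    (G : SimpleGraph (Fin N)) (k : Fin N) :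
    (∑ S ∈ Finset.powersetCard n₁ (Finset.univ : Finset (Fin N)),
        (((n₂:ℝ)-1) * ((G.edgeFinset.filter (fun e => ∀ x ∈ e, x ∈ S)).card : ℝ)
         + ((n₁:ℝ)-1) * ((G.edgeFinset.filter (fun e => ∀ x ∈ e, x ∉ S)).card : ℝ))
        * (if k ∈ S then (1:ℝ) else 0)) * ((N.choose n₁ : ℕ) : ℝ)
    = (∑ S ∈ Finset.powersetCard n₁ (Finset.univ : Finset (Fin N)),
        (((n₂:ℝ)-1) * ((G.edgeFinset.filter (fun e => ∀ x ∈ e, x ∈ S)).card : ℝ)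
         + ((n₁:ℝ)-1) * ((G.edgeFinset.filter (fun e => ∀ x ∈ e, x ∉ S)).card : ℝ)))
      * (∑ S ∈ Finset.powersetCard n₁ (Finset.univ : Finset (Fin N)),
          (if k ∈ S then (1:ℝ) else 0)) := by
  set P := Finset.powersetCard n₁ (Finset.univ : Finset (Fin N)) with hP
  set EF := G.edgeFinset with hEF
  -- counts as indicator sums over edges
  have hcIn : ∀ S : Finset (Fin N), ((EF.filter (fun e => ∀ x ∈ e, x ∈ S)).card : ℝ)
      = ∑ e ∈ EF, (if (∀ x ∈ e, x ∈ S) then (1:ℝ) else 0) := fun S => (Finset.sum_boole _ _).symm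
  have hcOut : ∀ S : Finset (Fin N), ((EF.filter (fun e => ∀ x ∈ e, x ∉ S)).card : ℝ)
      = ∑ e ∈ EF, (if (∀ x ∈ e, x ∉ S) then (1:ℝ) else 0) := fun S => (Finset.sum_boole _ _).symm
  -- the indicator sum over subsets
  have hXk : (∑ S ∈ P, (if k ∈ S then (1:ℝ) else 0)) = (((N-1).choose (n₁-1) : ℕ) : ℝ) := by
    rw [Finset.sum_boole]
    have := aux_count N n₁ {k} ∅ (Finset.disjoint_empty_right _) (by simpa using h1)
    rw [Finset.filter_congr (fun S _ => by simp : ∀ S ∈ P, (k ∈ S) ↔ (({k} : Finset (Fin N)) ⊆ S ∧ Disjoint (∅ : Finset (Fin N)) S))]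
    rw [this]
    norm_num
  -- swap sums
  have swap : ∀ f : Sym2 (Fin N) → Finset (Fin N) → ℝ,
      ∑ S ∈ P, (∑ e ∈ EF, f e S) * (if k ∈ S then (1:ℝ) else 0)
        = ∑ e ∈ EF, ∑ S ∈ P, f e S * (if k ∈ S then (1:ℝ) else 0) := by
    intro f
    rw [Finset.sum_comm]
    exact Finset.sum_congr rfl fun S _ => Finset.sum_mul _ _ _
  -- per-edge identity
  have per_edge : ∀ e ∈ EF,
      (((n₂:ℝ)-1) * (∑ S ∈ P, (if (∀ x ∈ e, x ∈ S) then (1:ℝ) else 0) * (if k ∈ S then (1:ℝ) else 0))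
       + ((n₁:ℝ)-1) * (∑ S ∈ P, (if (∀ x ∈ e, x ∉ S) then (1:ℝ) else 0) * (if k ∈ S then (1:ℝ) else 0)))
        * ((N.choose n₁ : ℕ) : ℝ)
      = (((n₂:ℝ)-1) * (∑ S ∈ P, (if (∀ x ∈ e, x ∈ S) then (1:ℝ) else 0))
         + ((n₁:ℝ)-1) * (∑ S ∈ P, (if (∀ x ∈ e, x ∉ S) then (1:ℝ) else 0)))
        * (∑ S ∈ P, (if k ∈ S then (1:ℝ) else 0)) := by
    intro e he
    revert he
    induction e using Sym2.ind with
    | _ i j =>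
    intro he
    have hadj : G.Adj i j := by rwa [hEF, SimpleGraph.mem_edgeFinset, SimpleGraph.mem_edgeSet] at he
    have hij : i ≠ j := hadj.ne
    -- value of sA
    have sA : (∑ S ∈ P, (if (∀ x ∈ (s(i,j) : Sym2 (Fin N)), x ∈ S) then (1:ℝ) else 0))
        = (if 2 ≤ n₁ then (((N-2).choose (n₁-2) : ℕ) : ℝ) else 0) := by
      rw [Finset.sum_boole]
      have hpredA : ∀ S : Finset (Fin N), (∀ x ∈ (s(i,j) : Sym2 (Fin N)), x ∈ S) ↔
          (({i,j} : Finset (Fin N)) ⊆ S ∧ Disjoint (∅ : Finset (Fin N)) S) := by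
        intro S; simp [Sym2.mem_iff, Finset.insert_subset_iff]
      rw [Finset.filter_congr (fun S _ => hpredA S)]
      by_cases h2n : 2 ≤ n₁
      · rw [if_pos h2n, aux_count N n₁ {i,j} ∅ (Finset.disjoint_empty_right _)
          (by rw [Finset.card_pair hij]; exact h2n)]
        rw [Finset.card_pair hij]
        try norm_num
      · rw [if_neg h2n, aux_count_zero N n₁ {i,j} ∅ (by rw [Finset.card_pair hij]; omega)]
        try norm_num
    have sB : (∑ S ∈ P, (if (∀ x ∈ (s(i,j) : Sym2 (Fin N)), x ∉ S) then (1:ℝ) else 0))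
        = (((N-2).choose n₁ : ℕ) : ℝ) := by
      rw [Finset.sum_boole]
      have hpredB : ∀ S : Finset (Fin N), (∀ x ∈ (s(i,j) : Sym2 (Fin N)), x ∉ S) ↔
          ((∅ : Finset (Fin N)) ⊆ S ∧ Disjoint ({i,j} : Finset (Fin N)) S) := by
        intro S
        constructor
        · intro h
          refine ⟨Finset.empty_subset S, Finset.disjoint_left.mpr ?_⟩
          intro x hx
          have hx' : x ∈ (s(i,j) : Sym2 (Fin N)) := by
            simp only [Finset.mem_insert, Finset.mem_singleton] at hx
            simp [Sym2.mem_iff, hx]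
          exact h x hx'
        · rintro ⟨-, hd⟩ x hx
          have hx' : x ∈ ({i,j} : Finset (Fin N)) := by
            simp only [Sym2.mem_iff] at hx
            simp [hx]
          exact Finset.disjoint_left.mp hd hx'
      rw [Finset.filter_congr (fun S _ => hpredB S)]
      rw [aux_count N n₁ ∅ {i,j} (Finset.disjoint_empty_left _) (by simp)]
      rw [Finset.card_pair hij]
      try norm_num
    simp only [mul_ind]
    by_cases hke : k = i ∨ k = j
    · -- k is an endpoint
      have sAX : (∑ S ∈ P, (if (∀ x ∈ (s(i,j) : Sym2 (Fin N)), x ∈ S) ∧ k ∈ S then (1:ℝ) else 0))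
          = (∑ S ∈ P, (if (∀ x ∈ (s(i,j) : Sym2 (Fin N)), x ∈ S) then (1:ℝ) else 0)) := by
        apply Finset.sum_congr rfl
        intro S _
        congr 1
        have : k ∈ (s(i,j) : Sym2 (Fin N)) := by
          rcases hke with h | h <;> subst h <;> simp
        simp only [eq_iff_iff]
        exact ⟨fun h => h.1, fun h => ⟨h, h k this⟩⟩
      have sBX : (∑ S ∈ P, (if (∀ x ∈ (s(i,j) : Sym2 (Fin N)), x ∉ S) ∧ k ∈ S then (1:ℝ) else 0))
          = 0 := by
        apply Finset.sum_eq_zero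
        intro S _
        rw [if_neg]
        rintro ⟨hall, hkS⟩
        have : k ∈ (s(i,j) : Sym2 (Fin N)) := by
          rcases hke with h | h <;> subst h <;> simp
        exact hall k this hkS
      rw [sAX, sBX, sA, sB, hXk]
      have := (main_identity n₁ n₂ N h1 h2 hN
        (((N.choose n₁ : ℕ)):ℝ) (((N-1).choose (n₁-1) : ℕ) : ℝ)
        (if 2 ≤ n₁ then (((N-2).choose (n₁-2) : ℕ) : ℝ) else 0)
        (((N-2).choose n₁ : ℕ) : ℝ)
        (if 3 ≤ n₁ then (((N-3).choose (n₁-3) : ℕ) : ℝ) else 0)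
        (((N-3).choose (n₁-1) : ℕ) : ℝ)
        rfl rfl rfl rfl rfl rfl).1
      linear_combination this
    · -- k is not an endpoint
      push_neg at hke
      obtain ⟨hki, hkj⟩ := hke
      have sAX : (∑ S ∈ P, (if (∀ x ∈ (s(i,j) : Sym2 (Fin N)), x ∈ S) ∧ k ∈ S then (1:ℝ) else 0))
          = (if 3 ≤ n₁ then (((N-3).choose (n₁-3) : ℕ) : ℝ) else 0) := by
        rw [Finset.sum_boole]
        have hpredAX : ∀ S : Finset (Fin N), ((∀ x ∈ (s(i,j) : Sym2 (Fin N)), x ∈ S) ∧ k ∈ S) ↔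
            (({i,j,k} : Finset (Fin N)) ⊆ S ∧ Disjoint (∅ : Finset (Fin N)) S) := by
          intro S; simp [Sym2.mem_iff, Finset.insert_subset_iff]; tauto
        rw [Finset.filter_congr (fun S _ => hpredAX S)]
        have hik : i ≠ k := Ne.symm hki
        have hjk : j ≠ k := Ne.symm hkj
        have hcard3 : ({i,j,k} : Finset (Fin N)).card = 3 := by
          rw [Finset.card_insert_of_notMem (by simp [hij, hik]),
              Finset.card_insert_of_notMem (by simp [hjk]),
              Finset.card_singleton]
        by_cases h3n : 3 ≤ n₁
        · rw [if_pos h3n, aux_count N n₁ {i,j,k} ∅ (Finset.disjoint_empty_right _)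
            (by rw [hcard3]; exact h3n)]
          rw [hcard3]
          try norm_num
        · rw [if_neg h3n, aux_count_zero N n₁ {i,j,k} ∅ (by rw [hcard3]; omega)]
          try norm_num
      have sBX : (∑ S ∈ P, (if (∀ x ∈ (s(i,j) : Sym2 (Fin N)), x ∉ S) ∧ k ∈ S then (1:ℝ) else 0))
          = (((N-3).choose (n₁-1) : ℕ) : ℝ) := by
        rw [Finset.sum_boole]
        have hpredBX : ∀ S : Finset (Fin N), ((∀ x ∈ (s(i,j) : Sym2 (Fin N)), x ∉ S) ∧ k ∈ S) ↔
            (({k} : Finset (Fin N)) ⊆ S ∧ Disjoint ({i,j} : Finset (Fin N)) S) := by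
          intro S
          simp [Sym2.mem_iff, Finset.insert_subset_iff, Finset.disjoint_left]
          tauto
        rw [Finset.filter_congr (fun S _ => hpredBX S)]
        rw [aux_count N n₁ {k} {i,j} (by simp [Ne.symm hki, Ne.symm hkj, hki, hkj]) (by simpa using h1)]
        rw [Finset.card_pair hij, Finset.card_singleton]
        rw [show N - 1 - 2 = N - 3 by omega]
      rw [sAX, sBX, sA, sB, hXk]
      have := (main_identity n₁ n₂ N h1 h2 hN
        (((N.choose n₁ : ℕ)):ℝ) (((N-1).choose (n₁-1) : ℕ) : ℝ)
        (if 2 ≤ n₁ then (((N-2).choose (n₁-2) : ℕ) : ℝ) else 0)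
        (((N-2).choose n₁ : ℕ) : ℝ)
        (if 3 ≤ n₁ then (((N-3).choose (n₁-3) : ℕ) : ℝ) else 0)
        (((N-3).choose (n₁-1) : ℕ) : ℝ)
        rfl rfl rfl rfl rfl rfl).2
      linear_combination this
  -- assemble
  have hα : ∀ S : Finset (Fin N),
      (((n₂:ℝ)-1) * ((EF.filter (fun e => ∀ x ∈ e, x ∈ S)).card : ℝ)
       + ((n₁:ℝ)-1) * ((EF.filter (fun e => ∀ x ∈ e, x ∉ S)).card : ℝ))
      = ∑ e ∈ EF, (((n₂:ℝ)-1) * (if (∀ x ∈ e, x ∈ S) then (1:ℝ) else 0)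
          + ((n₁:ℝ)-1) * (if (∀ x ∈ e, x ∉ S) then (1:ℝ) else 0)) := by
    intro S
    rw [hcIn, hcOut, Finset.mul_sum, Finset.mul_sum, ← Finset.sum_add_distrib]
  have lhs_eq : (∑ S ∈ P,
      (((n₂:ℝ)-1) * ((EF.filter (fun e => ∀ x ∈ e, x ∈ S)).card : ℝ)
       + ((n₁:ℝ)-1) * ((EF.filter (fun e => ∀ x ∈ e, x ∉ S)).card : ℝ))
      * (if k ∈ S then (1:ℝ) else 0))
      = ∑ e ∈ EF,
        (((n₂:ℝ)-1) * (∑ S ∈ P, (if (∀ x ∈ e, x ∈ S) then (1:ℝ) else 0) * (if k ∈ S then (1:ℝ) else 0))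
         + ((n₁:ℝ)-1) * (∑ S ∈ P, (if (∀ x ∈ e, x ∉ S) then (1:ℝ) else 0) * (if k ∈ S then (1:ℝ) else 0))) := by
    rw [Finset.sum_congr rfl (fun S _ => by rw [hα S])]
    rw [swap (fun e S => ((n₂:ℝ)-1) * (if (∀ x ∈ e, x ∈ S) then (1:ℝ) else 0)
          + ((n₁:ℝ)-1) * (if (∀ x ∈ e, x ∉ S) then (1:ℝ) else 0))]
    apply Finset.sum_congr rfl
    intro e _
    rw [Finset.mul_sum, Finset.mul_sum, ← Finset.sum_add_distrib]
    exact Finset.sum_congr rfl (fun S _ => by ring)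
  have rhs_eq : (∑ S ∈ P,
      (((n₂:ℝ)-1) * ((EF.filter (fun e => ∀ x ∈ e, x ∈ S)).card : ℝ)
       + ((n₁:ℝ)-1) * ((EF.filter (fun e => ∀ x ∈ e, x ∉ S)).card : ℝ)))
      = ∑ e ∈ EF,
        (((n₂:ℝ)-1) * (∑ S ∈ P, (if (∀ x ∈ e, x ∈ S) then (1:ℝ) else 0))
         + ((n₁:ℝ)-1) * (∑ S ∈ P, (if (∀ x ∈ e, x ∉ S) then (1:ℝ) else 0))) := by
    rw [Finset.sum_congr rfl (fun S _ => by rw [hα S])]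
    rw [Finset.sum_comm]
    apply Finset.sum_congr rfl
    intro e _
    rw [Finset.mul_sum, Finset.mul_sum, ← Finset.sum_add_distrib]
  rw [lhs_eq, rhs_eq, Finset.sum_mul, Finset.sum_mul]
  exact Finset.sum_congr rfl (fun e he => per_edge e he)

lemma ind_sub (N : ℕ) (G : SimpleGraph (Fin N)) (S : Finset (Fin N)) :
    ((G.edgeFinset.filter (fun e => ∀ x ∈ e, x ∈ S)).card : ℝ)
      - ((G.edgeFinset.filter (fun e => ∀ x ∈ e, x ∉ S)).card : ℝ)
    = (∑ x : Fin N, ((G.edgeFinset.filter (fun e => x ∈ e)).card : ℝ)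
        * (if x ∈ S then (1:ℝ) else 0))
      - (G.edgeFinset.card : ℝ) := by
  have hL : (G.edgeFinset.card : ℝ) = ∑ _e ∈ G.edgeFinset, (1:ℝ) := by
    rw [Finset.sum_const]; simp
  have hdeg : ∀ x : Fin N, ((G.edgeFinset.filter (fun e => x ∈ e)).card : ℝ)
      * (if x ∈ S then (1:ℝ) else 0)
      = ∑ e ∈ G.edgeFinset, (if x ∈ e then (1:ℝ) else 0) * (if x ∈ S then (1:ℝ) else 0) := by
    intro x
    rw [← Finset.sum_boole, Finset.sum_mul]
  rw [← Finset.sum_boole, ← Finset.sum_boole, ← Finset.sum_sub_distrib]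
  rw [Finset.sum_congr rfl (fun x _ => hdeg x), Finset.sum_comm, hL, ← Finset.sum_sub_distrib]
  apply Finset.sum_congr rfl
  intro e he
  revert he
  induction e using Sym2.ind with
  | _ i j =>
  intro he
  have hij : i ≠ j := (SimpleGraph.mem_edgeFinset.mp he).ne
  have hsum : (∑ x : Fin N, (if x ∈ (s(i,j) : Sym2 (Fin N)) then (1:ℝ) else 0)
      * (if x ∈ S then (1:ℝ) else 0))
      = (if i ∈ S then (1:ℝ) else 0) + (if j ∈ S then (1:ℝ) else 0) := by
    have hsplit : ∀ x : Fin N, (if x ∈ (s(i,j) : Sym2 (Fin N)) then (1:ℝ) else 0)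
        * (if x ∈ S then (1:ℝ) else 0)
        = (if x = i then (if x ∈ S then (1:ℝ) else 0) else 0)
          + (if x = j then (if x ∈ S then (1:ℝ) else 0) else 0) := by
      intro x
      by_cases hxi : x = i <;> by_cases hxj : x = j <;>
        simp [Sym2.mem_iff, hxi, hxj] <;> simp_all
    rw [Finset.sum_congr rfl (fun x _ => hsplit x), Finset.sum_add_distrib,
      Finset.sum_ite_eq' Finset.univ i, Finset.sum_ite_eq' Finset.univ j]
    simp
  rw [hsum]
  have hin : (∀ x ∈ (s(i,j) : Sym2 (Fin N)), x ∈ S) ↔ (i ∈ S ∧ j ∈ S) := by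
    simp [Sym2.mem_iff]
  have hout : (∀ x ∈ (s(i,j) : Sym2 (Fin N)), x ∉ S) ↔ (i ∉ S ∧ j ∉ S) := by
    simp [Sym2.mem_iff]
  by_cases hi : i ∈ S <;> by_cases hj : j ∈ S <;>
    simp [hin, hout, hi, hj]


noncomputable section

/-- The weighted and difference union edge-count statistics
are uncorrelated under the permutation null distribution. -/
theorem cov_Rwu_Rdu_eq_zero
    -- number of distinct values and multiplicities
    (K : ℕ) (hK : 1 ≤ K) (m : Fin K → ℕ) (hm : ∀ u, 1 ≤ m u)
    -- total sample size
    (N : ℕ) (hN : N = ∑ u, m u) (hNge : 4 ≤ N)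
    -- value map with prescribed fiber sizes
    (v : Fin N → Fin K)
    (hv : ∀ u, (Finset.univ.filter (fun i => v i = u)).card = m u)
    -- similarity graph on the distinct values
    (C₀ : SimpleGraph (Fin K))
    -- sizes of sample 1 and sample 2
    (n₁ n₂ : ℕ) (hn₁ : 1 ≤ n₁) (hn₁' : n₁ ≤ N - 1) (hn₂ : n₂ = N - n₁)
    -- expectation under the permutation null distribution (uniform over
    -- all `n₁`-element subsets of `Fin N`)
    (E : (Finset (Fin N) → ℝ) → ℝ)
    (hE : ∀ f, E f =
      (∑ S ∈ Finset.powersetCard n₁ (Finset.univ : Finset (Fin N)), f S) / (N.choose n₁ : ℝ))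
    -- the union graph Ḡ on the observations
    (Gbar : SimpleGraph (Fin N))
    (hGbar : ∀ i j, Gbar.Adj i j ↔ i ≠ j ∧ (v i = v j ∨ C₀.Adj (v i) (v j)))
    -- the union statistics: edge-counts within sample 1 and within sample 2
    (R1u : Finset (Fin N) → ℝ)
    (hR1u : ∀ S, R1u S =
      ((Gbar.edgeFinset.filter (fun e => ∀ x ∈ e, x ∈ S)).card : ℝ))
    (R2u : Finset (Fin N) → ℝ)
    (hR2u : ∀ S, R2u S =
      ((Gbar.edgeFinset.filter (fun e => ∀ x ∈ e, x ∉ S)).card : ℝ))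
    -- covariance under the permutation null distribution
    (Cov : (Finset (Fin N) → ℝ) → (Finset (Fin N) → ℝ) → ℝ)
    (hCov : ∀ f g, Cov f g = E (fun S => (f S - E f) * (g S - E g)))
    -- the weighted edge-count statistic
    (Rwu : Finset (Fin N) → ℝ)
    (hRwu : ∀ S, Rwu S =
      (((n₂ : ℝ) - 1) * R1u S + ((n₁ : ℝ) - 1) * R2u S) / ((N : ℝ) - 2))
    -- the difference edge-count statistic
    (Rdu : Finset (Fin N) → ℝ)
    (hRdu : ∀ S, Rdu S = R1u S - R2u S)
    :
    Cov Rwu Rdu = 0 := by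
  set P := Finset.powersetCard n₁ (Finset.univ : Finset (Fin N)) with hP
  have hn1N : n₁ ≤ N := by omega
  have hn2pos : 1 ≤ n₂ := by omega
  have hNn : N = n₁ + n₂ := by omega
  have hCpos : 0 < N.choose n₁ := Nat.choose_pos hn1N
  have hCne : ((N.choose n₁ : ℕ) : ℝ) ≠ 0 := by positivity
  have hPcard : ((P.card : ℕ) : ℝ) = ((N.choose n₁ : ℕ) : ℝ) := by
    rw [hP, Finset.card_powersetCard, Finset.card_univ, Fintype.card_fin]
  have hWS : ∀ S : Finset (Fin N), Rwu S =
      (((n₂:ℝ)-1) * ((Gbar.edgeFinset.filter (fun e => ∀ x ∈ e, x ∈ S)).card : ℝ)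
       + ((n₁:ℝ)-1) * ((Gbar.edgeFinset.filter (fun e => ∀ x ∈ e, x ∉ S)).card : ℝ))
      / ((N:ℝ)-2) := by
    intro S
    rw [hRwu, hR1u, hR2u]
  -- Rwu is uncorrelated with each vertex indicator
  have claimB : ∀ k : Fin N,
      (∑ S ∈ P, Rwu S * (if k ∈ S then (1:ℝ) else 0)) * ((N.choose n₁ : ℕ) : ℝ)
        = (∑ S ∈ P, Rwu S) * (∑ S ∈ P, (if k ∈ S then (1:ℝ) else 0)) := by
    intro k
    have h1 : ∑ S ∈ P, Rwu S * (if k ∈ S then (1:ℝ) else 0)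
        = (∑ S ∈ P,
            (((n₂:ℝ)-1) * ((Gbar.edgeFinset.filter (fun e => ∀ x ∈ e, x ∈ S)).card : ℝ)
             + ((n₁:ℝ)-1) * ((Gbar.edgeFinset.filter (fun e => ∀ x ∈ e, x ∉ S)).card : ℝ))
            * (if k ∈ S then (1:ℝ) else 0)) / ((N:ℝ)-2) := by
      rw [Finset.sum_congr rfl (fun S (_ : S ∈ P) => by rw [hWS S, div_mul_eq_mul_div]),
        Finset.sum_div]
    have h2 : ∑ S ∈ P, Rwu S
        = (∑ S ∈ P,
            (((n₂:ℝ)-1) * ((Gbar.edgeFinset.filter (fun e => ∀ x ∈ e, x ∈ S)).card : ℝ)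
             + ((n₁:ℝ)-1) * ((Gbar.edgeFinset.filter (fun e => ∀ x ∈ e, x ∉ S)).card : ℝ)))
          / ((N:ℝ)-2) := by
      rw [Finset.sum_congr rfl (fun S (_ : S ∈ P) => hWS S), Finset.sum_div]
    rw [h1, h2, div_mul_eq_mul_div, div_mul_eq_mul_div]
    rw [cov_indicator N n₁ n₂ hn₁ hn2pos hNn Gbar k]
  -- Rdu is affine in the vertex indicators
  have claimA : ∀ S : Finset (Fin N), Rdu S =
      (∑ x : Fin N, ((Gbar.edgeFinset.filter (fun e => x ∈ e)).card : ℝ)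
        * (if x ∈ S then (1:ℝ) else 0))
      - (Gbar.edgeFinset.card : ℝ) := by
    intro S
    rw [hRdu, hR1u, hR2u]
    exact ind_sub N Gbar S
  -- the key product identity
  have key : (∑ S ∈ P, Rwu S * Rdu S) * ((N.choose n₁ : ℕ) : ℝ)
      = (∑ S ∈ P, Rwu S) * (∑ S ∈ P, Rdu S) := by
    have e1 : ∑ S ∈ P, Rwu S * Rdu S
        = (∑ x : Fin N, ((Gbar.edgeFinset.filter (fun e => x ∈ e)).card : ℝ)
            * (∑ S ∈ P, Rwu S * (if x ∈ S then (1:ℝ) else 0)))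
          - (Gbar.edgeFinset.card : ℝ) * (∑ S ∈ P, Rwu S) := by
      calc ∑ S ∈ P, Rwu S * Rdu S
          = ∑ S ∈ P, ((∑ x : Fin N, ((Gbar.edgeFinset.filter (fun e => x ∈ e)).card : ℝ)
              * (Rwu S * (if x ∈ S then (1:ℝ) else 0)))
              - (Gbar.edgeFinset.card : ℝ) * Rwu S) := by
            apply Finset.sum_congr rfl
            intro S _
            rw [claimA S, mul_sub, Finset.mul_sum]
            congr 1
            · exact Finset.sum_congr rfl fun x _ => by ring
            · ring
        _ = (∑ x : Fin N, ∑ S ∈ P, ((Gbar.edgeFinset.filter (fun e => x ∈ e)).card : ℝ)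
              * (Rwu S * (if x ∈ S then (1:ℝ) else 0)))
            - ∑ S ∈ P, (Gbar.edgeFinset.card : ℝ) * Rwu S := by
            rw [Finset.sum_sub_distrib, Finset.sum_comm]
        _ = (∑ x : Fin N, ((Gbar.edgeFinset.filter (fun e => x ∈ e)).card : ℝ)
              * (∑ S ∈ P, Rwu S * (if x ∈ S then (1:ℝ) else 0)))
            - (Gbar.edgeFinset.card : ℝ) * (∑ S ∈ P, Rwu S) := by
            rw [← Finset.mul_sum]
            congr 1
            exact Finset.sum_congr rfl fun x _ => (Finset.mul_sum _ _ _).symm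
    have e2 : ∑ S ∈ P, Rdu S
        = (∑ x : Fin N, ((Gbar.edgeFinset.filter (fun e => x ∈ e)).card : ℝ)
            * (∑ S ∈ P, (if x ∈ S then (1:ℝ) else 0)))
          - (Gbar.edgeFinset.card : ℝ) * ((N.choose n₁ : ℕ) : ℝ) := by
      calc ∑ S ∈ P, Rdu S
          = ∑ S ∈ P, ((∑ x : Fin N, ((Gbar.edgeFinset.filter (fun e => x ∈ e)).card : ℝ)
              * (if x ∈ S then (1:ℝ) else 0)) - (Gbar.edgeFinset.card : ℝ)) :=
            Finset.sum_congr rfl fun S _ => claimA S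
        _ = (∑ x : Fin N, ∑ S ∈ P, ((Gbar.edgeFinset.filter (fun e => x ∈ e)).card : ℝ)
              * (if x ∈ S then (1:ℝ) else 0))
            - ∑ S ∈ P, (Gbar.edgeFinset.card : ℝ) := by
            rw [Finset.sum_sub_distrib, Finset.sum_comm]
        _ = (∑ x : Fin N, ((Gbar.edgeFinset.filter (fun e => x ∈ e)).card : ℝ)
              * (∑ S ∈ P, (if x ∈ S then (1:ℝ) else 0)))
            - (Gbar.edgeFinset.card : ℝ) * ((N.choose n₁ : ℕ) : ℝ) := by
            rw [Finset.sum_const, nsmul_eq_mul, hPcard, mul_comm]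
            congr 1
            exact Finset.sum_congr rfl fun x _ => (Finset.mul_sum _ _ _).symm
    have hsum2 : (∑ x : Fin N, (((Gbar.edgeFinset.filter (fun e => x ∈ e)).card : ℝ)
          * (∑ S ∈ P, Rwu S * (if x ∈ S then (1:ℝ) else 0))) * ((N.choose n₁ : ℕ) : ℝ))
        = ∑ x : Fin N, ((Gbar.edgeFinset.filter (fun e => x ∈ e)).card : ℝ)
          * ((∑ S ∈ P, Rwu S) * (∑ S ∈ P, (if x ∈ S then (1:ℝ) else 0))) := by
      apply Finset.sum_congr rfl
      intro x _
      rw [mul_assoc, claimB x]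
    have hsum1 : (∑ x : Fin N, (((Gbar.edgeFinset.filter (fun e => x ∈ e)).card : ℝ)
          * (∑ S ∈ P, Rwu S * (if x ∈ S then (1:ℝ) else 0)))) * ((N.choose n₁ : ℕ) : ℝ)
        = ∑ x : Fin N, (((Gbar.edgeFinset.filter (fun e => x ∈ e)).card : ℝ)
          * (∑ S ∈ P, Rwu S * (if x ∈ S then (1:ℝ) else 0))) * ((N.choose n₁ : ℕ) : ℝ) :=
      Finset.sum_mul _ _ _
    have hsum3 : (∑ S ∈ P, Rwu S) * (∑ x : Fin N,
          ((Gbar.edgeFinset.filter (fun e => x ∈ e)).card : ℝ)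
          * (∑ S ∈ P, (if x ∈ S then (1:ℝ) else 0)))
        = ∑ x : Fin N, ((Gbar.edgeFinset.filter (fun e => x ∈ e)).card : ℝ)
          * ((∑ S ∈ P, Rwu S) * (∑ S ∈ P, (if x ∈ S then (1:ℝ) else 0))) := by
      rw [Finset.mul_sum]
      exact Finset.sum_congr rfl fun x _ => by ring
    rw [e1, e2]
    linear_combination hsum1 + hsum2 - hsum3
  -- conclude
  rw [hCov, hE]
  have hEW : E Rwu = (∑ S ∈ P, Rwu S) / ((N.choose n₁ : ℕ) : ℝ) := hE Rwu
  have hED : E Rdu = (∑ S ∈ P, Rdu S) / ((N.choose n₁ : ℕ) : ℝ) := hE Rdu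
  have hnum : ∑ S ∈ P, (Rwu S - E Rwu) * (Rdu S - E Rdu) = 0 := by
    calc ∑ S ∈ P, (Rwu S - E Rwu) * (Rdu S - E Rdu)
        = ∑ S ∈ P, (Rwu S * Rdu S - E Rwu * Rdu S - E Rdu * Rwu S + E Rwu * E Rdu) :=
          Finset.sum_congr rfl fun S _ => by ring
      _ = (∑ S ∈ P, Rwu S * Rdu S) - E Rwu * (∑ S ∈ P, Rdu S)
          - E Rdu * (∑ S ∈ P, Rwu S) + ((P.card : ℕ) : ℝ) * (E Rwu * E Rdu) := by
          rw [Finset.sum_add_distrib, Finset.sum_sub_distrib, Finset.sum_sub_distrib,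
            ← Finset.mul_sum, ← Finset.mul_sum, Finset.sum_const, nsmul_eq_mul]
      _ = 0 := by
          have h' : (∑ S ∈ P, Rwu S * Rdu S)
              = (∑ S ∈ P, Rwu S) * (∑ S ∈ P, Rdu S) / ((N.choose n₁ : ℕ) : ℝ) := by
            rw [eq_div_iff hCne]; exact key
          rw [hEW, hED, hPcard, h']
          field_simp
          try ring
  rw [hnum, zero_div]
end
end
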